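/- arXiv:1909.03678 — 4 statements merged into one kernel-verified Lean document; each statement's English description precedes it below -/
import Mathlib

section
/- Let ω be an A_1 weight on the unit circle with doubling constant M (i.e., ∫_{2I} ω ≤ M ∫_I ω for all arcs I), let 0 < p < ∞, and let N be a positive integer with M/2^{Np} < 1. Then there is a constant C such that for every arc I ⊆ ∂𝔻 with |I| < 1/2 and every a ∈ 𝔻 with a/|a| the center of I and 1−|a| = |I|, the function f(z) = (1−āz)^{−N} satisfies ‖f‖_{H^p(ω)}^p ≤ C·|I|^{−Np}·∫_I ω(ξ)|dξ|. -/
open MeasureTheory Set Filter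
open scoped ENNReal Real

noncomputable section

/-- The point of the unit circle with angle `θ`. -/
def bpt (θ : ℝ) : ℂ := Complex.exp (θ * Complex.I)

/-- The open unit disk in the complex plane. -/
def unitDisk : Set ℂ := Metric.ball 0 1

/-- Normalized (by `1/(2π)`) integral of an `ℝ≥0∞`-valued function over the unit circle,
parametrized by angle. -/
def circInt (g : ℝ → ℝ≥0∞) : ℝ≥0∞ :=
  (ENNReal.ofReal (2 * π))⁻¹ * ∫⁻ θ in Set.Ioc 0 (2 * π), g θ

/-- `ω(I) = ∫_I ω(ξ)|dξ|` for the arc `I` with initial angle `a` and angular length `ℓ`. -/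
def wInt (ω : ℝ → ℝ) (a ℓ : ℝ) : ℝ≥0∞ :=
  ∫⁻ θ in Set.Ioo a (a + ℓ), ENNReal.ofReal (ω θ)

/-- `ω` is an `A₁` weight on the unit circle: it is `2π`-periodic, nonnegative, measurable, and
`(1/|I|)∫_I ω ≤ C · essinf_I ω` for every arc `I` (here `|I| = ℓ/(2π)` is the normalized length,
and all integrals over arcs are written in the angle variable). -/
def IsA1 (ω : ℝ → ℝ) : Prop :=
  Function.Periodic ω (2 * π) ∧ Measurable ω ∧ (∀ θ, 0 ≤ ω θ) ∧
  ∃ C : ℝ, 0 < C ∧ ∀ a ℓ : ℝ, 0 < ℓ → ℓ ≤ 2 * π →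
    wInt ω a ℓ ≤ ENNReal.ofReal (C * ℓ) *
      essInf (fun θ => ENNReal.ofReal (ω θ)) (volume.restrict (Set.Ioo a (a + ℓ)))

/-- `f` belongs to the classical Hardy space `H¹` of the unit disk. -/
def MemH1 (f : ℂ → ℂ) : Prop :=
  DifferentiableOn ℂ f unitDisk ∧
  ∃ C : ℝ, ∀ r : ℝ, 0 ≤ r → r < 1 →
    circInt (fun θ => ENNReal.ofReal (‖f ((r : ℂ) * bpt θ)‖)) ≤ ENNReal.ofReal C

/-- `fb` is the (a.e. defined) boundary-value function of `f` (radial limits a.e.). -/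
def HasBoundary (f : ℂ → ℂ) (fb : ℝ → ℂ) : Prop :=
  Measurable fb ∧
  ∀ᵐ θ : ℝ, Filter.Tendsto (fun r : ℝ => f ((r : ℂ) * bpt θ))
    (nhdsWithin 1 (Set.Iio 1)) (nhds (fb θ))

/-- The `p`-th power of the norm of a boundary function `fb` in `L^p(ω)`:
`(1/2π)∫_{∂𝔻} |fb|^p ω`. -/
def lpNormP (p : ℝ) (ω : ℝ → ℝ) (fb : ℝ → ℂ) : ℝ≥0∞ :=
  circInt fun θ => ENNReal.ofReal (‖fb θ‖ ^ p * ω θ)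

/-- The norm of a boundary function `fb` in `L^p(ω)` (equivalently, the `H^p(ω)` norm). -/
def wLpNorm (p : ℝ) (ω : ℝ → ℝ) (fb : ℝ → ℂ) : ℝ≥0∞ := lpNormP p ω fb ^ (1 / p)

/-- `f`, with boundary values `fb`, belongs to the weighted Hardy space `H^p(ω)`. -/
def MemHp (p : ℝ) (ω : ℝ → ℝ) (f : ℂ → ℂ) (fb : ℝ → ℂ) : Prop :=
  MemH1 f ∧ HasBoundary f fb ∧ lpNormP p ω fb < ⊤

/-- The norm of `f` in `L^q(dμ)` over the unit disk. -/
def lqMuNorm (q : ℝ) (μ : Measure ℂ) (f : ℂ → ℂ) : ℝ≥0∞ :=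
  (∫⁻ z in unitDisk, ENNReal.ofReal (‖f z‖) ^ q ∂μ) ^ (1 / q)

/-- The Carleson square over the arc with initial angle `a` and angular length `ℓ`
(whose normalized length is `|I| = ℓ/(2π)`). -/
def carleson (a ℓ : ℝ) : Set ℂ :=
  {z | z ∈ unitDisk ∧ 1 - ℓ / (2 * π) ≤ ‖z‖ ∧
    ∃ θ ∈ Set.Ioo a (a + ℓ), z = (‖z‖ : ℂ) * bpt θ}

/-- The nontangential approach region `Γ(ξ) = {z ∈ 𝔻 : |ξ - z| < 2(1-|z|)}`. -/
def stolz (ξ : ℂ) : Set ℂ := {z ∈ unitDisk | ‖ξ - z‖ < 2 * (1 - ‖z‖)}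

/-- The set `T(z) = {ξ ∈ ∂𝔻 : z ∈ Γ(ξ)}`, as a subset of the circle in `ℂ`. -/
def Tset (z : ℂ) : Set ℂ := {ξ | ‖ξ‖ = 1 ∧ z ∈ stolz ξ}

/-- `ν(T(z))` for a Borel measure `ν` on the unit circle. -/
def Tmeas (ν : Measure ℂ) (z : ℂ) : ℝ≥0∞ := ν (Tset z)

/-- `ω(T(z)) = ∫_{T(z)} ω(ξ)|dξ|`, in the angle variable. -/
def TmeasW (ω : ℝ → ℝ) (z : ℂ) : ℝ≥0∞ :=
  ∫⁻ θ in {θ : ℝ | θ ∈ Set.Ioc 0 (2 * π) ∧ z ∈ stolz (bpt θ)}, ENNReal.ofReal (ω θ)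

/-- The generalized area operator `A_{μ,ν} f(ξ) = ∫_{Γ(ξ)} |f(z)| dμ(z)/ν(T(z))`. -/
def areaOp (μ : Measure ℂ) (ν : Measure ℂ) (f : ℂ → ℂ) (θ : ℝ) : ℝ≥0∞ :=
  ∫⁻ z in stolz (bpt θ), ENNReal.ofReal (‖f z‖) / Tmeas ν z ∂μ

/-- The measure `dμ_ν^ω(z) = (ω(T(z))/ν(T(z))) dμ(z)`. -/
def muNuOmega (μ : Measure ℂ) (ν : Measure ℂ) (ω : ℝ → ℝ) : Measure ℂ :=
  μ.withDensity fun z => TmeasW ω z / Tmeas ν z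

/-- The arc `I_z` (of angular width `1-|z|`, centered at `z/|z|`) is contained, modulo `2π`,
in the arc with initial angle `a` and angular length `ℓ`. -/
def IzSub (z : ℂ) (a ℓ : ℝ) : Prop :=
  ∃ k : ℤ, a ≤ Complex.arg z - (1 - ‖z‖) / 2 + 2 * π * k ∧
    Complex.arg z + (1 - ‖z‖) / 2 + 2 * π * k ≤ a + ℓ

/-- The weighted maximal function `M_ω g(z) = sup_{I ⊇ I_z} (1/ω(I))∫_I |g| ω`. -/
def maxFn (ω : ℝ → ℝ) (g : ℝ → ℂ) (z : ℂ) : ℝ≥0∞ :=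
  ⨆ (a : ℝ) (ℓ : ℝ) (_ : 0 < ℓ ∧ ℓ ≤ 2 * π ∧ IzSub z a ℓ),
    (∫⁻ θ in Set.Ioo a (a + ℓ), ENNReal.ofReal (‖g θ‖ * ω θ)) / wInt ω a ℓ

/-- `M_{ω,α}(μ)(z) = sup_{I ⊇ I_z} μ(S(I))/ω(I)^α`. -/
def maxCarl (ω : ℝ → ℝ) (α : ℝ) (μ : Measure ℂ) (z : ℂ) : ℝ≥0∞ :=
  ⨆ (a : ℝ) (ℓ : ℝ) (_ : 0 < ℓ ∧ ℓ ≤ 2 * π ∧ IzSub z a ℓ),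
    μ (carleson a ℓ) / wInt ω a ℓ ^ α

/-- `μ̃_ω(ξ) = (1/(2πω(ξ))) ∫_𝔻 (1-|z|²)/|ξ-z|² dμ(z)`. -/
def tildeMu (μ : Measure ℂ) (ω : ℝ → ℝ) (θ : ℝ) : ℝ≥0∞ :=
  (ENNReal.ofReal (2 * π * ω θ))⁻¹ *
    ∫⁻ z in unitDisk, ENNReal.ofReal ((1 - ‖z‖ ^ 2) / ‖bpt θ - z‖ ^ 2) ∂μ

/-- `μ̂_ω(ξ) = (1/ω(ξ)) ∫_{Γ(ξ)} dμ(z)/(1-|z|)`. -/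
def hatMu (μ : Measure ℂ) (ω : ℝ → ℝ) (θ : ℝ) : ℝ≥0∞ :=
  (ENNReal.ofReal (ω θ))⁻¹ *
    ∫⁻ z in stolz (bpt θ), ENNReal.ofReal ((1 - ‖z‖)⁻¹) ∂μ

/-! ### Auxiliary material for the proof of `test_function_norm_estimate` -/

section Aux

lemma lint_shift (F : ℝ → ℝ≥0∞) (hF : Measurable F) (u v s : ℝ) :
    ∫⁻ x in Set.Ioc (u + s) (v + s), F x = ∫⁻ x in Set.Ioc u v, F (x + s) := by
  have h := setLIntegral_map (μ := volume) (s := Set.Ioc (u + s) (v + s))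
    measurableSet_Ioc hF (measurable_add_const s)
  rw [map_add_right_eq_self volume s] at h
  rw [h]
  congr 1
  ext x
  simp

lemma lint_periodic (F : ℝ → ℝ≥0∞) (hF : Measurable F) {T : ℝ} (hT : 0 < T)
    (hper : Function.Periodic F T) (c : ℝ) :
    ∫⁻ x in Set.Ioc c (c + T), F x = ∫⁻ x in Set.Ioc 0 T, F x := by
  set k : ℤ := ⌊c / T⌋ with hk
  set c' : ℝ := c - k * T with hc'
  have hc'0 : 0 ≤ c' := by
    rw [hc']; simpa [hk] using Int.sub_floor_div_mul_nonneg c hT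
  have hc'T : c' ≤ T := by
    rw [hc']; linarith [Int.sub_floor_div_mul_lt c hT]
  have step1 : ∫⁻ x in Set.Ioc c (c + T), F x = ∫⁻ x in Set.Ioc c' (c' + T), F x := by
    have h1 : c = c' + (k : ℝ) * T := by rw [hc']; ring
    rw [h1]
    have h3 : c' + (k : ℝ) * T + T = (c' + T) + (k : ℝ) * T := by ring
    rw [h3, lint_shift F hF c' (c' + T) ((k : ℝ) * T)]
    exact lintegral_congr fun x => (hper.int_mul k) x
  rw [step1]
  have split1 : ∫⁻ x in Set.Ioc c' (c' + T), F x
      = (∫⁻ x in Set.Ioc c' T, F x) + ∫⁻ x in Set.Ioc T (c' + T), F x := by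
    rw [← lintegral_union measurableSet_Ioc (Set.Ioc_disjoint_Ioc_of_le le_rfl),
      Set.Ioc_union_Ioc_eq_Ioc hc'T (by linarith)]
  have split2 : ∫⁻ x in Set.Ioc 0 T, F x
      = (∫⁻ x in Set.Ioc 0 c', F x) + ∫⁻ x in Set.Ioc c' T, F x := by
    rw [← lintegral_union measurableSet_Ioc (Set.Ioc_disjoint_Ioc_of_le le_rfl),
      Set.Ioc_union_Ioc_eq_Ioc hc'0 hc'T]
  have piece : ∫⁻ x in Set.Ioc T (c' + T), F x = ∫⁻ x in Set.Ioc 0 c', F x := by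
    have h0 : (T : ℝ) = 0 + T := by ring
    rw [h0]
    have h1 : c' + (0 + T) = c' + T := by ring
    rw [h1, lint_shift F hF 0 c' T]
    exact lintegral_congr fun x => hper x
  rw [split1, split2, piece, add_comm]

lemma abs_one_sub_ge_t (r t : ℝ) (hr : 1/2 ≤ r) (ht : |t| ≤ π) :
    |t| / π ≤ ‖1 - (r : ℂ) * Complex.exp ((t : ℂ) * Complex.I)‖ := by
  have hπ : (0:ℝ) < π := Real.pi_pos
  have habs : ‖1 - (r : ℂ) * Complex.exp ((t : ℂ) * Complex.I)‖ ^ 2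
      = (1 - r * Real.cos t) ^ 2 + (r * Real.sin t) ^ 2 := by
    rw [Complex.sq_norm, Complex.normSq_apply]
    simp [Complex.exp_ofReal_mul_I_re, Complex.exp_ofReal_mul_I_im]
    ring
  have hcos := Real.cos_le_one_sub_mul_cos_sq ht
  have hsq : (|t| / π) ^ 2 ≤ (1 - r * Real.cos t) ^ 2 + (r * Real.sin t) ^ 2 := by
    have h1 : (1 - r * Real.cos t) ^ 2 + (r * Real.sin t) ^ 2
        = (1 - r) ^ 2 + 2 * r * (1 - Real.cos t) := by
      nlinarith [Real.sin_sq_add_cos_sq t]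
    rw [h1]
    have hc1 : 0 ≤ 1 - Real.cos t := by linarith [Real.cos_le_one t]
    have h3 : (1:ℝ) * (1 - Real.cos t) ≤ (2*r) * (1 - Real.cos t) :=
      mul_le_mul_of_nonneg_right (by linarith) hc1
    have hx : 2 / π ^ 2 * t ^ 2 = 2 * (t ^ 2 / π ^ 2) := by ring
    have hy : (0:ℝ) ≤ t ^ 2 / π ^ 2 := by positivity
    have h4 : (|t| / π) ^ 2 = t ^ 2 / π ^ 2 := by rw [div_pow, sq_abs]
    nlinarith [sq_nonneg (1 - r)]
  calc |t| / π = Real.sqrt ((|t| / π) ^ 2) := by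
        rw [Real.sqrt_sq (by positivity)]
    _ ≤ Real.sqrt (‖1 - (r : ℂ) * Complex.exp ((t : ℂ) * Complex.I)‖ ^ 2) := by
        apply Real.sqrt_le_sqrt; rw [habs]; exact hsq
    _ = _ := Real.sqrt_sq (norm_nonneg _)

lemma abs_one_sub_ge_delta (r : ℝ) (hr0 : 0 ≤ r) (t : ℝ) :
    1 - r ≤ ‖1 - (r : ℂ) * Complex.exp ((t : ℂ) * Complex.I)‖ := by
  have h := norm_sub_norm_le (1 : ℂ) ((r : ℂ) * Complex.exp ((t : ℂ) * Complex.I))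
  simp at h
  rw [abs_of_nonneg hr0] at h
  linarith

lemma conj_bpt (r c θ : ℝ) :
    (1:ℂ) - (starRingEnd ℂ) ((r:ℂ) * Complex.exp ((c:ℂ) * Complex.I)) *
        Complex.exp ((θ:ℂ) * Complex.I)
      = 1 - (r:ℂ) * Complex.exp (((θ - c : ℝ):ℂ) * Complex.I) := by
  rw [map_mul, Complex.conj_ofReal, ← Complex.exp_conj]
  rw [mul_assoc, ← Complex.exp_add]
  congr 2
  simp [Complex.conj_I]
  ring

/-- The window `(c - π, c + π)` around the center `c`. -/
def Warc (c : ℝ) : Set ℝ := Set.Ioo (c - π) (c + π)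

/-- The dyadic enlargement of half-width `2^k h` around `c`. -/
def Jarc (c h : ℝ) (k : ℕ) : Set ℝ := Set.Ioo (c - 2^k * h) (c + 2^k * h)

/-- Dyadic rings covering the window. -/
def Tring (c h : ℝ) : ℕ → Set ℝ
  | 0 => Warc c ∩ Jarc c h 0
  | (k+1) => (Warc c ∩ Jarc c h (k+1)) \ Jarc c h k

lemma chain_bound (ω : ℝ → ℝ) (M' : ℝ) (a ℓ c h : ℝ) (hℓ : 0 < ℓ)
    (hcdef : c = a + ℓ / 2) (hhdef : h = ℓ / 2) (hh0 : 0 < h)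
    (hM'M : ∀ a' ℓ' : ℝ, 0 < ℓ' → 2 * ℓ' ≤ 2 * π →
      wInt ω (a' - ℓ' / 2) (2 * ℓ') ≤ ENNReal.ofReal M' * wInt ω a' ℓ') :
    ∀ k : ℕ, 2^k * h ≤ π →
      wInt ω (c - 2^k * h) (2^(k+1) * h) ≤ ENNReal.ofReal M' ^ k * wInt ω a ℓ := by
  intro k
  induction k with
  | zero =>
    intro _
    have e1 : c - 2^0 * h = a := by rw [hcdef, hhdef]; ring
    have e2 : (2:ℝ)^(0+1) * h = ℓ := by rw [hhdef]; ring
    rw [e1, e2, pow_zero, one_mul]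
  | succ k ih =>
    intro hk1
    have h2k : (2:ℝ)^k * h ≤ 2^(k+1) * h := by
      have : (2:ℝ)^k ≤ 2^(k+1) := by
        apply pow_le_pow_right₀ (by norm_num) (by omega)
      nlinarith
    have hk0 : 2^k * h ≤ π := le_trans h2k hk1
    have hstep := hM'M (c - 2^k * h) (2^(k+1) * h) (by positivity) (by linarith)
    have e1 : c - 2^k*h - 2^(k+1)*h/2 = c - 2^(k+1)*h := by ring
    have e2 : 2*(2^(k+1)*h) = 2^(k+1+1)*h := by ring
    rw [e1, e2] at hstep
    calc wInt ω (c - 2^(k+1)*h) (2^(k+1+1)*h)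
        ≤ ENNReal.ofReal M' * wInt ω (c - 2^k*h) (2^(k+1)*h) := hstep
      _ ≤ ENNReal.ofReal M' * (ENNReal.ofReal M' ^ k * wInt ω a ℓ) :=
          mul_le_mul' le_rfl (ih hk0)
      _ = ENNReal.ofReal M' ^ (k+1) * wInt ω a ℓ := by ring

lemma mass_bound (ω : ℝ → ℝ) (M' : ℝ) (a ℓ c h : ℝ) (hℓ : 0 < ℓ)
    (hcdef : c = a + ℓ / 2) (hhdef : h = ℓ / 2) (hh0 : 0 < h)
    (hM'M : ∀ a' ℓ' : ℝ, 0 < ℓ' → 2 * ℓ' ≤ 2 * π →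
      wInt ω (a' - ℓ' / 2) (2 * ℓ') ≤ ENNReal.ofReal M' * wInt ω a' ℓ')
    (hchain : ∀ k : ℕ, 2^k * h ≤ π →
      wInt ω (c - 2^k * h) (2^(k+1) * h) ≤ ENNReal.ofReal M' ^ k * wInt ω a ℓ) :
    ∀ k : ℕ, (∫⁻ θ in Tring c h k, ENNReal.ofReal (ω θ))
      ≤ ENNReal.ofReal M' ^ k * wInt ω a ℓ := by
  have hπ : (0:ℝ) < π := Real.pi_pos
  have hwmono : ∀ {s t : Set ℝ}, s ⊆ t →
      (∫⁻ θ in s, ENNReal.ofReal (ω θ)) ≤ ∫⁻ θ in t, ENNReal.ofReal (ω θ) :=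
    fun hst => lintegral_mono' (Measure.restrict_mono hst le_rfl) le_rfl
  have hwint : ∀ x y : ℝ, wInt ω x y = ∫⁻ θ in Set.Ioo x (x + y), ENNReal.ofReal (ω θ) :=
    fun _ _ => rfl
  intro k
  cases k with
  | zero =>
    rw [pow_zero, one_mul]
    have hJ0 : Jarc c h 0 = Set.Ioo a (a + ℓ) := by
      rw [Jarc, show c - 2^0 * h = a by rw [hcdef, hhdef]; ring,
        show c + 2^0 * h = a + ℓ by rw [hcdef, hhdef]; ring]
    rw [Tring, hJ0]
    exact hwmono Set.inter_subset_right
  | succ k =>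
    rw [Tring]
    by_cases hk1 : 2^(k+1) * h ≤ π
    · have hsub : (Warc c ∩ Jarc c h (k+1)) \ Jarc c h k
          ⊆ Set.Ioo (c - 2^(k+1)*h) ((c - 2^(k+1)*h) + 2^(k+1+1)*h) := by
        rintro x ⟨⟨-, hx⟩, -⟩
        simp only [Jarc, Set.mem_Ioo] at hx ⊢
        have h2 : (2:ℝ)^(k+1+1) = 2 * 2^(k+1) := by ring
        exact ⟨hx.1, by rw [h2]; nlinarith [hx.2]⟩
      refine le_trans (hwmono hsub) ?_
      rw [← hwint]
      exact hchain (k+1) hk1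
    · by_cases hk0 : π ≤ 2^k * h
      · have hsub : (Warc c ∩ Jarc c h (k+1)) \ Jarc c h k ⊆ (∅ : Set ℝ) := by
          rintro x ⟨⟨hxW, -⟩, hxn⟩
          simp only [Warc, Set.mem_Ioo] at hxW
          refine hxn ?_
          simp only [Jarc, Set.mem_Ioo]
          constructor <;> nlinarith [hxW.1, hxW.2]
        refine le_trans (hwmono hsub) ?_
        simp
      · push_neg at hk1 hk0
        have h2 : (2:ℝ)^(k+1) = 2 * 2^k := by ring
        have hWsub : (Warc c ∩ Jarc c h (k+1)) \ Jarc c h k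
            ⊆ Set.Ioo (c - π) ((c - π) + 2*π) := by
          rintro x ⟨⟨hxW, -⟩, -⟩
          simp only [Warc, Set.mem_Ioo] at hxW ⊢
          exact ⟨hxW.1, by linarith [hxW.2]⟩
        have hbig := hM'M (c - π/2) π hπ (by linarith)
        rw [show c - π/2 - π/2 = c - π by ring] at hbig
        have hmid : wInt ω (c - π/2) π ≤ wInt ω (c - 2^k*h) (2^(k+1)*h) := by
          rw [hwint, hwint]
          apply hwmono
          apply Set.Ioo_subset_Ioo
          · nlinarith
          · nlinarith
        calc (∫⁻ θ in (Warc c ∩ Jarc c h (k+1)) \ Jarc c h k, ENNReal.ofReal (ω θ))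
            ≤ wInt ω (c - π) (2*π) := by rw [hwint]; exact hwmono hWsub
          _ ≤ ENNReal.ofReal M' * wInt ω (c - π/2) π := hbig
          _ ≤ ENNReal.ofReal M' * wInt ω (c - 2^k*h) (2^(k+1)*h) := mul_le_mul' le_rfl hmid
          _ ≤ ENNReal.ofReal M' * (ENNReal.ofReal M' ^ k * wInt ω a ℓ) :=
              mul_le_mul' le_rfl (hchain k hk0.le)
          _ = ENNReal.ofReal M' ^ (k+1) * wInt ω a ℓ := by ring

lemma cover_lemma (c h : ℝ) (hh0 : 0 < h) : Warc c ⊆ ⋃ k, Tring c h k := by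
  intro θ hθ
  classical
  have hθW : θ ∈ Set.Ioo (c - π) (c + π) := hθ
  have hex : ∃ k : ℕ, θ ∈ Jarc c h k := by
    obtain ⟨n, hn⟩ := pow_unbounded_of_one_lt (π / h) (by norm_num : (1:ℝ) < 2)
    refine ⟨n, ?_⟩
    simp only [Jarc, Set.mem_Ioo]
    have hπh : π < 2^n * h := by
      rw [div_lt_iff₀ hh0] at hn
      linarith
    simp only [Set.mem_Ioo] at hθW
    constructor <;> nlinarith [hθW.1, hθW.2]
  set k0 := Nat.find hex with hk0
  have hmem : θ ∈ Jarc c h k0 := Nat.find_spec hex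
  refine Set.mem_iUnion.mpr ⟨k0, ?_⟩
  cases hk : k0 with
  | zero => exact ⟨hθ, by rwa [hk] at hmem⟩
  | succ k' =>
    refine ⟨⟨hθ, by rwa [hk] at hmem⟩, ?_⟩
    intro hcon
    exact Nat.find_min hex (by omega : k' < k0) hcon

lemma point_bound (p : ℝ) (N : ℕ) (hp : 0 < p) (hN : 0 < N) (δ c h : ℝ)
    (hδ0 : 0 < δ) (hδ2 : δ < 1/2)
    (hhδ : h = π * δ) (k : ℕ) (θ : ℝ) (hθ : θ ∈ Tring c h k) :
    ‖(((1:ℂ) - ((1 - δ : ℝ):ℂ) *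
        Complex.exp (((θ - c : ℝ):ℂ) * Complex.I))⁻¹) ^ N‖ ^ p
      ≤ ((2:ℝ) ^ ((N:ℝ)*p) * δ ^ (-((N:ℝ)*p))) * ((2:ℝ) ^ (-((N:ℝ)*p))) ^ k := by
  have hπ : (0:ℝ) < π := Real.pi_pos
  have hNR : 0 < (N:ℝ) := by exact_mod_cast hN
  have hNp : 0 < (N:ℝ) * p := by positivity
  set e : ℝ := -((N:ℝ)*p) with hedef
  set A : ℝ := ‖1 - ((1 - δ : ℝ):ℂ) * Complex.exp (((θ - c : ℝ):ℂ) * Complex.I)‖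
    with hAdef
  have hA1 : δ ≤ A := by
    have := abs_one_sub_ge_delta (1 - δ) (by linarith) (θ - c)
    rw [hAdef]
    convert this using 2 <;> norm_num
  have hθW : θ ∈ Warc c := by
    cases k with
    | zero => exact hθ.1
    | succ k' => exact hθ.1.1
  have htle : |θ - c| ≤ π := by
    simp only [Warc, Set.mem_Ioo] at hθW
    rw [abs_le]; constructor <;> linarith [hθW.1, hθW.2]
  have hlow : 2^k * δ / 2 ≤ A := by
    cases k with
    | zero => norm_num; linarith
    | succ k' =>
      have hnotJ : θ ∉ Jarc c h k' := hθ.2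
      simp only [Jarc, Set.mem_Ioo, not_and_or, not_lt] at hnotJ
      have habs : 2^k' * h ≤ |θ - c| := by
        rcases hnotJ with h1 | h1
        · rw [abs_sub_comm]
          calc 2^k' * h ≤ c - θ := by linarith
            _ ≤ |c - θ| := le_abs_self _
        · calc 2^k' * h ≤ θ - c := by linarith
            _ ≤ |θ - c| := le_abs_self _
      have hkey := abs_one_sub_ge_t (1 - δ) (θ - c) (by linarith) htle
      have : 2^(k'+1) * δ / 2 ≤ |θ - c| / π := by
        rw [le_div_iff₀ hπ]
        have h2 : (2:ℝ)^(k'+1) = 2 * 2^k' := by ring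
        rw [h2]
        calc 2 * 2^k' * δ / 2 * π = 2^k' * (π * δ) := by ring
          _ = 2^k' * h := by rw [hhδ]
          _ ≤ |θ - c| := habs
      exact le_trans this hkey
  have hA0 : 0 < A := lt_of_lt_of_le hδ0 hA1
  have hbase0 : (0:ℝ) < 2^k * δ / 2 := by positivity
  have habsfb : ‖(((1:ℂ) - ((1 - δ : ℝ):ℂ) *
      Complex.exp (((θ - c : ℝ):ℂ) * Complex.I))⁻¹) ^ N‖ = (A⁻¹) ^ N := by
    rw [norm_pow, norm_inv]
  rw [habsfb]
  have h1 : (A⁻¹)^N = A ^ (-(N:ℝ)) := by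
    rw [Real.rpow_neg hA0.le, Real.rpow_natCast, inv_pow]
  rw [h1, ← Real.rpow_mul hA0.le]
  have h2 : -(N:ℝ) * p = e := by rw [hedef]; ring
  rw [h2]
  have h3 : A ^ e ≤ (2^k * δ / 2) ^ e :=
    Real.rpow_le_rpow_of_nonpos hbase0 hlow (by rw [hedef]; linarith)
  refine le_trans h3 (le_of_eq ?_)
  have h4 : (2:ℝ)^k * δ / 2 = (2:ℝ)^(k:ℝ) * δ * 2⁻¹ := by
    rw [Real.rpow_natCast]; ring
  rw [h4, Real.mul_rpow (by positivity) (by norm_num),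
    Real.mul_rpow (by positivity) (by positivity)]
  have h5 : ((2:ℝ)^(k:ℝ)) ^ e = ((2:ℝ) ^ e) ^ k := by
    rw [← Real.rpow_natCast ((2:ℝ)^e) k, ← Real.rpow_mul (by norm_num),
      ← Real.rpow_mul (by norm_num), mul_comm]
  have h6 : ((2:ℝ)⁻¹) ^ e = (2:ℝ) ^ ((N:ℝ)*p) := by
    rw [Real.inv_rpow (by norm_num : (0:ℝ) ≤ 2), ← Real.rpow_neg (by norm_num : (0:ℝ) ≤ 2),
      hedef, neg_neg]
  rw [h5, h6]
  ring

end Aux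

/-- Estimate (2.7): with `ω ∈ A₁` of doubling constant `M`, `0 < p < ∞` and `N` a positive
integer with `M/2^{Np} < 1`, the test function `f(z) = (1 - conj(a)·z)^{-N}`, where
`a/|a|` is the center of the arc `I` and `1-|a| = |I|`, satisfies
`‖f‖_{H^p(ω)}^p ≤ C·|I|^{-Np}·∫_I ω`. -/
theorem test_function_norm_estimate
    (ω : ℝ → ℝ) (M p : ℝ) (N : ℕ) (hω : IsA1 ω) (hp : 0 < p) (hN : 0 < N)
    (hM : ∀ a ℓ : ℝ, 0 < ℓ → 2 * ℓ ≤ 2 * π →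
      wInt ω (a - ℓ / 2) (2 * ℓ) ≤ ENNReal.ofReal M * wInt ω a ℓ)
    (hMN : M / 2 ^ ((N : ℝ) * p) < 1) :
    ∃ C : ℝ, 0 < C ∧ ∀ a ℓ : ℝ, 0 < ℓ → ℓ / (2 * π) < 1 / 2 →
      lpNormP p ω
          (fun θ => ((1 : ℂ) -
            (starRingEnd ℂ) (((1 - ℓ / (2 * π) : ℝ) : ℂ) * bpt (a + ℓ / 2)) * bpt θ)⁻¹ ^ N) ≤
        ENNReal.ofReal (C * (ℓ / (2 * π)) ^ (-((N : ℝ) * p))) * wInt ω a ℓ := by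
  obtain ⟨hωper, hωmeas, hωnn, -⟩ := hω
  have hπ : (0:ℝ) < π := Real.pi_pos
  have hNR : (0:ℝ) < (N:ℝ) := by exact_mod_cast hN
  have hNp : 0 < (N : ℝ) * p := by positivity
  have h2Np : (1:ℝ) < 2 ^ ((N : ℝ) * p) := by
    rw [show (1:ℝ) = 2 ^ (0:ℝ) by simp]
    exact (Real.rpow_lt_rpow_left_iff (by norm_num)).mpr hNp
  have h2Np0 : (0:ℝ) < 2 ^ ((N : ℝ) * p) := by positivity
  have hM'1 : (1:ℝ) ≤ max M 1 := le_max_right _ _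
  have hM'lt : max M 1 < 2 ^ ((N : ℝ) * p) := by
    rw [max_lt_iff]
    exact ⟨by rwa [div_lt_one h2Np0] at hMN, h2Np⟩
  set q : ℝ := max M 1 / 2 ^ ((N : ℝ) * p) with hqdef
  have hq0 : 0 < q := by
    rw [hqdef]
    exact div_pos (by linarith) h2Np0
  have hq1 : q < 1 := by rw [hqdef, div_lt_one h2Np0]; exact hM'lt
  have h1q : 0 < 1 - q := by linarith
  refine ⟨2 ^ ((N : ℝ) * p) * (1 - q)⁻¹, by positivity, fun a ℓ hℓ hδhalf => ?_⟩
  have hδ0 : 0 < ℓ / (2*π) := div_pos hℓ (by positivity)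
  have hh0 : (0:ℝ) < ℓ / 2 := by positivity
  have hδe0 : (0:ℝ) < (ℓ / (2*π)) ^ (-((N:ℝ)*p)) := Real.rpow_pos_of_pos hδ0 _
  have h2e0 : (0:ℝ) < (2:ℝ) ^ (-((N:ℝ)*p)) := Real.rpow_pos_of_pos (by norm_num) _
  have hM'M : ∀ a' ℓ' : ℝ, 0 < ℓ' → 2 * ℓ' ≤ 2 * π →
      wInt ω (a' - ℓ' / 2) (2 * ℓ') ≤ ENNReal.ofReal (max M 1) * wInt ω a' ℓ' :=
    fun a' ℓ' h1 h2 => le_trans (hM a' ℓ' h1 h2)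
      (mul_le_mul' (ENNReal.ofReal_le_ofReal (le_max_left M 1)) le_rfl)
  have hchain := chain_bound ω (max M 1) a ℓ (a + ℓ/2) (ℓ/2) hℓ rfl rfl hh0 hM'M
  have hmass := mass_bound ω (max M 1) a ℓ (a + ℓ/2) (ℓ/2) hℓ rfl rfl hh0 hM'M hchain
  -- rewrite the test function into centered form
  have hfun : (fun θ : ℝ => ((1 : ℂ) -
      (starRingEnd ℂ) (((1 - ℓ / (2 * π) : ℝ) : ℂ) * bpt (a + ℓ / 2)) * bpt θ)⁻¹ ^ N)
      = fun θ : ℝ => (((1:ℂ) - ((1 - ℓ / (2 * π) : ℝ) : ℂ) *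
          Complex.exp (((θ - (a + ℓ / 2) : ℝ) : ℂ) * Complex.I))⁻¹) ^ N := by
    funext θ
    simp only [bpt]
    rw [conj_bpt (1 - ℓ / (2 * π)) (a + ℓ / 2) θ]
  rw [hfun]
  set F : ℝ → ℝ≥0∞ := fun θ : ℝ => ENNReal.ofReal (‖(((1:ℂ) -
      ((1 - ℓ / (2 * π) : ℝ) : ℂ) *
      Complex.exp (((θ - (a + ℓ / 2) : ℝ) : ℂ) * Complex.I))⁻¹) ^ N‖ ^ p * ω θ) with hFdef
  have hFmeas : Measurable F := by
    rw [hFdef]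
    apply ENNReal.measurable_ofReal.comp
    fun_prop
  have hFper : Function.Periodic F (2 * π) := by
    intro θ
    have hexp : (((θ + 2*π - (a + ℓ / 2) : ℝ)) : ℂ) * Complex.I
        = ((θ - (a + ℓ / 2) : ℝ) : ℂ) * Complex.I + 2 * π * Complex.I := by
      push_cast
      ring
    rw [hFdef]
    simp only
    rw [hexp, Complex.exp_add, Complex.exp_two_pi_mul_I, mul_one, hωper θ]
  -- pointwise and ring-wise bounds
  have hterm : ∀ k : ℕ, (∫⁻ θ in Tring (a + ℓ/2) (ℓ/2) k, F θ)
      ≤ (ENNReal.ofReal ((2:ℝ) ^ ((N:ℝ)*p) * (ℓ/(2*π)) ^ (-((N:ℝ)*p))) * wInt ω a ℓ)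
        * (ENNReal.ofReal q) ^ k := by
    intro k
    have hpt : ∀ θ ∈ Tring (a + ℓ/2) (ℓ/2) k, F θ ≤
        (ENNReal.ofReal ((2:ℝ) ^ ((N:ℝ)*p) * (ℓ/(2*π)) ^ (-((N:ℝ)*p)))
          * (ENNReal.ofReal ((2:ℝ) ^ (-((N:ℝ)*p)))) ^ k) * ENNReal.ofReal (ω θ) := by
      intro θ hθ
      have hb := point_bound p N hp hN (ℓ/(2*π)) (a + ℓ/2) (ℓ/2) hδ0 hδhalf
        (by field_simp) k θ hθ
      rw [hFdef]
      simp only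
      calc ENNReal.ofReal (‖(((1:ℂ) - ((1 - ℓ / (2 * π) : ℝ) : ℂ) *
            Complex.exp (((θ - (a + ℓ / 2) : ℝ) : ℂ) * Complex.I))⁻¹) ^ N‖ ^ p * ω θ)
          ≤ ENNReal.ofReal ((((2:ℝ) ^ ((N:ℝ)*p) * (ℓ/(2*π)) ^ (-((N:ℝ)*p)))
              * ((2:ℝ) ^ (-((N:ℝ)*p))) ^ k) * ω θ) :=
            ENNReal.ofReal_le_ofReal (mul_le_mul_of_nonneg_right hb (hωnn θ))
        _ = (ENNReal.ofReal ((2:ℝ) ^ ((N:ℝ)*p) * (ℓ/(2*π)) ^ (-((N:ℝ)*p)))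
              * (ENNReal.ofReal ((2:ℝ) ^ (-((N:ℝ)*p)))) ^ k) * ENNReal.ofReal (ω θ) := by
            rw [ENNReal.ofReal_mul (by positivity), ENNReal.ofReal_mul (by positivity),
              ENNReal.ofReal_pow (by positivity)]
    calc (∫⁻ θ in Tring (a + ℓ/2) (ℓ/2) k, F θ)
        ≤ ∫⁻ θ in Tring (a + ℓ/2) (ℓ/2) k,
            (ENNReal.ofReal ((2:ℝ) ^ ((N:ℝ)*p) * (ℓ/(2*π)) ^ (-((N:ℝ)*p)))
              * (ENNReal.ofReal ((2:ℝ) ^ (-((N:ℝ)*p)))) ^ k) * ENNReal.ofReal (ω θ) :=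
          setLIntegral_mono (measurable_const.mul (ENNReal.measurable_ofReal.comp hωmeas)) hpt
      _ = (ENNReal.ofReal ((2:ℝ) ^ ((N:ℝ)*p) * (ℓ/(2*π)) ^ (-((N:ℝ)*p)))
              * (ENNReal.ofReal ((2:ℝ) ^ (-((N:ℝ)*p)))) ^ k)
            * ∫⁻ θ in Tring (a + ℓ/2) (ℓ/2) k, ENNReal.ofReal (ω θ) :=
          lintegral_const_mul' _ _
            (ENNReal.mul_ne_top ENNReal.ofReal_ne_top (ENNReal.pow_ne_top ENNReal.ofReal_ne_top))
      _ ≤ (ENNReal.ofReal ((2:ℝ) ^ ((N:ℝ)*p) * (ℓ/(2*π)) ^ (-((N:ℝ)*p)))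
              * (ENNReal.ofReal ((2:ℝ) ^ (-((N:ℝ)*p)))) ^ k)
            * (ENNReal.ofReal (max M 1) ^ k * wInt ω a ℓ) :=
          mul_le_mul' le_rfl (hmass k)
      _ = (ENNReal.ofReal ((2:ℝ) ^ ((N:ℝ)*p) * (ℓ/(2*π)) ^ (-((N:ℝ)*p))) * wInt ω a ℓ)
            * ((ENNReal.ofReal ((2:ℝ) ^ (-((N:ℝ)*p))) * ENNReal.ofReal (max M 1))) ^ k := by
          rw [mul_pow]; ring
      _ = (ENNReal.ofReal ((2:ℝ) ^ ((N:ℝ)*p) * (ℓ/(2*π)) ^ (-((N:ℝ)*p))) * wInt ω a ℓ)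
            * (ENNReal.ofReal q) ^ k := by
          rw [← ENNReal.ofReal_mul h2e0.le]
          congr 2
          rw [hqdef, Real.rpow_neg (by norm_num : (0:ℝ) ≤ 2), div_eq_mul_inv]
          ring
  -- the geometric series
  have hgeo : (1 - ENNReal.ofReal q)⁻¹ = ENNReal.ofReal ((1-q)⁻¹) := by
    rw [ENNReal.ofReal_inv_of_pos h1q, ENNReal.ofReal_sub 1 hq0.le, ENNReal.ofReal_one]
  have hIoc : ∫⁻ θ in Set.Ioc 0 (2*π), F θ
      = ∫⁻ θ in Set.Ioo ((a + ℓ/2) - π) ((a + ℓ/2) + π), F θ := by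
    rw [← lint_periodic F hFmeas (by positivity) hFper ((a + ℓ/2) - π)]
    rw [show (a + ℓ/2) - π + 2*π = (a + ℓ/2) + π by ring]
    exact (setLIntegral_congr Ioo_ae_eq_Ioc).symm
  have hsum : ∫⁻ θ in Set.Ioo ((a + ℓ/2) - π) ((a + ℓ/2) + π), F θ
      ≤ (ENNReal.ofReal ((2:ℝ) ^ ((N:ℝ)*p) * (ℓ/(2*π)) ^ (-((N:ℝ)*p))) * wInt ω a ℓ)
        * (1 - ENNReal.ofReal q)⁻¹ := by
    calc ∫⁻ θ in Set.Ioo ((a + ℓ/2) - π) ((a + ℓ/2) + π), F θ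
        ≤ ∫⁻ θ in ⋃ k, Tring (a + ℓ/2) (ℓ/2) k, F θ :=
          lintegral_mono' (Measure.restrict_mono (cover_lemma (a + ℓ/2) (ℓ/2) hh0) le_rfl) le_rfl
      _ ≤ ∑' k, ∫⁻ θ in Tring (a + ℓ/2) (ℓ/2) k, F θ := lintegral_iUnion_le _ _
      _ ≤ ∑' k, (ENNReal.ofReal ((2:ℝ) ^ ((N:ℝ)*p) * (ℓ/(2*π)) ^ (-((N:ℝ)*p))) * wInt ω a ℓ)
            * (ENNReal.ofReal q) ^ k := ENNReal.tsum_le_tsum hterm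
      _ = _ := by rw [ENNReal.tsum_mul_left, ENNReal.tsum_geometric]
  show (ENNReal.ofReal (2*π))⁻¹ * (∫⁻ θ in Set.Ioc 0 (2*π), F θ) ≤
    ENNReal.ofReal ((2 ^ ((N:ℝ)*p) * (1-q)⁻¹) * (ℓ/(2*π)) ^ (-((N:ℝ)*p))) * wInt ω a ℓ
  calc (ENNReal.ofReal (2*π))⁻¹ * (∫⁻ θ in Set.Ioc 0 (2*π), F θ)
      ≤ 1 * (∫⁻ θ in Set.Ioc 0 (2*π), F θ) := by
        apply mul_le_mul' _ le_rfl
        rw [ENNReal.inv_le_one]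
        exact ENNReal.one_le_ofReal.mpr (by nlinarith [Real.pi_gt_three])
    _ = ∫⁻ θ in Set.Ioo ((a + ℓ/2) - π) ((a + ℓ/2) + π), F θ := by rw [one_mul, hIoc]
    _ ≤ (ENNReal.ofReal ((2:ℝ) ^ ((N:ℝ)*p) * (ℓ/(2*π)) ^ (-((N:ℝ)*p))) * wInt ω a ℓ)
          * (1 - ENNReal.ofReal q)⁻¹ := hsum
    _ = (ENNReal.ofReal ((2:ℝ) ^ ((N:ℝ)*p) * (ℓ/(2*π)) ^ (-((N:ℝ)*p)))
          * ENNReal.ofReal ((1-q)⁻¹)) * wInt ω a ℓ := by rw [hgeo]; ring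
    _ = ENNReal.ofReal ((2 ^ ((N:ℝ)*p) * (1-q)⁻¹) * (ℓ/(2*π)) ^ (-((N:ℝ)*p))) * wInt ω a ℓ := by
        rw [← ENNReal.ofReal_mul (by positivity)]
        congr 2
        ring


end
end

section
/- Let ω be an A_1 weight on the unit circle, 0 < p < ∞, and let N be a sufficiently large positive integer (depending only on p and the doubling constant of ω, namely M/2^{Np+1} < 1). For a ∈ 𝔻 set f_a(z) = (1−|a|)^N/(1−āz)^{N+1/p}. Then there exist constants c, C > 0, independent of a, such that c·ω(I_a)/(1−|a|) ≤ ‖f_a‖_{H^p(ω)}^p ≤ C·ω(I_a)/(1−|a|), where I_a is the arc of length 1−|a| centered at a/|a|; equivalently, ∫_{∂𝔻} (1−|a|)^{Np}/|1−āξ|^{Np+1} ω(ξ)|dξ| ≍ ω(I_a)/|I_a| uniformly in a. -/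
open MeasureTheory Set Filter
open scoped ENNReal Real

noncomputable section

/- ## Auxiliary lemmas -/

lemma shift_Ioc (g : ℝ → ℝ≥0∞) (c u v : ℝ) :
    ∫⁻ x in Ioc u v, g (x + c) = ∫⁻ x in Ioc (u + c) (v + c), g x := by
  have h := (measurePreserving_add_right (volume : Measure ℝ) c).setLIntegral_comp_preimage_emb
    (measurableEmbedding_addRight c) g (Ioc (u + c) (v + c))
  have : (· + c) ⁻¹' Ioc (u + c) (v + c) = Ioc u v := by
    ext x; simp [Set.mem_Ioc]
  rwa [this] at h

lemma periodic_setLIntegral (g : ℝ → ℝ≥0∞) {T : ℝ} (hT : 0 < T)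
    (hper : Function.Periodic g T) (c : ℝ) :
    ∫⁻ x in Ioc c (c + T), g x = ∫⁻ x in Ioc 0 T, g x := by
  -- reduce to c ∈ [0, T)
  obtain ⟨c', hc0, hcT, k, rfl⟩ : ∃ c' : ℝ, 0 ≤ c' ∧ c' < T ∧ ∃ k : ℤ, c = c' + k * T := by
    refine ⟨c - ⌊c / T⌋ * T, ?_, ?_, ⌊c / T⌋, by ring⟩
    · exact Int.sub_floor_div_mul_nonneg c hT
    · exact Int.sub_floor_div_mul_lt c hT
  have hshift : ∫⁻ x in Ioc (c' + k * T) (c' + k * T + T), g x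
      = ∫⁻ x in Ioc c' (c' + T), g x := by
    have e : c' + k * T + T = c' + T + k * T := by ring
    rw [e, ← shift_Ioc]
    exact lintegral_congr fun x => (hper.int_mul k) x
  rw [hshift]
  -- now 0 ≤ c' < T
  have h1 : Ioc c' (c' + T) = Ioc c' T ∪ Ioc T (c' + T) :=
    (Set.Ioc_union_Ioc_eq_Ioc (by linarith) (by linarith)).symm
  have h2 : Ioc (0:ℝ) T = Ioc 0 c' ∪ Ioc c' T :=
    (Set.Ioc_union_Ioc_eq_Ioc (by linarith) (by linarith)).symm
  have h3 : ∫⁻ x in Ioc T (c' + T), g x = ∫⁻ x in Ioc 0 c', g x := by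
    have e : ∫⁻ x in Ioc 0 c', g (x + T) = ∫⁻ x in Ioc 0 c', g x :=
      lintegral_congr fun x => hper x
    rw [← e, shift_Ioc, zero_add, add_comm c' T]
  rw [h1, h2, lintegral_union measurableSet_Ioc (Set.Ioc_disjoint_Ioc_of_le le_rfl),
    lintegral_union measurableSet_Ioc (Set.Ioc_disjoint_Ioc_of_le le_rfl), h3, add_comm]

lemma le_of_sq_le_sq' {a b : ℝ} (h : a^2 ≤ b^2) (hb : 0 ≤ b) : a ≤ b := by nlinarith

lemma pi_sq_le_ten : π^2 ≤ 10 := by nlinarith [Real.pi_lt_d2, Real.pi_pos]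

lemma D_sq (r s : ℝ) :
    ‖1 - (r:ℂ) * Complex.exp (s * Complex.I)‖ ^ 2
      = (1 - r)^2 + 2*r*(1 - Real.cos s) := by
  rw [Complex.sq_norm, Complex.normSq_apply]
  simp only [Complex.sub_re, Complex.sub_im, Complex.mul_re, Complex.mul_im,
    Complex.one_re, Complex.one_im, Complex.ofReal_re, Complex.ofReal_im,
    Complex.exp_ofReal_mul_I_re, Complex.exp_ofReal_mul_I_im]
  linear_combination (r^2) * (Real.sin_sq_add_cos_sq s)

lemma D_upper {r : ℝ} (hr0 : 0 ≤ r) (hr1 : r ≤ 1) (s : ℝ) :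
    ‖1 - (r:ℂ) * Complex.exp (s * Complex.I)‖ ≤ (1 - r) + |s| := by
  apply le_of_sq_le_sq' _ (by have := abs_nonneg s; linarith)
  rw [D_sq]
  have h1 : 1 - s^2/2 ≤ Real.cos s := Real.one_sub_sq_div_two_le_cos
  have h2 : Real.cos s ≤ 1 := Real.cos_le_one s
  have := abs_nonneg s
  have := sq_abs s
  nlinarith

lemma D_lower {r : ℝ} (hr0 : 0 ≤ r) (hr1 : r < 1) {s : ℝ} (hs : |s| ≤ π) :
    ((1 - r) + |s|) / 9 ≤ ‖1 - (r:ℂ) * Complex.exp (s * Complex.I)‖ := by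
  have habs : 0 ≤ ‖1 - (r:ℂ) * Complex.exp (s * Complex.I)‖ := by positivity
  rcases le_or_gt (1/2 : ℝ) r with hhalf | hhalf
  · apply le_of_sq_le_sq' _ habs
    rw [D_sq]
    have hcos : Real.cos s ≤ 1 - 2/π^2 * s^2 := Real.cos_le_one_sub_mul_cos_sq hs
    have hπ10 := pi_sq_le_ten
    have hπ0 : (0:ℝ) < π^2 := by positivity
    have h15 : (1:ℝ)/5 ≤ 2/π^2 := by
      rw [div_le_div_iff₀ (by norm_num) hπ0]; linarith
    have hs2 := sq_abs s
    have ht : 0 ≤ |s| := abs_nonneg s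
    have hc0 : 0 ≤ 1 - Real.cos s := by nlinarith [Real.cos_le_one s]
    have hu : (1/5) * s^2 ≤ 2*r*(1 - Real.cos s) := by
      have e1 : (1/5) * s^2 ≤ 2/π^2 * s^2 := mul_le_mul_of_nonneg_right h15 (sq_nonneg s)
      have e3 : 1 - Real.cos s ≤ 2*r*(1 - Real.cos s) := by
        nlinarith [mul_nonneg (by linarith : (0:ℝ) ≤ 2*r-1) hc0]
      linarith
    nlinarith [sq_nonneg ((1-r) - |s|), sq_nonneg ((1-r) + |s|)]
  · have h1 : ‖(r:ℂ) * Complex.exp (s * Complex.I)‖ = r := by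
      simp [abs_of_nonneg hr0, Complex.norm_exp_ofReal_mul_I]
    have hlow : 1 - r ≤ ‖1 - (r:ℂ) * Complex.exp (s * Complex.I)‖ := by
      have h2 := norm_sub_norm_le (1:ℂ) ((r:ℂ) * Complex.exp (s * Complex.I))
      simp only [norm_one] at h2
      rw [h1] at h2; simpa using h2
    have : ((1 - r) + |s|) / 9 ≤ 1 - r := by
      have := Real.pi_lt_d2
      linarith
    linarith

lemma two_rpow_sq (q : ℝ) : (4:ℝ)^q = ((2:ℝ)^q)^2 := by
  have h4 : (4:ℝ) = (2:ℝ)^(2:ℝ) := by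
    rw [show ((2:ℝ):ℝ) = ((2:ℕ):ℝ) by norm_num, Real.rpow_natCast]; norm_num
  rw [h4, ← Real.rpow_mul (by norm_num), ← Real.rpow_natCast ((2:ℝ)^q) 2,
    ← Real.rpow_mul (by norm_num)]
  ring_nf

lemma coeff_calc {δ q M' : ℝ} (hδ : 0 < δ) (k : ℕ) :
    δ ^ (q-1) / ((2^k * (δ/2)) ^ q) * M' ^ (k+1) = 4 ^ q * (M'/2^q) ^ (k+1) / δ := by
  have h2q : (0:ℝ) < 2 ^ q := Real.rpow_pos_of_pos two_pos q
  have h2k : (0:ℝ) < ((2:ℝ)^q)^k := by positivity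
  have hδq : (0:ℝ) < δ ^ q := Real.rpow_pos_of_pos hδ q
  have e0 : ((2:ℝ)^k * (δ/2)) ^ q = ((2:ℝ)^q)^k * δ^q / 2^q := by
    rw [Real.mul_rpow (by positivity) (by positivity), Real.div_rpow hδ.le (by norm_num),
      ← Real.rpow_natCast (2:ℝ) k, ← Real.rpow_mul (by norm_num),
      ← Real.rpow_natCast ((2:ℝ)^q) k, ← Real.rpow_mul (by norm_num)]
    ring_nf
  have e1 : δ ^ (q-1) = δ^q / δ := by rw [Real.rpow_sub hδ, Real.rpow_one]
  rw [e0, e1, two_rpow_sq, div_pow, pow_succ]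
  field_simp
  ring

lemma ofReal_mul_le_mul {x y w : ℝ} (h : x ≤ y) (hx : 0 ≤ x) :
    ENNReal.ofReal (x * w) ≤ ENNReal.ofReal (y * w) := by
  rcases le_or_gt 0 w with hw | hw
  · exact ENNReal.ofReal_le_ofReal (mul_le_mul_of_nonneg_right h hw)
  · rw [ENNReal.ofReal_of_nonpos (mul_nonpos_of_nonneg_of_nonpos hx hw.le)]
    exact zero_le

lemma dyadic (ω : ℝ → ℝ) (M' : ℝ) (hM'1 : 1 ≤ M')
    (hM : ∀ a ℓ : ℝ, 0 < ℓ → 2 * ℓ ≤ 2 * π →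
      wInt ω (a - ℓ / 2) (2 * ℓ) ≤ ENNReal.ofReal M' * wInt ω a ℓ)
    (φ δ q : ℝ) (hδ : 0 < δ) (hδ1 : δ ≤ 1) (hq : 1 < q) (hMq : M' < 2^q) :
    ∫⁻ θ in Set.Ioo (φ - π) (φ + π),
        ENNReal.ofReal (δ^(q-1) / (δ + |θ - φ|)^q * ω θ)
      ≤ ENNReal.ofReal (1 + 4^q/(1 - M'/2^q) + M' * 2^q) *
        (wInt ω (φ - δ/2) δ / ENNReal.ofReal δ) := by
  have hM'0 : (0:ℝ) < M' := by linarith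
  have h2q : (0:ℝ) < 2 ^ q := Real.rpow_pos_of_pos two_pos q
  set ρ : ℝ := M' / 2^q with hρdef
  have hρ0 : 0 ≤ ρ := by positivity
  have hρ1 : ρ < 1 := (div_lt_one h2q).2 hMq
  set F : ℝ → ℝ≥0∞ := fun θ => ENNReal.ofReal (δ^(q-1) / (δ + |θ - φ|)^q * ω θ) with hF
  set h : ℕ → ℝ := fun k => 2^k * (δ/2) with hh
  have hhpos : ∀ k, 0 < h k := fun k => by positivity
  have hhmono : ∀ k, h k < h (k+1) := fun k => by
    simp only [hh, pow_succ]; nlinarith [pow_pos (two_pos (α := ℝ)) k]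
  set S : ℕ → Set ℝ := fun k => Ioo (φ - h k) (φ + h k) with hS
  set Wk : ℕ → ℝ≥0∞ := fun k => ∫⁻ θ in S k, ENNReal.ofReal (ω θ) with hWk
  have eW : ∀ k, wInt ω (φ - h k) (2 * h k) = Wk k := by
    intro k
    rw [wInt, show φ - h k + 2 * h k = φ + h k by ring]
  have eW0 : wInt ω (φ - δ/2) δ = Wk 0 := by
    show _ = ∫⁻ θ in S 0, ENNReal.ofReal (ω θ)
    rw [wInt]
    simp only [hS, hh, pow_zero, one_mul]
    rw [show φ - δ/2 + δ = φ + δ/2 by ring]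
  set Z : ℝ≥0∞ := wInt ω (φ - δ/2) δ / ENNReal.ofReal δ with hZ
  -- doubling step
  have hdouble : ∀ k, 2 * h k ≤ π → Wk (k+1) ≤ ENNReal.ofReal M' * Wk k := by
    intro k hk
    have := hM (φ - h k) (2 * h k) (by positivity) (by linarith)
    rw [show φ - h k - 2 * h k / 2 = φ - h (k+1) by
        simp only [hh, pow_succ]; ring,
      show 2 * (2 * h k) = 2 * h (k+1) by simp only [hh, pow_succ]; ring,
      eW, eW] at this
    exact this
  -- the index m
  have hex : ∃ k : ℕ, π/2 < h k := by
    obtain ⟨n, hn⟩ := pow_unbounded_of_one_lt (π/δ) (by norm_num : (1:ℝ) < 2)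
    exact ⟨n, by rw [hh]; rw [div_lt_iff₀ hδ] at hn; nlinarith⟩
  set m := Nat.find hex with hm
  have hmspec : π/2 < h m := Nat.find_spec hex
  have hmmin : ∀ k, k < m → h k ≤ π/2 := fun k hk => le_of_not_gt (Nat.find_min hex hk)
  -- chain
  have chain : ∀ k, k ≤ m → Wk k ≤ ENNReal.ofReal (M'^k) * Wk 0 := by
    intro k
    induction k with
    | zero => intro _; simp
    | succ n ih =>
      intro hnm
      have h1 : Wk (n+1) ≤ ENNReal.ofReal M' * Wk n :=
        hdouble n (by have := hmmin n (by omega); linarith)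
      calc Wk (n+1) ≤ ENNReal.ofReal M' * Wk n := h1
        _ ≤ ENNReal.ofReal M' * (ENNReal.ofReal (M'^n) * Wk 0) := by
            exact mul_le_mul_right (ih (by omega)) _
        _ = ENNReal.ofReal (M'^(n+1)) * Wk 0 := by
            rw [← mul_assoc, ← ENNReal.ofReal_mul hM'0.le, pow_succ, mul_comm (M'^n) M']
  have hq0 : (0:ℝ) ≤ q := by linarith
  -- pointwise bound away from φ
  have hannulus : ∀ (t θ : ℝ), 0 < t → t ≤ |θ - φ| →
      F θ ≤ ENNReal.ofReal (δ^(q-1) / t^q * ω θ) := by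
    intro t θ ht hts
    apply ofReal_mul_le_mul _ (by positivity)
    have h1 : t^q ≤ (δ + |θ - φ|)^q :=
      Real.rpow_le_rpow ht.le (by nlinarith [abs_nonneg (θ - φ)]) hq0
    gcongr
  have hconst_mul : ∀ (c : ℝ) (s : Set ℝ), 0 ≤ c →
      (∫⁻ θ in s, ENNReal.ofReal (c * ω θ)) = ENNReal.ofReal c * ∫⁻ θ in s, ENNReal.ofReal (ω θ) := by
    intro c s hc
    simp only [ENNReal.ofReal_mul hc]
    exact lintegral_const_mul' _ _ ENNReal.ofReal_ne_top
  have KEY : ∀ k, k ≤ m → (∫⁻ θ in S k, F θ) ≤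
      ENNReal.ofReal (1 + ∑ j ∈ Finset.range k, 4^q * ρ^(j+1)) * Z := by
    intro k
    induction k with
    | zero =>
      intro _
      have hpt : ∀ θ : ℝ, F θ ≤ ENNReal.ofReal (δ⁻¹ * ω θ) := by
        intro θ
        apply ofReal_mul_le_mul _ (by positivity)
        have h1 : δ^q ≤ (δ + |θ - φ|)^q :=
          Real.rpow_le_rpow hδ.le (by nlinarith [abs_nonneg (θ - φ)]) hq0
        have h3 : δ^(q-1) / δ^q = δ⁻¹ := by
          rw [Real.rpow_sub hδ, Real.rpow_one]
          have := Real.rpow_pos_of_pos hδ q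
          field_simp
        calc δ^(q-1) / (δ + |θ - φ|)^q ≤ δ^(q-1) / δ^q := by
              gcongr
          _ = δ⁻¹ := h3
      calc (∫⁻ θ in S 0, F θ) ≤ ∫⁻ θ in S 0, ENNReal.ofReal (δ⁻¹ * ω θ) :=
            lintegral_mono fun θ => hpt θ
        _ = ENNReal.ofReal δ⁻¹ * Wk 0 := hconst_mul δ⁻¹ (S 0) (by positivity)
        _ = ENNReal.ofReal 1 * Z := by
            rw [ENNReal.ofReal_inv_of_pos hδ, hZ, eW0, ENNReal.ofReal_one, one_mul,
              div_eq_mul_inv, mul_comm]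
        _ ≤ _ := by norm_num
    | succ n ih =>
      intro hnm
      have hsub : S n ⊆ S (n+1) :=
        Ioo_subset_Ioo (by linarith [hhmono n]) (by linarith [hhmono n])
      have hcn : (0:ℝ) ≤ δ^(q-1) / (h n)^q := by positivity
      have hdiffpt : ∀ θ ∈ S (n+1) \ S n, F θ ≤ ENNReal.ofReal (δ^(q-1) / (h n)^q * ω θ) := by
        intro θ hθ
        apply hannulus (h n) θ (hhpos n)
        by_contra hcon
        push_neg at hcon
        have habs := abs_lt.1 hcon
        exact hθ.2 ⟨by linarith [habs.1], by linarith [habs.2]⟩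
      have hdiff : ∫⁻ θ in S (n+1) \ S n, F θ ≤ ENNReal.ofReal (4^q * ρ^(n+1)) * Z := by
        calc ∫⁻ θ in S (n+1) \ S n, F θ
            ≤ ∫⁻ θ in S (n+1) \ S n, ENNReal.ofReal (δ^(q-1) / (h n)^q * ω θ) :=
              setLIntegral_mono' (measurableSet_Ioo.diff measurableSet_Ioo) hdiffpt
          _ = ENNReal.ofReal (δ^(q-1) / (h n)^q) *
              ∫⁻ θ in S (n+1) \ S n, ENNReal.ofReal (ω θ) := hconst_mul _ _ hcn
          _ ≤ ENNReal.ofReal (δ^(q-1) / (h n)^q) * (ENNReal.ofReal (M'^(n+1)) * Wk 0) := by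
              apply mul_le_mul_right
              exact le_trans (lintegral_mono_set Set.diff_subset) (chain (n+1) hnm)
          _ = ENNReal.ofReal (4^q * ρ^(n+1) / δ) * Wk 0 := by
              rw [← mul_assoc, ← ENNReal.ofReal_mul hcn]
              congr 2
              simp only [hh, hρdef]
              exact coeff_calc hδ n
          _ = ENNReal.ofReal (4^q * ρ^(n+1)) * Z := by
              rw [ENNReal.ofReal_div_of_pos hδ, hZ, eW0, div_eq_mul_inv, div_eq_mul_inv]
              ring
      have hterm : (0:ℝ) ≤ 4^q * ρ^(n+1) := by positivity
      have hsum0 : (0:ℝ) ≤ 1 + ∑ j ∈ Finset.range n, 4^q * ρ^(j+1) := by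
        have : (0:ℝ) ≤ ∑ j ∈ Finset.range n, 4^q * ρ^(j+1) :=
          Finset.sum_nonneg fun j _ => by positivity
        linarith
      calc (∫⁻ θ in S (n+1), F θ)
          = ∫⁻ θ in S n ∪ (S (n+1) \ S n), F θ := by rw [Set.union_diff_cancel hsub]
        _ ≤ (∫⁻ θ in S n, F θ) + ∫⁻ θ in S (n+1) \ S n, F θ := lintegral_union_le _ _ _
        _ ≤ ENNReal.ofReal (1 + ∑ j ∈ Finset.range n, 4^q * ρ^(j+1)) * Z +
            ENNReal.ofReal (4^q * ρ^(n+1)) * Z := add_le_add (ih (by omega)) hdiff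
        _ = ENNReal.ofReal (1 + ∑ j ∈ Finset.range (n+1), 4^q * ρ^(j+1)) * Z := by
            rw [Finset.sum_range_succ, ← add_mul, ← ENNReal.ofReal_add hsum0 hterm, add_assoc]
  -- the rest of the circle
  have hrest : ∫⁻ θ in Ioo (φ - π) (φ + π) \ S m, F θ ≤ ENNReal.ofReal (M' * 2^q) * Z := by
    have hcm : (0:ℝ) ≤ δ^(q-1) / (h m)^q := by positivity
    have hrpt : ∀ θ ∈ Ioo (φ - π) (φ + π) \ S m,
        F θ ≤ ENNReal.ofReal (δ^(q-1) / (h m)^q * ω θ) := by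
      intro θ hθ
      apply hannulus (h m) θ (hhpos m)
      by_contra hcon
      push_neg at hcon
      have habs := abs_lt.1 hcon
      exact hθ.2 ⟨by linarith [habs.1], by linarith [habs.2]⟩
    have hWπ : (∫⁻ θ in Ioo (φ - π) (φ + π), ENNReal.ofReal (ω θ)) ≤
        ENNReal.ofReal M' * Wk m := by
      have h1 := hM (φ - π/2) π Real.pi_pos (by linarith)
      rw [show φ - π/2 - π/2 = φ - π by ring] at h1
      have h2 : (∫⁻ θ in Ioo (φ - π) (φ + π), ENNReal.ofReal (ω θ)) = wInt ω (φ - π) (2*π) := by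
        rw [wInt, show φ - π + 2*π = φ + π by ring]
      have h3 : wInt ω (φ - π/2) π ≤ Wk m := by
        rw [wInt, hWk]
        apply lintegral_mono_set
        apply Ioo_subset_Ioo <;> [linarith [hmspec]; linarith [hmspec]]
      rw [h2]
      exact le_trans h1 (mul_le_mul_right h3 _)
    have hratio : 4^q * ρ^(m+1) ≤ M' * 2^q := by
      have hid : 4^q * ρ^(m+1) = M' * 2^q * ρ^m := by
        rw [two_rpow_sq, pow_succ, hρdef]
        field_simp
        linear_combination (M' * M'^m * ((2:ℝ)^q)⁻¹^m) * mul_inv_cancel₀ h2q.ne'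
      rw [hid]
      have : ρ^m ≤ 1 := pow_le_one₀ hρ0 hρ1.le
      nlinarith [mul_pos hM'0 h2q]
    calc ∫⁻ θ in Ioo (φ - π) (φ + π) \ S m, F θ
        ≤ ∫⁻ θ in Ioo (φ - π) (φ + π) \ S m, ENNReal.ofReal (δ^(q-1) / (h m)^q * ω θ) :=
          setLIntegral_mono' (measurableSet_Ioo.diff measurableSet_Ioo) hrpt
      _ = ENNReal.ofReal (δ^(q-1) / (h m)^q) *
          ∫⁻ θ in Ioo (φ - π) (φ + π) \ S m, ENNReal.ofReal (ω θ) := hconst_mul _ _ hcm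
      _ ≤ ENNReal.ofReal (δ^(q-1) / (h m)^q) *
          (ENNReal.ofReal M' * (ENNReal.ofReal (M'^m) * Wk 0)) := by
          apply mul_le_mul_right
          calc ∫⁻ θ in Ioo (φ - π) (φ + π) \ S m, ENNReal.ofReal (ω θ)
              ≤ ∫⁻ θ in Ioo (φ - π) (φ + π), ENNReal.ofReal (ω θ) :=
                lintegral_mono_set Set.diff_subset
            _ ≤ ENNReal.ofReal M' * Wk m := hWπ
            _ ≤ ENNReal.ofReal M' * (ENNReal.ofReal (M'^m) * Wk 0) :=
                mul_le_mul_right (chain m le_rfl) _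
      _ = ENNReal.ofReal (4^q * ρ^(m+1) / δ) * Wk 0 := by
          rw [show ENNReal.ofReal (δ^(q-1) / (h m)^q) *
              (ENNReal.ofReal M' * (ENNReal.ofReal (M'^m) * Wk 0))
              = (ENNReal.ofReal (δ^(q-1) / (h m)^q) * ENNReal.ofReal M' *
                ENNReal.ofReal (M'^m)) * Wk 0 by ring,
            ← ENNReal.ofReal_mul hcm, ← ENNReal.ofReal_mul (by positivity)]
          congr 2
          have hcc := coeff_calc (q := q) (M' := M') hδ m
          simp only [hh, hρdef]
          rw [← hcc, pow_succ]
          ring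
      _ ≤ ENNReal.ofReal (M' * 2^q / δ) * Wk 0 := by
          apply mul_le_mul_left
          apply ENNReal.ofReal_le_ofReal
          gcongr
      _ = ENNReal.ofReal (M' * 2^q) * Z := by
          rw [ENNReal.ofReal_div_of_pos hδ, hZ, eW0, div_eq_mul_inv, div_eq_mul_inv]
          ring
  -- final assembly
  have hρne : ρ ≠ 1 := by linarith
  have h1ρ : (0:ℝ) < 1 - ρ := by linarith
  have h4q : (0:ℝ) < 4^q := Real.rpow_pos_of_pos (by norm_num) q
  have hB : (1 + ∑ j ∈ Finset.range m, 4^q * ρ^(j+1)) + M' * 2^q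
      ≤ 1 + 4^q/(1 - ρ) + M' * 2^q := by
    have hsum : ∑ j ∈ Finset.range m, ρ^j ≤ 1/(1-ρ) := by
      rw [geom_sum_eq hρne]
      rw [show (ρ^m - 1)/(ρ - 1) = (1 - ρ^m)/(1-ρ) by rw [← neg_div_neg_eq]; ring_nf]
      have hnum : 1 - ρ^m ≤ 1 := by nlinarith [pow_nonneg hρ0 m]
      gcongr
    have hsum2 : ∑ j ∈ Finset.range m, 4^q * ρ^(j+1) ≤ 4^q/(1-ρ) := by
      have e : ∀ j ∈ Finset.range m, 4^q * ρ^(j+1) = (4^q * ρ) * ρ^j := fun j _ => by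
        rw [pow_succ]; ring
      rw [Finset.sum_congr rfl e, ← Finset.mul_sum]
      calc (4^q * ρ) * ∑ j ∈ Finset.range m, ρ^j ≤ (4^q * ρ) * (1/(1-ρ)) :=
            mul_le_mul_of_nonneg_left hsum (by positivity)
        _ ≤ 4^q/(1-ρ) := by
            rw [mul_one_div]
            gcongr
            nlinarith
    linarith
  calc ∫⁻ θ in Ioo (φ - π) (φ + π), F θ
      ≤ ∫⁻ θ in S m ∪ (Ioo (φ - π) (φ + π) \ S m), F θ := by
        apply lintegral_mono_set
        intro x hx
        by_cases hxm : x ∈ S m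
        · exact Or.inl hxm
        · exact Or.inr ⟨hx, hxm⟩
    _ ≤ (∫⁻ θ in S m, F θ) + ∫⁻ θ in Ioo (φ - π) (φ + π) \ S m, F θ :=
        lintegral_union_le _ _ _
    _ ≤ ENNReal.ofReal (1 + ∑ j ∈ Finset.range m, 4^q * ρ^(j+1)) * Z +
        ENNReal.ofReal (M' * 2^q) * Z := add_le_add (KEY m le_rfl) hrest
    _ ≤ ENNReal.ofReal (1 + 4^q/(1 - ρ) + M' * 2^q) * Z := by
        rw [← add_mul, ← ENNReal.ofReal_add ?_ (by positivity)]
        · exact mul_le_mul_left (ENNReal.ofReal_le_ofReal hB) _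
        · have : (0:ℝ) ≤ ∑ j ∈ Finset.range m, 4^q * ρ^(j+1) :=
            Finset.sum_nonneg fun j _ => by positivity
          linarith

lemma bpt_abs (θ : ℝ) : ‖bpt θ‖ = 1 := Complex.norm_exp_ofReal_mul_I θ

lemma fb_abs_pow {a : ℂ} (ha : ‖a‖ < 1) {p : ℝ} (hp : 0 < p) (N : ℕ) (θ : ℝ) :
    ‖(((1 - ‖a‖) ^ N : ℝ) : ℂ) /
        (1 - (starRingEnd ℂ) a * bpt θ) ^ ((N : ℂ) + 1 / (p : ℂ))‖ ^ p
      = (1 - ‖a‖) ^ ((N:ℝ) * p) /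
        ‖1 - (starRingEnd ℂ) a * bpt θ‖ ^ ((N:ℝ) * p + 1) := by
  set w : ℂ := 1 - (starRingEnd ℂ) a * bpt θ with hw
  have hδ : (0:ℝ) < 1 - ‖a‖ := by linarith
  have habs : ‖(starRingEnd ℂ) a * bpt θ‖ = ‖a‖ := by
    rw [norm_mul, bpt_abs, Complex.norm_conj, mul_one]
  have hwne : w ≠ 0 := by
    intro h
    have : (1:ℂ) = (starRingEnd ℂ) a * bpt θ := by
      rw [hw] at h; linear_combination h
    have h1 : (1:ℝ) = ‖a‖ := by
      calc (1:ℝ) = ‖(1:ℂ)‖ := by simp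
        _ = ‖(starRingEnd ℂ) a * bpt θ‖ := by rw [← this]
        _ = ‖a‖ := habs
    linarith
  have hDpos : 0 < ‖w‖ := by
    exact norm_pos_iff.mpr hwne
  have hc : ((N:ℂ) + 1/(p:ℂ)) = ((((N:ℝ) + 1/p : ℝ)) : ℂ) := by push_cast; ring
  rw [norm_div, Complex.norm_real, Real.norm_eq_abs, hc, Complex.norm_cpow_real,
    abs_of_nonneg (by positivity : (0:ℝ) ≤ (1 - ‖a‖)^N)]
  rw [Real.div_rpow (by positivity) (by positivity)]
  congr 1
  · rw [← Real.rpow_natCast (1 - ‖a‖) N, ← Real.rpow_mul hδ.le]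
  · rw [← Real.rpow_mul hDpos.le]
    congr 1
    field_simp
lemma conj_mul_bpt (a : ℂ) (θ : ℝ) :
    (starRingEnd ℂ) a * bpt θ =
      ((‖a‖ : ℝ) : ℂ) * Complex.exp (((θ - Complex.arg a : ℝ)) * Complex.I) := by
  conv_lhs => rw [← Complex.norm_mul_exp_arg_mul_I a]
  rw [map_mul, ← Complex.exp_conj, Complex.conj_ofReal]
  have h1 : (starRingEnd ℂ) ((Complex.arg a : ℂ) * Complex.I) =
      -((Complex.arg a : ℂ) * Complex.I) := by
    rw [map_mul, Complex.conj_ofReal, Complex.conj_I]; ring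
  rw [h1, bpt, mul_assoc, ← Complex.exp_add]
  congr 2
  push_cast
  ring
lemma lint_const_mul (ω : ℝ → ℝ) {c : ℝ} (hc : 0 ≤ c) (s : Set ℝ) :
    (∫⁻ θ in s, ENNReal.ofReal (c * ω θ)) =
      ENNReal.ofReal c * ∫⁻ θ in s, ENNReal.ofReal (ω θ) := by
  simp only [ENNReal.ofReal_mul hc]
  exact lintegral_const_mul' _ _ ENNReal.ofReal_ne_top

lemma pow_calc1 {δ q : ℝ} (hδ : 0 < δ) : δ ^ (q-1) / ((3/2*δ)^q) = (2/3)^q / δ := by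
  have h32 : ((3:ℝ)/2)^q > 0 := Real.rpow_pos_of_pos (by norm_num) q
  have hδq : (0:ℝ) < δ ^ q := Real.rpow_pos_of_pos hδ q
  rw [Real.mul_rpow (by norm_num) hδ.le, Real.rpow_sub hδ, Real.rpow_one,
    show (2/3 : ℝ) = ((3:ℝ)/2)⁻¹ by norm_num, Real.inv_rpow (by norm_num)]
  field_simp

lemma main_estimate (ω : ℝ → ℝ) (hper : Function.Periodic ω (2*π)) (M' q : ℝ)
    (hM'1 : 1 ≤ M')
    (hM' : ∀ a ℓ : ℝ, 0 < ℓ → 2 * ℓ ≤ 2 * π →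
      wInt ω (a - ℓ / 2) (2 * ℓ) ≤ ENNReal.ofReal M' * wInt ω a ℓ)
    (hq : 1 < q) (hMq : M' < 2^q)
    {r : ℝ} (hr0 : 0 ≤ r) (hr1 : r < 1) (φ : ℝ) {δ : ℝ} (hδr : δ = 1 - r) :
    ENNReal.ofReal ((2/3)^q/(2*π)) * (wInt ω (φ - δ/2) δ / ENNReal.ofReal δ) ≤
      (ENNReal.ofReal (2*π))⁻¹ * (∫⁻ θ in Ioc 0 (2*π),
        ENNReal.ofReal (δ^(q-1) /
          (‖1 - (r:ℂ) * Complex.exp (((θ - φ : ℝ)) * Complex.I)‖)^q * ω θ)) ∧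
    (ENNReal.ofReal (2*π))⁻¹ * (∫⁻ θ in Ioc 0 (2*π),
        ENNReal.ofReal (δ^(q-1) /
          (‖1 - (r:ℂ) * Complex.exp (((θ - φ : ℝ)) * Complex.I)‖)^q * ω θ)) ≤
      ENNReal.ofReal (9^q/(2*π) * (1 + 4^q/(1 - M'/2^q) + M' * 2^q)) *
        (wInt ω (φ - δ/2) δ / ENNReal.ofReal δ) := by
  have hδ : 0 < δ := by rw [hδr]; linarith
  have hδ1 : δ ≤ 1 := by rw [hδr]; linarith
  have hq0 : (0:ℝ) ≤ q := by linarith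
  have hπ : (0:ℝ) < 2*π := by positivity
  have hπ3 := Real.pi_gt_three
  set G : ℝ → ℝ≥0∞ := fun θ => ENNReal.ofReal (δ^(q-1) /
      (‖1 - (r:ℂ) * Complex.exp (((θ - φ : ℝ)) * Complex.I)‖)^q * ω θ) with hG
  have hGper : Function.Periodic G (2*π) := by
    intro θ
    simp only [hG]
    rw [hper θ]
    have : Complex.exp (((θ + 2*π - φ : ℝ)) * Complex.I) =
        Complex.exp (((θ - φ : ℝ)) * Complex.I) := by
      rw [show (((θ + 2*π - φ : ℝ)) : ℂ) * Complex.I =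
        ((θ - φ : ℝ)) * Complex.I + 2*π*Complex.I by push_cast; ring]
      rw [Complex.exp_add, Complex.exp_two_pi_mul_I, mul_one]
    rw [this]
  have hshift : (∫⁻ θ in Ioc 0 (2*π), G θ) = ∫⁻ θ in Ioc (φ - π) (φ - π + 2*π), G θ :=
    (periodic_setLIntegral G hπ hGper (φ - π)).symm
  have hDpos : ∀ θ : ℝ, |θ - φ| ≤ π →
      0 < ‖1 - (r:ℂ) * Complex.exp (((θ - φ : ℝ)) * Complex.I)‖ := by
    intro θ hs
    have h1 := D_lower hr0 hr1 hs
    have h2 : (0:ℝ) < ((1-r) + |θ - φ|)/9 := by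
      have := abs_nonneg (θ - φ); linarith
    linarith
  constructor
  · -- lower bound
    have hIa : Ioo (φ - δ/2) (φ - δ/2 + δ) ⊆ Ioc (φ - π) (φ - π + 2*π) := by
      intro x hx
      obtain ⟨h1, h2⟩ := hx
      constructor <;> [linarith; linarith]
    have hpt : ∀ θ ∈ Ioo (φ - δ/2) (φ - δ/2 + δ),
        ENNReal.ofReal ((2/3)^q / δ * ω θ) ≤ G θ := by
      intro θ hθ
      obtain ⟨h1, h2⟩ := hθ
      apply ofReal_mul_le_mul _ (by positivity)
      have hs : |θ - φ| ≤ δ/2 := by rw [abs_le]; constructor <;> linarith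
      have hsπ : |θ - φ| ≤ π := by linarith
      have hDle : ‖1 - (r:ℂ) * Complex.exp (((θ - φ : ℝ)) * Complex.I)‖
          ≤ 3/2 * δ := by
        refine (D_upper hr0 hr1.le (θ - φ)).trans ?_
        rw [← hδr]; linarith
      have hD0 := hDpos θ hsπ
      have h1q : (‖1 - (r:ℂ) * Complex.exp (((θ - φ : ℝ)) * Complex.I)‖)^q
          ≤ (3/2*δ)^q := Real.rpow_le_rpow hD0.le hDle hq0
      calc (2/3)^q / δ = δ^(q-1) / ((3/2*δ)^q) := (pow_calc1 hδ).symm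
        _ ≤ δ^(q-1) / (‖1 - (r:ℂ) *
            Complex.exp (((θ - φ : ℝ)) * Complex.I)‖)^q := by
            gcongr
    calc ENNReal.ofReal ((2/3)^q/(2*π)) * (wInt ω (φ - δ/2) δ / ENNReal.ofReal δ)
        = (ENNReal.ofReal (2*π))⁻¹ *
          (ENNReal.ofReal ((2/3)^q/δ) * wInt ω (φ - δ/2) δ) := by
          rw [ENNReal.ofReal_div_of_pos hπ, ENNReal.ofReal_div_of_pos hδ]
          simp only [div_eq_mul_inv]
          ring
      _ ≤ (ENNReal.ofReal (2*π))⁻¹ * ∫⁻ θ in Ioc 0 (2*π), G θ := by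
          apply mul_le_mul_right
          rw [hshift, wInt, ← lint_const_mul ω (by positivity : (0:ℝ) ≤ (2/3)^q/δ)]
          calc (∫⁻ θ in Ioo (φ - δ/2) (φ - δ/2 + δ), ENNReal.ofReal ((2/3)^q/δ * ω θ))
              ≤ ∫⁻ θ in Ioo (φ - δ/2) (φ - δ/2 + δ), G θ :=
                setLIntegral_mono' measurableSet_Ioo hpt
            _ ≤ _ := lintegral_mono_set hIa
  · -- upper bound
    have hIocIoo : (∫⁻ θ in Ioc (φ - π) (φ - π + 2*π), G θ) =
        ∫⁻ θ in Ioo (φ - π) (φ + π), G θ := by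
      rw [show φ - π + 2*π = φ + π by ring]
      exact (setLIntegral_congr Ioo_ae_eq_Ioc).symm
    have hptU : ∀ θ ∈ Ioo (φ - π) (φ + π),
        G θ ≤ ENNReal.ofReal (9^q) *
          ENNReal.ofReal (δ^(q-1) / (δ + |θ - φ|)^q * ω θ) := by
      intro θ hθ
      obtain ⟨h1, h2⟩ := hθ
      have h9q : (0:ℝ) ≤ 9^q := (Real.rpow_pos_of_pos (by norm_num) q).le
      rw [← ENNReal.ofReal_mul h9q]
      simp only [hG]
      rw [show 9^q * (δ^(q-1) / (δ + |θ - φ|)^q * ω θ) =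
        (9^q * (δ^(q-1) / (δ + |θ - φ|)^q)) * ω θ by ring]
      apply ofReal_mul_le_mul _ (by positivity)
      have hs : |θ - φ| ≤ π := by rw [abs_le]; constructor <;> linarith
      have hDlow := D_lower hr0 hr1 hs
      rw [← hδr] at hDlow
      have hD0 := hDpos θ hs
      have h0 : (0:ℝ) < (δ + |θ - φ|)/9 := by positivity
      have h1q : ((δ + |θ - φ|)/9)^q ≤
          (‖1 - (r:ℂ) * Complex.exp (((θ - φ : ℝ)) * Complex.I)‖)^q :=
        Real.rpow_le_rpow h0.le hDlow hq0
      have h2q : ((δ + |θ - φ|)/9)^q = (δ + |θ - φ|)^q / 9^q :=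
        Real.div_rpow (by positivity) (by norm_num) q
      have h3 : (0:ℝ) < (δ + |θ - φ|)^q := Real.rpow_pos_of_pos (by positivity) q
      calc δ^(q-1) / (‖1 - (r:ℂ) *
            Complex.exp (((θ - φ : ℝ)) * Complex.I)‖)^q
          ≤ δ^(q-1) / (((δ + |θ - φ|)/9)^q) := by
            gcongr
        _ = 9^q * (δ^(q-1) / (δ + |θ - φ|)^q) := by
            rw [h2q]
            field_simp
    calc (ENNReal.ofReal (2*π))⁻¹ * ∫⁻ θ in Ioc 0 (2*π), G θ
        = (ENNReal.ofReal (2*π))⁻¹ * ∫⁻ θ in Ioo (φ - π) (φ + π), G θ := by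
          rw [hshift, hIocIoo]
      _ ≤ (ENNReal.ofReal (2*π))⁻¹ * ∫⁻ θ in Ioo (φ - π) (φ + π),
            ENNReal.ofReal (9^q) * ENNReal.ofReal (δ^(q-1) / (δ + |θ - φ|)^q * ω θ) :=
          mul_le_mul_right (setLIntegral_mono' measurableSet_Ioo hptU) _
      _ = (ENNReal.ofReal (2*π))⁻¹ * (ENNReal.ofReal (9^q) *
            ∫⁻ θ in Ioo (φ - π) (φ + π),
              ENNReal.ofReal (δ^(q-1) / (δ + |θ - φ|)^q * ω θ)) := by
          rw [lintegral_const_mul' _ _ ENNReal.ofReal_ne_top]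
      _ ≤ (ENNReal.ofReal (2*π))⁻¹ * (ENNReal.ofReal (9^q) *
            (ENNReal.ofReal (1 + 4^q/(1 - M'/2^q) + M' * 2^q) *
              (wInt ω (φ - δ/2) δ / ENNReal.ofReal δ))) :=
          mul_le_mul_right (mul_le_mul_right
            (dyadic ω M' hM'1 hM' φ δ q hδ hδ1 hq hMq) _) _
      _ = ENNReal.ofReal (9^q/(2*π) * (1 + 4^q/(1 - M'/2^q) + M' * 2^q)) *
            (wInt ω (φ - δ/2) δ / ENNReal.ofReal δ) := by
          have h9q : (0:ℝ) ≤ 9^q := (Real.rpow_pos_of_pos (by norm_num) q).le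
          rw [ENNReal.ofReal_mul (by positivity : (0:ℝ) ≤ 9^q/(2*π)),
            ENNReal.ofReal_div_of_pos hπ]
          simp only [div_eq_mul_inv]
          ring

/-- The test-function estimate in the proof of Theorem 1.4: for `ω ∈ A₁` with doubling
constant `M`, `0 < p < ∞` and a positive integer `N` with `M/2^{Np+1} < 1`, the functions
`f_a(z) = (1-|a|)^N/(1 - conj(a)·z)^{N+1/p}` satisfy
`‖f_a‖_{H^p(ω)}^p ≍ ω(I_a)/(1-|a|)` uniformly in `a ∈ 𝔻`. -/
theorem test_function_two_sided_estimate
    (ω : ℝ → ℝ) (M p : ℝ) (N : ℕ) (hω : IsA1 ω) (hp : 0 < p) (hN : 0 < N)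
    (hM : ∀ a ℓ : ℝ, 0 < ℓ → 2 * ℓ ≤ 2 * π →
      wInt ω (a - ℓ / 2) (2 * ℓ) ≤ ENNReal.ofReal M * wInt ω a ℓ)
    (hMN : M / 2 ^ ((N : ℝ) * p + 1) < 1) :
    ∃ c C : ℝ, 0 < c ∧ 0 < C ∧ ∀ a : ℂ, a ∈ unitDisk →
      ENNReal.ofReal c *
          (wInt ω (Complex.arg a - (1 - ‖a‖) / 2) (1 - ‖a‖) /
            ENNReal.ofReal (1 - ‖a‖)) ≤
        lpNormP p ω (fun θ =>
          ((((1 - ‖a‖) ^ N : ℝ) : ℂ) /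
            (1 - (starRingEnd ℂ) a * bpt θ) ^ ((N : ℂ) + 1 / (p : ℂ)))) ∧
      lpNormP p ω (fun θ =>
          ((((1 - ‖a‖) ^ N : ℝ) : ℂ) /
            (1 - (starRingEnd ℂ) a * bpt θ) ^ ((N : ℂ) + 1 / (p : ℂ)))) ≤
        ENNReal.ofReal C *
          (wInt ω (Complex.arg a - (1 - ‖a‖) / 2) (1 - ‖a‖) /
            ENNReal.ofReal (1 - ‖a‖)) := by
  obtain ⟨hper, hmeas, hnn, -⟩ := hω
  have hπ : (0:ℝ) < 2*π := by positivity
  set q : ℝ := (N:ℝ)*p + 1 with hqdef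
  have hq1 : 1 < q := by
    have h1 : (1:ℝ) ≤ (N:ℝ) := by exact_mod_cast hN
    have h2 : 0 < (N:ℝ)*p := by nlinarith
    rw [hqdef]; linarith
  have h2q : (0:ℝ) < 2^q := Real.rpow_pos_of_pos two_pos q
  have hM2q : M < 2^q := by
    calc M = M / 2^q * 2^q := by field_simp
      _ < 1 * 2^q := mul_lt_mul_of_pos_right hMN h2q
      _ = 2^q := one_mul _
  have h12q : (1:ℝ) < 2^q := by
    calc (1:ℝ) = 2^(0:ℝ) := (Real.rpow_zero 2).symm
      _ < 2^q := by
        apply Real.rpow_lt_rpow_of_exponent_lt one_lt_two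
        linarith
  set M' : ℝ := max M 1 with hM'def
  have hM'1 : (1:ℝ) ≤ M' := le_max_right _ _
  have hM'lt : M' < 2^q := max_lt hM2q h12q
  have hρ1 : (0:ℝ) < 1 - M'/2^q := by
    rw [sub_pos]
    exact (div_lt_one h2q).2 hM'lt
  have hM' : ∀ a ℓ : ℝ, 0 < ℓ → 2*ℓ ≤ 2*π →
      wInt ω (a - ℓ/2) (2*ℓ) ≤ ENNReal.ofReal M' * wInt ω a ℓ := fun a ℓ h1 h2 =>
    (hM a ℓ h1 h2).trans (mul_le_mul_left (ENNReal.ofReal_le_ofReal (le_max_left _ _)) _)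
  have h23 : (0:ℝ) < (2/3)^q := Real.rpow_pos_of_pos (by norm_num) q
  have h9 : (0:ℝ) < (9:ℝ)^q := Real.rpow_pos_of_pos (by norm_num) q
  have h4 : (0:ℝ) < (4:ℝ)^q := Real.rpow_pos_of_pos (by norm_num) q
  refine ⟨(2/3)^q/(2*π), 9^q/(2*π) * (1 + 4^q/(1 - M'/2^q) + M'*2^q), by positivity, ?_, ?_⟩
  · apply mul_pos (by positivity)
    have h5 : (0:ℝ) < 4^q/(1 - M'/2^q) := div_pos h4 hρ1
    have h6 : (0:ℝ) < M'*2^q := mul_pos (by linarith) h2q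
    linarith
  intro a ha
  have hr1 : ‖a‖ < 1 := by
    simpa [unitDisk, Metric.mem_ball, Complex.dist_eq] using ha
  have hr0 : (0:ℝ) ≤ ‖a‖ := norm_nonneg a
  have hre : ∀ θ : ℝ, ‖(((1 - ‖a‖)^N : ℝ) : ℂ) /
      (1 - (starRingEnd ℂ) a * bpt θ) ^ ((N:ℂ) + 1/(p:ℂ))‖^p * ω θ
      = (1 - ‖a‖)^(q-1) /
        (‖1 - ((‖a‖ : ℝ):ℂ) *
          Complex.exp (((θ - Complex.arg a : ℝ)) * Complex.I)‖)^q * ω θ := by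
    intro θ
    rw [fb_abs_pow hr1 hp N θ, conj_mul_bpt a θ,
      show (N:ℝ)*p + 1 = q from hqdef.symm,
      show (N:ℝ)*p = q - 1 by rw [hqdef]; ring]
  have hlp : lpNormP p ω (fun θ =>
      ((((1 - ‖a‖) ^ N : ℝ) : ℂ) /
        (1 - (starRingEnd ℂ) a * bpt θ) ^ ((N : ℂ) + 1 / (p : ℂ)))) =
      (ENNReal.ofReal (2*π))⁻¹ * ∫⁻ θ in Ioc 0 (2*π),
        ENNReal.ofReal ((1 - ‖a‖)^(q-1) /
          (‖1 - ((‖a‖ : ℝ):ℂ) *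
            Complex.exp (((θ - Complex.arg a : ℝ)) * Complex.I)‖)^q * ω θ) := by
    rw [lpNormP, circInt]
    congr 1
    apply lintegral_congr
    intro θ
    exact congrArg ENNReal.ofReal (hre θ)
  obtain ⟨hlow, hup⟩ := main_estimate ω hper M' q hM'1 hM' hq1 hM'lt hr0 hr1
    (Complex.arg a) (rfl : (1 - ‖a‖) = 1 - ‖a‖)
  rw [hlp]
  exact ⟨hlow, hup⟩


end
end

section
/- Let ω be an A_1 weight on the unit circle, let 0 < q < 1 and β ≥ 0. For each arc I ⊆ ∂𝔻 let 𝒟(I) denote the family of dyadic subarcs of I, and suppose nonnegative numbers a_Q are assigned to dyadic arcs Q so that the functions F_I(ξ) := (ω(I))^{−β} Σ_{Q ∈ 𝒟(I)} a_Q χ_Q(ξ) satisfy (1/ω(I))∫_I (F_I(ξ))^q ω(ξ)|dξ| ≤ 1 for every arc I. Then there exist constants C, λ > 0 such that for every arc I and every t > 0, ω({ξ ∈ I : (F_I(ξ))^q > t}) ≤ C·e^{−λt}·ω(I). -/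
open MeasureTheory Set Filter
open scoped ENNReal Real

noncomputable section

/-- `F_I(ξ) = ω(I)^{-β} Σ_{Q ∈ 𝒟(I)} a_Q χ_Q(ξ)`, where `𝒟(I)` is the family of dyadic subarcs
of the arc `I` with initial angle `b` and length `ℓ` (the `n`-th generation consisting of the
`2^n` arcs `[b + jℓ/2^n, b + (j+1)ℓ/2^n)`), and where `a` assigns to each arc (given by its
initial angle and its length) a nonnegative coefficient. -/
def dyadF (a : ℝ → ℝ → ℝ) (ω : ℝ → ℝ) (β b ℓ : ℝ) (θ : ℝ) : ℝ≥0∞ :=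
  wInt ω b ℓ ^ (-β) *
    ∑' n : ℕ, ∑ j ∈ Finset.range (2 ^ n),
      Set.indicator
        (Set.Ico (b + (j : ℝ) * (ℓ / 2 ^ n)) (b + ((j : ℝ) + 1) * (ℓ / 2 ^ n)))
        (fun _ => ENNReal.ofReal (a (b + (j : ℝ) * (ℓ / 2 ^ n)) (ℓ / 2 ^ n))) θ

namespace JNaux

def SS (a : ℝ → ℝ → ℝ) : ℕ → ℝ → ℝ → ℝ → ℝ≥0∞
  | 0, _, _, _ => 0
  | (k+1), b, l, θ => ENNReal.ofReal (a b l) +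
      (if θ < b + l / 2 then SS a k b (l / 2) θ else SS a k (b + l / 2) (l / 2) θ)

def SSi (a : ℝ → ℝ → ℝ) (b l θ : ℝ) : ℝ≥0∞ := ⨆ k, SS a k b l θ

variable {a : ℝ → ℝ → ℝ} {b l θ : ℝ}

lemma SS_mono_succ : ∀ k b l θ, SS a k b l θ ≤ SS a (k+1) b l θ := by
  intro k
  induction k with
  | zero => intro b l θ; simp [SS]
  | succ k ih =>
      intro b l θ
      simp only [SS]
      gcongr
      split <;> apply ih

lemma SS_le_SSi' (k : ℕ) (b l θ : ℝ) : SS a k b l θ ≤ SSi a b l θ :=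
  le_iSup (fun k => SS a k b l θ) k

lemma ofReal_a_le_SSi (b l θ : ℝ) : ENNReal.ofReal (a b l) ≤ SSi a b l θ := by
  refine le_trans ?_ (SS_le_SSi' 1 b l θ)
  simp [SS]

lemma SSi_rec (b l θ : ℝ) :
    SSi a b l θ = ENNReal.ofReal (a b l) +
      (if θ < b + l / 2 then SSi a b (l / 2) θ else SSi a (b + l / 2) (l / 2) θ) := by
  have h1 : SSi a b l θ = ⨆ k, SS a (k+1) b l θ := by
    apply le_antisymm
    · refine iSup_le fun k => le_trans (SS_mono_succ k b l θ)
        (le_iSup (fun k => SS a (k+1) b l θ) k)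
    · exact iSup_le fun k => le_iSup (fun k => SS a k b l θ) (k+1)
  rw [h1]
  simp only [SS]
  by_cases h : θ < b + l / 2 <;>
    simp only [h, if_true, if_false, SSi, ENNReal.add_iSup]

lemma measurable_SS : ∀ k b l, Measurable (SS a k b l) := by
  intro k
  induction k with
  | zero => intro b l; simp only [SS]; exact measurable_const
  | succ k ih =>
      intro b l
      simp only [SS]
      exact measurable_const.add
        (Measurable.ite (measurableSet_lt measurable_id measurable_const) (ih _ _) (ih _ _))

lemma measurable_SSi (b l : ℝ) : Measurable (SSi a b l) :=
  Measurable.iSup fun k => measurable_SS k b l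

lemma le_half {x y : ℝ≥0∞} (h : 2 * x ≤ y) : x ≤ 2⁻¹ * y := by
  have h2 := mul_le_mul_right h (2⁻¹ : ℝ≥0∞)
  rwa [← mul_assoc, ENNReal.inv_mul_cancel (by norm_num) (by norm_num), one_mul] at h2

lemma rpow_base_antitone {x y : ℝ≥0∞} (h : x ≤ y) {c : ℝ} (hc : 0 ≤ c) :
    y ^ (-c) ≤ x ^ (-c) := by
  rw [ENNReal.rpow_neg, ENNReal.rpow_neg]
  exact ENNReal.inv_le_inv' (ENNReal.rpow_le_rpow h hc)

def gen (a : ℝ → ℝ → ℝ) (b l : ℝ) (n : ℕ) (θ : ℝ) : ℝ≥0∞ :=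
  ∑ j ∈ Finset.range (2 ^ n),
    Set.indicator
      (Set.Ico (b + (j : ℝ) * (l / 2 ^ n)) (b + ((j : ℝ) + 1) * (l / 2 ^ n)))
      (fun _ => ENNReal.ofReal (a (b + (j : ℝ) * (l / 2 ^ n)) (l / 2 ^ n))) θ

variable {a : ℝ → ℝ → ℝ} {b l θ : ℝ}

lemma gen_zero (hθ : θ ∈ Set.Ico b (b + l)) : gen a b l 0 θ = ENNReal.ofReal (a b l) := by
  have e1 : b + ((0:ℕ) : ℝ) * (l / 2 ^ (0:ℕ)) = b := by norm_num
  have e2 : b + (((0:ℕ) : ℝ) + 1) * (l / 2 ^ (0:ℕ)) = b + l := by norm_num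
  have e3 : l / (2:ℝ) ^ (0:ℕ) = l := by norm_num
  simp only [gen, pow_zero, Finset.sum_range_one] at *
  rw [e1, e2, e3, Set.indicator_of_mem hθ]

lemma gen_succ (hl : 0 < l) (hθ : θ ∈ Set.Ico b (b + l)) (n : ℕ) :
    gen a b l (n+1) θ =
      if θ < b + l / 2 then gen a b (l/2) n θ else gen a (b + l/2) (l/2) n θ := by
  have hpow : (0:ℝ) < 2 ^ n := by positivity
  have h2 : (2:ℕ) ^ (n+1) = 2 ^ n + 2 ^ n := by rw [pow_succ]; ring
  rw [gen, h2, Finset.sum_range_add]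
  by_cases h : θ < b + l / 2
  · rw [if_pos h]
    have hz : ∀ j ∈ Finset.range (2^n),
        Set.indicator
          (Set.Ico (b + ((2^n + j : ℕ) : ℝ) * (l / 2 ^ (n+1)))
            (b + (((2^n + j : ℕ) : ℝ) + 1) * (l / 2 ^ (n+1))))
          (fun _ => ENNReal.ofReal (a (b + ((2^n + j : ℕ) : ℝ) * (l / 2 ^ (n+1))) (l / 2 ^ (n+1)))) θ
          = 0 := by
      intro j hj
      apply Set.indicator_of_notMem
      have e1 : b + ((2^n + j : ℕ) : ℝ) * (l / 2 ^ (n+1)) = b + l/2 + (j:ℝ) * ((l/2) / 2^n) := by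
        push_cast; field_simp; ring
      intro hmem
      have h1 := hmem.1
      rw [e1] at h1
      have hj0 : (0:ℝ) ≤ (j:ℝ) * ((l/2) / 2^n) := by positivity
      linarith
    rw [Finset.sum_eq_zero hz, add_zero]
    apply Finset.sum_congr rfl
    intro j hj
    have e1 : b + (j : ℝ) * (l / 2 ^ (n+1)) = b + (j:ℝ) * ((l/2) / 2^n) := by ring
    have e2 : b + ((j : ℝ) + 1) * (l / 2 ^ (n+1)) = b + ((j:ℝ) + 1) * ((l/2) / 2^n) := by ring
    have e3 : l / (2:ℝ) ^ (n+1) = (l/2) / 2^n := by ring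
    rw [e1, e2, e3]
  · rw [if_neg h]
    have hz : ∀ j ∈ Finset.range (2^n),
        Set.indicator
          (Set.Ico (b + (j : ℝ) * (l / 2 ^ (n+1))) (b + ((j : ℝ) + 1) * (l / 2 ^ (n+1))))
          (fun _ => ENNReal.ofReal (a (b + (j : ℝ) * (l / 2 ^ (n+1))) (l / 2 ^ (n+1)))) θ = 0 := by
      intro j hj
      apply Set.indicator_of_notMem
      intro hmem
      have h2j := hmem.2
      have hjle : (j:ℝ) + 1 ≤ 2^n := by
        have := Finset.mem_range.1 hj
        have : (j:ℝ) + 1 ≤ ((2:ℕ)^n : ℕ) := by exact_mod_cast Nat.succ_le_of_lt this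
        simpa using this
      have : ((j : ℝ) + 1) * (l / 2 ^ (n+1)) ≤ (2:ℝ)^n * (l / 2^(n+1)) := by
        apply mul_le_mul_of_nonneg_right hjle (by positivity)
      have he : (2:ℝ)^n * (l / 2^(n+1)) = l/2 := by field_simp; ring
      push_neg at h
      nlinarith
    rw [Finset.sum_eq_zero hz, zero_add]
    apply Finset.sum_congr rfl
    intro j hj
    have e1 : b + ((2^n + j : ℕ) : ℝ) * (l / 2 ^ (n+1)) = (b + l/2) + (j:ℝ) * ((l/2) / 2^n) := by
      push_cast; field_simp; ring
    have e2 : b + (((2^n + j : ℕ) : ℝ) + 1) * (l / 2 ^ (n+1))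
        = (b + l/2) + ((j:ℝ) + 1) * ((l/2) / 2^n) := by
      push_cast; field_simp; ring
    have e3 : l / (2:ℝ) ^ (n+1) = (l/2) / 2^n := by ring
    rw [e3] at e1 e2 ⊢
    rw [e1, e2]

lemma sum_gen : ∀ (k : ℕ) (b l θ : ℝ), 0 < l → θ ∈ Set.Ico b (b + l) →
    ∑ n ∈ Finset.range k, gen a b l n θ = SS a k b l θ := by
  intro k
  induction k with
  | zero => intro b l θ _ _; simp [SS]
  | succ k ih =>
      intro b l θ hl hθ
      rw [Finset.sum_range_succ', gen_zero hθ]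
      by_cases h : θ < b + l / 2
      · have hrec : ∀ n ∈ Finset.range k, gen a b l (n+1) θ = gen a b (l/2) n θ := by
          intro n _; rw [gen_succ hl hθ n, if_pos h]
        rw [Finset.sum_congr rfl hrec, ih b (l/2) θ (by linarith) ⟨hθ.1, h⟩]
        simp only [SS, if_pos h]
        rw [add_comm]
      · have hrec : ∀ n ∈ Finset.range k, gen a b l (n+1) θ = gen a (b + l/2) (l/2) n θ := by
          intro n _; rw [gen_succ hl hθ n, if_neg h]
        have hθ' : θ ∈ Set.Ico (b + l/2) (b + l/2 + l/2) := by
          constructor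
          · exact not_lt.1 h
          · have := hθ.2; linarith
        rw [Finset.sum_congr rfl hrec, ih (b + l/2) (l/2) θ (by linarith) hθ']
        simp only [SS, if_neg h]
        rw [add_comm]

lemma tsum_gen (hl : 0 < l) (hθ : θ ∈ Set.Ico b (b + l)) :
    ∑' n : ℕ, gen a b l n θ = SSi a b l θ := by
  rw [ENNReal.tsum_eq_iSup_nat]
  exact iSup_congr fun k => sum_gen k b l θ hl hθ

lemma dyadF_eq (ω : ℝ → ℝ) (β : ℝ) (hl : 0 < l) (hθ : θ ∈ Set.Ico b (b + l)) :
    dyadF a ω β b l θ = wInt ω b l ^ (-β) * SSi a b l θ := by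
  rw [dyadF]
  exact congrArg (fun X => wInt ω b l ^ (-β) * X) (tsum_gen hl hθ)

lemma core (ω : ℝ → ℝ) (a : ℝ → ℝ → ℝ) (q β : ℝ)
    (hq : 0 < q) (hq1 : q < 1) (hβ : 0 ≤ β) (hωm : Measurable ω)
    (hF : ∀ b ℓ : ℝ, 0 < ℓ → ℓ ≤ 2 * π →
      ∫⁻ θ in Set.Ioo b (b + ℓ), dyadF a ω β b ℓ θ ^ q * ENNReal.ofReal (ω θ) ≤ wInt ω b ℓ)
    (b l : ℝ) (hl : 0 < l) (hl2 : l ≤ 2 * π) (hw : wInt ω b l ≠ ⊤) :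
    ∀ (k : ℕ) (b' l' : ℝ), 0 < l' → b ≤ b' → b' + l' ≤ b + l → ∀ (H : ℝ≥0∞) (t : ℝ), 0 < t →
      wInt ω b l ^ (-(q * β)) * H ^ q ≤ ENNReal.ofReal t →
      (volume.withDensity fun θ => ENNReal.ofReal (ω θ))
          {θ | θ ∈ Set.Ico b' (b' + l') ∧
            ENNReal.ofReal t + 3 < wInt ω b l ^ (-(q * β)) * (H + SS a k b' l' θ) ^ q}
        ≤ 2⁻¹ * (volume.withDensity fun θ => ENNReal.ofReal (ω θ))
          {θ | θ ∈ Set.Ico b' (b' + l') ∧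
            ENNReal.ofReal t < wInt ω b l ^ (-(q * β)) * (H + SSi a b' l' θ) ^ q} := by
  set ν := volume.withDensity fun θ => ENNReal.ofReal (ω θ) with hν
  set u := wInt ω b l ^ (-(q * β)) with hu
  have hqβ : 0 ≤ q * β := by positivity
  intro k
  induction k with
  | zero =>
      intro b' l' hl' hb1 hb2 H t ht hHt
      have hempty : {θ | θ ∈ Set.Ico b' (b' + l') ∧
          ENNReal.ofReal t + 3 < u * (H + SS a 0 b' l' θ) ^ q} = ∅ := by
        ext θ
        simp only [Set.mem_setOf_eq, Set.mem_empty_iff_false, iff_false, not_and]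
        intro _
        rw [show SS a 0 b' l' θ = 0 from rfl, add_zero]
        exact fun hlt => absurd (lt_of_lt_of_le hlt hHt) (not_lt.2 le_self_add)
      rw [hempty]
      simp
  | succ k ih =>
      intro b' l' hl' hb1 hb2 H t ht hHt
      have hl'2 : l' ≤ 2 * π := by
        have hπ := Real.pi_pos
        linarith
      have hsub : Set.Ioo b' (b' + l') ⊆ Set.Ioo b (b + l) := Set.Ioo_subset_Ioo hb1 hb2
      have hw'le : wInt ω b' l' ≤ wInt ω b l := lintegral_mono_set hsub
      have hw't : wInt ω b' l' ≠ ⊤ := fun h => hw (top_unique (h ▸ hw'le))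
      have hIcoIoo : (∫⁻ θ in Set.Ico b' (b' + l'), ENNReal.ofReal (ω θ)) = wInt ω b' l' :=
        (setLIntegral_congr Ioo_ae_eq_Ico).symm
      by_cases hw'0 : wInt ω b' l' = 0
      · refine le_trans (le_trans (measure_mono fun θ hθ => hθ.1) ?_) zero_le
        rw [hν, withDensity_apply' _ (Set.Ico b' (b' + l')), hIcoIoo, hw'0]
      -- main case
      have hw'pos : (0:ℝ≥0∞) < wInt ω b' l' := pos_iff_ne_zero.2 hw'0
      have hwpos : wInt ω b l ≠ 0 := fun h0 => hw'0 (le_antisymm (h0 ▸ hw'le) zero_le)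
      set aQ := ENNReal.ofReal (a b' l') with haQ
      set w' := wInt ω b' l' with hw'
      -- (F1) consequence of hF on the subarc
      have hFQ : ∫⁻ θ in Set.Ioo b' (b' + l'),
          (w' ^ (-β) * SSi a b' l' θ) ^ q * ENNReal.ofReal (ω θ) ≤ w' := by
        refine le_trans (le_of_eq (setLIntegral_congr_fun measurableSet_Ioo ?_)) (hF b' l' hl' hl'2)
        exact fun θ hθ => by
          rw [dyadF_eq (a := a) ω β hl' (Set.Ioo_subset_Ico_self hθ)]
      -- (F4)
      have hpoint : ∀ θ, u * (SSi a b' l' θ) ^ q ≤ (w' ^ (-β) * SSi a b' l' θ) ^ q := by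
        intro θ
        rw [ENNReal.mul_rpow_of_nonneg _ _ hq.le, ← ENNReal.rpow_mul,
          show -β * q = -(q * β) by ring]
        exact mul_le_mul_left (rpow_base_antitone hw'le hqβ) _
      have hF4 : ∫⁻ θ in Set.Ioo b' (b' + l'),
          u * (SSi a b' l' θ) ^ q * ENNReal.ofReal (ω θ) ≤ w' :=
        le_trans (lintegral_mono fun θ => mul_le_mul_left (hpoint θ) _) hFQ
      -- (F3')
      have hwbne : w' ^ (-β) ≠ ⊤ := by
        rw [ENNReal.rpow_neg]
        exact ENNReal.inv_ne_top.2 (ENNReal.rpow_pos hw'pos hw't).ne'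
      have hcne : (w' ^ (-β) * aQ) ^ q ≠ ⊤ :=
        ENNReal.rpow_ne_top_of_nonneg hq.le (ENNReal.mul_ne_top hwbne ENNReal.ofReal_ne_top)
      have hconst : (w' ^ (-β) * aQ) ^ q * w' ≤ w' := by
        calc (w' ^ (-β) * aQ) ^ q * w'
            = ∫⁻ θ in Set.Ioo b' (b' + l'), (w' ^ (-β) * aQ) ^ q * ENNReal.ofReal (ω θ) := by
              rw [lintegral_const_mul' _ _ hcne]; rfl
          _ ≤ ∫⁻ θ in Set.Ioo b' (b' + l'),
              (w' ^ (-β) * SSi a b' l' θ) ^ q * ENNReal.ofReal (ω θ) := by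
              refine lintegral_mono fun θ => mul_le_mul_left ?_ _
              exact ENNReal.rpow_le_rpow (mul_le_mul_right (ofReal_a_le_SSi b' l' θ) _) hq.le
          _ ≤ w' := hFQ
      have hX1 : (w' ^ (-β) * aQ) ^ q ≤ 1 := by
        have h2 := mul_le_mul_left hconst w'⁻¹
        rwa [mul_assoc, ENNReal.mul_inv_cancel hw'0 hw't, mul_one] at h2
      have haq : aQ ^ q ≤ w' ^ (q * β) := by
        rw [ENNReal.mul_rpow_of_nonneg _ _ hq.le] at hX1
        have h2 := mul_le_mul_right hX1 (w' ^ (q * β))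
        rw [mul_one] at h2
        calc aQ ^ q = w' ^ (q * β) * ((w' ^ (-β)) ^ q * aQ ^ q) := by
              rw [← mul_assoc, ← ENNReal.rpow_mul, show -β * q = -(q * β) by ring,
                ENNReal.rpow_neg, ENNReal.mul_inv_cancel
                  (ENNReal.rpow_pos hw'pos hw't).ne'
                  (ENNReal.rpow_ne_top_of_nonneg hqβ hw't), one_mul]
          _ ≤ w' ^ (q * β) := h2
      have hF3 : u * aQ ^ q ≤ 1 := by
        calc u * aQ ^ q ≤ u * (wInt ω b l) ^ (q * β) := by
              exact mul_le_mul_right (le_trans haq (ENNReal.rpow_le_rpow hw'le hqβ)) u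
          _ = 1 := by
              rw [hu, ENNReal.rpow_neg, ENNReal.inv_mul_cancel
                (ENNReal.rpow_pos (pos_iff_ne_zero.2 hwpos) hw).ne'
                (ENNReal.rpow_ne_top_of_nonneg hqβ hw)]
      -- measurable helper
      have hmeasfun : Measurable fun θ => u * (SSi a b' l' θ) ^ q :=
        ((measurable_SSi b' l').pow_const q).const_mul u
      by_cases hcase : ENNReal.ofReal t < u * (H + aQ) ^ q
      · -- Case 1: stop here, use Chebyshev
        have hRHS : w' ≤ ν {θ | θ ∈ Set.Ico b' (b' + l') ∧
            ENNReal.ofReal t < u * (H + SSi a b' l' θ) ^ q} := by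
          have hsub2 : Set.Ioo b' (b' + l') ⊆ {θ | θ ∈ Set.Ico b' (b' + l') ∧
              ENNReal.ofReal t < u * (H + SSi a b' l' θ) ^ q} := by
            intro θ hθ
            refine ⟨Set.Ioo_subset_Ico_self hθ, lt_of_lt_of_le hcase ?_⟩
            exact mul_le_mul_right
              (ENNReal.rpow_le_rpow (add_le_add_right (ofReal_a_le_SSi b' l' θ) H) hq.le) u
          calc w' = ν (Set.Ioo b' (b' + l')) := by
                rw [hν, withDensity_apply' _ (Set.Ioo b' (b' + l'))]; rfl
            _ ≤ _ := measure_mono hsub2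
        have hhead : u * (H + aQ) ^ q ≤ ENNReal.ofReal t + 1 := by
          calc u * (H + aQ) ^ q ≤ u * (H ^ q + aQ ^ q) :=
                mul_le_mul_right (ENNReal.rpow_add_le_add_rpow H aQ hq.le hq1.le) u
            _ = u * H ^ q + u * aQ ^ q := mul_add u _ _
            _ ≤ ENNReal.ofReal t + 1 := add_le_add hHt hF3
        have hLsub : {θ | θ ∈ Set.Ico b' (b' + l') ∧
            ENNReal.ofReal t + 3 < u * (H + SS a (k+1) b' l' θ) ^ q}
            ⊆ {θ | θ ∈ Set.Ioo b' (b' + l') ∧ 2 < u * (SSi a b' l' θ) ^ q} ∪ {b'} := by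
          intro θ hθ
          set R := if θ < b' + l' / 2 then SS a k b' (l' / 2) θ
            else SS a k (b' + l' / 2) (l' / 2) θ with hR
          have hSSsplit : SS a (k+1) b' l' θ = aQ + R := rfl
          have hRle : R ≤ SSi a b' l' θ := by
            rw [SSi_rec]
            refine le_add_left ?_
            rw [hR]
            by_cases hmid : θ < b' + l' / 2 <;>
              simp only [hmid, if_true, if_false] <;> exact SS_le_SSi' k _ _ θ
          have hchain : ENNReal.ofReal t + 3 < (ENNReal.ofReal t + 1) + u * R ^ q := by
            refine lt_of_lt_of_le hθ.2 ?_
            calc u * (H + SS a (k+1) b' l' θ) ^ q = u * ((H + aQ) + R) ^ q := by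
                  rw [hSSsplit, add_assoc]
              _ ≤ u * ((H + aQ) ^ q + R ^ q) :=
                  mul_le_mul_right (ENNReal.rpow_add_le_add_rpow _ _ hq.le hq1.le) u
              _ = u * (H + aQ) ^ q + u * R ^ q := mul_add u _ _
              _ ≤ (ENNReal.ofReal t + 1) + u * R ^ q := add_le_add_left hhead _
          have h2R : (2:ℝ≥0∞) < u * R ^ q := by
            have hne : ENNReal.ofReal t + 1 ≠ ⊤ := by finiteness
            rw [show (ENNReal.ofReal t + 3 : ℝ≥0∞) = (ENNReal.ofReal t + 1) + 2 by
              rw [add_assoc]; norm_num] at hchain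
            exact (ENNReal.add_lt_add_iff_left hne).1 hchain
          rcases eq_or_lt_of_le hθ.1.1 with heq | hlt
          · right; simp [← heq]
          · left
            exact ⟨⟨hlt, hθ.1.2⟩, lt_of_lt_of_le h2R
              (mul_le_mul_right (ENNReal.rpow_le_rpow hRle hq.le) u)⟩
        have hbnull : ν ({b'} : Set ℝ) = 0 := by
          rw [hν, withDensity_apply' _ ({b'} : Set ℝ),
            Measure.restrict_eq_zero.2 (measure_singleton b'), lintegral_zero_measure]
        have hcheb : ν {θ | θ ∈ Set.Ioo b' (b' + l') ∧ 2 < u * (SSi a b' l' θ) ^ q}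
            ≤ 2⁻¹ * w' := by
          set A := {θ | θ ∈ Set.Ioo b' (b' + l') ∧ 2 < u * (SSi a b' l' θ) ^ q} with hA
          have hAmeas : MeasurableSet A :=
            measurableSet_Ioo.inter (hmeasfun measurableSet_Ioi)
          refine le_half ?_
          calc 2 * ν A = ∫⁻ _ in A, 2 ∂ν := (setLIntegral_const A 2).symm
            _ ≤ ∫⁻ θ in A, u * (SSi a b' l' θ) ^ q ∂ν :=
                setLIntegral_mono hmeasfun fun θ hθ => (hθ.2).le
            _ ≤ ∫⁻ θ in Set.Ioo b' (b' + l'), u * (SSi a b' l' θ) ^ q ∂ν :=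
                lintegral_mono_set fun θ hθ => hθ.1
            _ = ∫⁻ θ in Set.Ioo b' (b' + l'),
                ENNReal.ofReal (ω θ) * (u * (SSi a b' l' θ) ^ q) := by
                rw [hν, restrict_withDensity measurableSet_Ioo,
                  lintegral_withDensity_eq_lintegral_mul _ hωm.ennreal_ofReal hmeasfun]
                rfl
            _ = ∫⁻ θ in Set.Ioo b' (b' + l'),
                u * (SSi a b' l' θ) ^ q * ENNReal.ofReal (ω θ) :=
                lintegral_congr fun θ => mul_comm _ _
            _ ≤ w' := hF4
        calc ν {θ | θ ∈ Set.Ico b' (b' + l') ∧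
              ENNReal.ofReal t + 3 < u * (H + SS a (k+1) b' l' θ) ^ q}
            ≤ ν ({θ | θ ∈ Set.Ioo b' (b' + l') ∧ 2 < u * (SSi a b' l' θ) ^ q} ∪ {b'}) :=
              measure_mono hLsub
          _ ≤ ν {θ | θ ∈ Set.Ioo b' (b' + l') ∧ 2 < u * (SSi a b' l' θ) ^ q} + ν {b'} :=
              measure_union_le _ _
          _ = ν {θ | θ ∈ Set.Ioo b' (b' + l') ∧ 2 < u * (SSi a b' l' θ) ^ q} := by
              rw [hbnull, add_zero]
          _ ≤ 2⁻¹ * w' := hcheb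
          _ ≤ _ := mul_le_mul_right hRHS _
      · -- Case 2: recurse into the two halves
        have h1 : u * (H + aQ) ^ q ≤ ENNReal.ofReal t := not_lt.1 hcase
        have ihL := ih b' (l' / 2) (by linarith) hb1 (by linarith) (H + aQ) t ht h1
        have ihR := ih (b' + l' / 2) (l' / 2) (by linarith) (by linarith) (by linarith)
          (H + aQ) t ht h1
        have hLsub : {θ | θ ∈ Set.Ico b' (b' + l') ∧
            ENNReal.ofReal t + 3 < u * (H + SS a (k+1) b' l' θ) ^ q}
            ⊆ {θ | θ ∈ Set.Ico b' (b' + l' / 2) ∧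
                ENNReal.ofReal t + 3 < u * ((H + aQ) + SS a k b' (l' / 2) θ) ^ q}
              ∪ {θ | θ ∈ Set.Ico (b' + l' / 2) (b' + l' / 2 + l' / 2) ∧
                ENNReal.ofReal t + 3 < u * ((H + aQ) + SS a k (b' + l' / 2) (l' / 2) θ) ^ q} := by
          intro θ hθ
          by_cases hmid : θ < b' + l' / 2
          · left
            refine ⟨⟨hθ.1.1, hmid⟩, ?_⟩
            have hs : SS a (k+1) b' l' θ = aQ + SS a k b' (l' / 2) θ := by
              simp only [SS, if_pos hmid, haQ]
            have := hθ.2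
            rwa [hs, ← add_assoc] at this
          · right
            have hmem := hθ.1.2
            refine ⟨⟨not_lt.1 hmid, by linarith⟩, ?_⟩
            have hs : SS a (k+1) b' l' θ = aQ + SS a k (b' + l' / 2) (l' / 2) θ := by
              simp only [SS, if_neg hmid, haQ]
            have := hθ.2
            rwa [hs, ← add_assoc] at this
        have hBsub : {θ | θ ∈ Set.Ico b' (b' + l' / 2) ∧
              ENNReal.ofReal t < u * ((H + aQ) + SSi a b' (l' / 2) θ) ^ q}
            ∪ {θ | θ ∈ Set.Ico (b' + l' / 2) (b' + l' / 2 + l' / 2) ∧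
              ENNReal.ofReal t < u * ((H + aQ) + SSi a (b' + l' / 2) (l' / 2) θ) ^ q}
            ⊆ {θ | θ ∈ Set.Ico b' (b' + l') ∧
              ENNReal.ofReal t < u * (H + SSi a b' l' θ) ^ q} := by
          rintro θ (⟨⟨hθ1, hθ2⟩, hθ3⟩ | ⟨⟨hθ1, hθ2⟩, hθ3⟩)
          · refine ⟨⟨hθ1, by linarith⟩, ?_⟩
            have hs : SSi a b' l' θ = aQ + SSi a b' (l' / 2) θ := by
              rw [SSi_rec, if_pos hθ2]
            rwa [hs, ← add_assoc]
          · refine ⟨⟨by linarith, by linarith⟩, ?_⟩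
            have hs : SSi a b' l' θ = aQ + SSi a (b' + l' / 2) (l' / 2) θ := by
              rw [SSi_rec, if_neg (not_lt.2 hθ1)]
            rwa [hs, ← add_assoc]
        have hBdisj : Disjoint
            {θ | θ ∈ Set.Ico b' (b' + l' / 2) ∧
              ENNReal.ofReal t < u * ((H + aQ) + SSi a b' (l' / 2) θ) ^ q}
            {θ | θ ∈ Set.Ico (b' + l' / 2) (b' + l' / 2 + l' / 2) ∧
              ENNReal.ofReal t < u * ((H + aQ) + SSi a (b' + l' / 2) (l' / 2) θ) ^ q} :=
          Set.disjoint_left.2 fun θ hL hRm => absurd hRm.1.1 (not_le.2 hL.1.2)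
        have hBRmeas : MeasurableSet {θ | θ ∈ Set.Ico (b' + l' / 2) (b' + l' / 2 + l' / 2) ∧
            ENNReal.ofReal t < u * ((H + aQ) + SSi a (b' + l' / 2) (l' / 2) θ) ^ q} := by
          exact measurableSet_Ico.inter
            (((((measurable_SSi (b' + l' / 2) (l' / 2)).const_add (H + aQ)).pow_const q).const_mul u)
              measurableSet_Ioi)
        calc ν {θ | θ ∈ Set.Ico b' (b' + l') ∧
              ENNReal.ofReal t + 3 < u * (H + SS a (k+1) b' l' θ) ^ q}
            ≤ ν ({θ | θ ∈ Set.Ico b' (b' + l' / 2) ∧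
                ENNReal.ofReal t + 3 < u * ((H + aQ) + SS a k b' (l' / 2) θ) ^ q}
              ∪ {θ | θ ∈ Set.Ico (b' + l' / 2) (b' + l' / 2 + l' / 2) ∧
                ENNReal.ofReal t + 3 < u * ((H + aQ) + SS a k (b' + l' / 2) (l' / 2) θ) ^ q}) :=
              measure_mono hLsub
          _ ≤ ν {θ | θ ∈ Set.Ico b' (b' + l' / 2) ∧
                ENNReal.ofReal t + 3 < u * ((H + aQ) + SS a k b' (l' / 2) θ) ^ q}
              + ν {θ | θ ∈ Set.Ico (b' + l' / 2) (b' + l' / 2 + l' / 2) ∧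
                ENNReal.ofReal t + 3 < u * ((H + aQ) + SS a k (b' + l' / 2) (l' / 2) θ) ^ q} :=
              measure_union_le _ _
          _ ≤ 2⁻¹ * ν {θ | θ ∈ Set.Ico b' (b' + l' / 2) ∧
                ENNReal.ofReal t < u * ((H + aQ) + SSi a b' (l' / 2) θ) ^ q}
              + 2⁻¹ * ν {θ | θ ∈ Set.Ico (b' + l' / 2) (b' + l' / 2 + l' / 2) ∧
                ENNReal.ofReal t < u * ((H + aQ) + SSi a (b' + l' / 2) (l' / 2) θ) ^ q} :=
              add_le_add ihL ihR
          _ = 2⁻¹ * (ν {θ | θ ∈ Set.Ico b' (b' + l' / 2) ∧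
                ENNReal.ofReal t < u * ((H + aQ) + SSi a b' (l' / 2) θ) ^ q}
              + ν {θ | θ ∈ Set.Ico (b' + l' / 2) (b' + l' / 2 + l' / 2) ∧
                ENNReal.ofReal t < u * ((H + aQ) + SSi a (b' + l' / 2) (l' / 2) θ) ^ q}) :=
              (mul_add _ _ _).symm
          _ = 2⁻¹ * ν ({θ | θ ∈ Set.Ico b' (b' + l' / 2) ∧
                ENNReal.ofReal t < u * ((H + aQ) + SSi a b' (l' / 2) θ) ^ q}
              ∪ {θ | θ ∈ Set.Ico (b' + l' / 2) (b' + l' / 2 + l' / 2) ∧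
                ENNReal.ofReal t < u * ((H + aQ) + SSi a (b' + l' / 2) (l' / 2) θ) ^ q}) := by
              rw [measure_union hBdisj hBRmeas]
          _ ≤ _ := mul_le_mul_right (measure_mono hBsub) _

lemma SS_monotone (b l θ : ℝ) : Monotone fun k => SS a k b l θ :=
  monotone_nat_of_le_succ fun k => SS_mono_succ k b l θ

lemma phi_step (ω : ℝ → ℝ) (a : ℝ → ℝ → ℝ) (q β : ℝ)
    (hq : 0 < q) (hq1 : q < 1) (hβ : 0 ≤ β) (hωm : Measurable ω)
    (hF : ∀ b ℓ : ℝ, 0 < ℓ → ℓ ≤ 2 * π →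
      ∫⁻ θ in Set.Ioo b (b + ℓ), dyadF a ω β b ℓ θ ^ q * ENNReal.ofReal (ω θ) ≤ wInt ω b ℓ)
    (b l : ℝ) (hl : 0 < l) (hl2 : l ≤ 2 * π) (hw : wInt ω b l ≠ ⊤)
    (t : ℝ) (ht : 0 < t) :
    (volume.withDensity fun θ => ENNReal.ofReal (ω θ))
        {θ | θ ∈ Set.Ico b (b + l) ∧
          ENNReal.ofReal t + 3 < wInt ω b l ^ (-(q * β)) * (SSi a b l θ) ^ q}
      ≤ 2⁻¹ * (volume.withDensity fun θ => ENNReal.ofReal (ω θ))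
        {θ | θ ∈ Set.Ico b (b + l) ∧
          ENNReal.ofReal t < wInt ω b l ^ (-(q * β)) * (SSi a b l θ) ^ q} := by
  set ν := volume.withDensity fun θ => ENNReal.ofReal (ω θ) with hν
  set u := wInt ω b l ^ (-(q * β)) with hu
  have hiSup : ∀ θ, u * (SSi a b l θ) ^ q = ⨆ k, u * (SS a k b l θ) ^ q := by
    intro θ
    rw [SSi, Monotone.map_iSup_of_continuousAt (f := fun x : ℝ≥0∞ => x ^ q)
      (ENNReal.continuous_rpow_const.continuousAt)
      (fun x y h => ENNReal.rpow_le_rpow h hq.le)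
      (ENNReal.zero_rpow_of_pos hq), ENNReal.mul_iSup]
  have hmono : Monotone fun k => {θ | θ ∈ Set.Ico b (b + l) ∧
      ENNReal.ofReal t + 3 < u * (SS a k b l θ) ^ q} := by
    intro i j hij θ hθ
    exact ⟨hθ.1, lt_of_lt_of_le hθ.2
      (mul_le_mul_right (ENNReal.rpow_le_rpow (SS_monotone b l θ hij) hq.le) u)⟩
  have hUnion : {θ | θ ∈ Set.Ico b (b + l) ∧
      ENNReal.ofReal t + 3 < u * (SSi a b l θ) ^ q}
      = ⋃ k, {θ | θ ∈ Set.Ico b (b + l) ∧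
      ENNReal.ofReal t + 3 < u * (SS a k b l θ) ^ q} := by
    ext θ
    simp only [Set.mem_iUnion, Set.mem_setOf_eq]
    constructor
    · rintro ⟨h1, h2⟩
      rw [hiSup θ] at h2
      obtain ⟨k, hk⟩ := lt_iSup_iff.1 h2
      exact ⟨k, h1, hk⟩
    · rintro ⟨k, h1, h2⟩
      exact ⟨h1, lt_of_lt_of_le h2
        (mul_le_mul_right (ENNReal.rpow_le_rpow (SS_le_SSi' k b l θ) hq.le) u)⟩
  rw [hUnion, Directed.measure_iUnion (hmono.directed_le)]
  refine iSup_le fun k => ?_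
  have hc := core ω a q β hq hq1 hβ hωm hF b l hl hl2 hw k b l hl le_rfl le_rfl 0 t ht
    (by rw [ENNReal.zero_rpow_of_pos hq, mul_zero]; exact zero_le)
  simpa only [zero_add] using hc

lemma phi_iter (ω : ℝ → ℝ) (a : ℝ → ℝ → ℝ) (q β : ℝ)
    (hq : 0 < q) (hq1 : q < 1) (hβ : 0 ≤ β) (hωm : Measurable ω)
    (hF : ∀ b ℓ : ℝ, 0 < ℓ → ℓ ≤ 2 * π →
      ∫⁻ θ in Set.Ioo b (b + ℓ), dyadF a ω β b ℓ θ ^ q * ENNReal.ofReal (ω θ) ≤ wInt ω b ℓ)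
    (b l : ℝ) (hl : 0 < l) (hl2 : l ≤ 2 * π) (hw : wInt ω b l ≠ ⊤) :
    ∀ (n : ℕ) (t : ℝ), 0 < t →
    (volume.withDensity fun θ => ENNReal.ofReal (ω θ))
        {θ | θ ∈ Set.Ico b (b + l) ∧
          ENNReal.ofReal (t + 3 * n) < wInt ω b l ^ (-(q * β)) * (SSi a b l θ) ^ q}
      ≤ 2⁻¹ ^ n * (volume.withDensity fun θ => ENNReal.ofReal (ω θ))
        {θ | θ ∈ Set.Ico b (b + l) ∧
          ENNReal.ofReal t < wInt ω b l ^ (-(q * β)) * (SSi a b l θ) ^ q} := by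
  intro n
  induction n with
  | zero =>
      intro t ht
      simp
  | succ n ih =>
      intro t ht
      have h1 : t + 3 * ((n : ℝ) + 1) = (t + 3 * n) + 3 := by ring
      have h2 : ENNReal.ofReal ((t + 3 * n) + 3) = ENNReal.ofReal (t + 3 * n) + 3 := by
        rw [ENNReal.ofReal_add (by positivity) (by norm_num)]
        norm_num
      have hstep := phi_step ω a q β hq hq1 hβ hωm hF b l hl hl2 hw (t + 3 * n)
        (by positivity)
      have hchain := ih t ht
      calc (volume.withDensity fun θ => ENNReal.ofReal (ω θ))
            {θ | θ ∈ Set.Ico b (b + l) ∧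
              ENNReal.ofReal (t + 3 * ((n : ℕ) + 1 : ℕ)) <
                wInt ω b l ^ (-(q * β)) * (SSi a b l θ) ^ q}
          = (volume.withDensity fun θ => ENNReal.ofReal (ω θ))
            {θ | θ ∈ Set.Ico b (b + l) ∧
              ENNReal.ofReal (t + 3 * n) + 3 <
                wInt ω b l ^ (-(q * β)) * (SSi a b l θ) ^ q} := by
            rw [show ((t : ℝ) + 3 * ((n : ℕ) + 1 : ℕ)) = (t + 3 * n) + 3 by push_cast; ring, h2]
        _ ≤ 2⁻¹ * (volume.withDensity fun θ => ENNReal.ofReal (ω θ))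
            {θ | θ ∈ Set.Ico b (b + l) ∧
              ENNReal.ofReal (t + 3 * n) < wInt ω b l ^ (-(q * β)) * (SSi a b l θ) ^ q} :=
            hstep
        _ ≤ 2⁻¹ * (2⁻¹ ^ n * (volume.withDensity fun θ => ENNReal.ofReal (ω θ))
            {θ | θ ∈ Set.Ico b (b + l) ∧
              ENNReal.ofReal t < wInt ω b l ^ (-(q * β)) * (SSi a b l θ) ^ q}) :=
            mul_le_mul_right hchain _
        _ = 2⁻¹ ^ (n + 1) * (volume.withDensity fun θ => ENNReal.ofReal (ω θ))
            {θ | θ ∈ Set.Ico b (b + l) ∧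
              ENNReal.ofReal t < wInt ω b l ^ (-(q * β)) * (SSi a b l θ) ^ q} := by
            rw [pow_succ, ← mul_assoc, mul_comm (2⁻¹ ^ n) (2⁻¹ : ℝ≥0∞)]

end JNaux

/-- The John–Nirenberg type estimate (2.20): if `(1/ω(I))∫_I F_I^q ω ≤ 1` for every arc `I`,
then `ω({ξ ∈ I : F_I(ξ)^q > t}) ≤ C e^{-λt} ω(I)` for all arcs `I` and all `t > 0`. -/
theorem john_nirenberg_type_estimate
    (ω : ℝ → ℝ) (a : ℝ → ℝ → ℝ) (q β : ℝ)
    (hω : IsA1 ω) (hq : 0 < q) (hq1 : q < 1) (hβ : 0 ≤ β)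
    (ha : ∀ x y : ℝ, 0 ≤ a x y)
    (hF : ∀ b ℓ : ℝ, 0 < ℓ → ℓ ≤ 2 * π →
      ∫⁻ θ in Set.Ioo b (b + ℓ), dyadF a ω β b ℓ θ ^ q * ENNReal.ofReal (ω θ) ≤ wInt ω b ℓ) :
    ∃ C lam : ℝ, 0 < C ∧ 0 < lam ∧ ∀ b ℓ : ℝ, 0 < ℓ → ℓ ≤ 2 * π → ∀ t : ℝ, 0 < t →
      ∫⁻ θ in {θ | θ ∈ Set.Ioo b (b + ℓ) ∧ ENNReal.ofReal t < dyadF a ω β b ℓ θ ^ q},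
          ENNReal.ofReal (ω θ) ≤
        ENNReal.ofReal (C * Real.exp (-lam * t)) * wInt ω b ℓ := by
  obtain ⟨-, hωm, -, -⟩ := hω
  have hlog2 : 0 < Real.log 2 := Real.log_pos (by norm_num)
  refine ⟨2, Real.log 2 / 3, by norm_num, by positivity, ?_⟩
  intro b l hl hl2 t ht
  have hCpos : (0:ℝ) < 2 * Real.exp (-(Real.log 2 / 3) * t) := by positivity
  by_cases hw : wInt ω b l = ⊤
  · rw [hw, ENNReal.mul_top (ENNReal.ofReal_pos.2 hCpos).ne']
    exact le_top
  set ν := volume.withDensity fun θ => ENNReal.ofReal (ω θ) with hν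
  have hLHS : ∫⁻ θ in {θ | θ ∈ Set.Ioo b (b + l) ∧
      ENNReal.ofReal t < dyadF a ω β b l θ ^ q}, ENNReal.ofReal (ω θ)
      = ν {θ | θ ∈ Set.Ioo b (b + l) ∧ ENNReal.ofReal t < dyadF a ω β b l θ ^ q} :=
    (withDensity_apply' _ _).symm
  have hSsub : ∀ s : ℝ, {θ | θ ∈ Set.Ioo b (b + l) ∧ ENNReal.ofReal s < dyadF a ω β b l θ ^ q}
      ⊆ {θ | θ ∈ Set.Ico b (b + l) ∧
        ENNReal.ofReal s < wInt ω b l ^ (-(q * β)) * (JNaux.SSi a b l θ) ^ q} := by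
    rintro s θ ⟨h1, h2⟩
    refine ⟨Set.Ioo_subset_Ico_self h1, ?_⟩
    rw [JNaux.dyadF_eq (a := a) ω β hl (Set.Ioo_subset_Ico_self h1),
      ENNReal.mul_rpow_of_nonneg _ _ hq.le, ← ENNReal.rpow_mul,
      show -β * q = -(q * β) by ring] at h2
    exact h2
  -- choose n
  set n := ⌈t / 3⌉₊ - 1 with hn
  have hceil : 1 ≤ ⌈t / 3⌉₊ := Nat.one_le_iff_ne_zero.2 (by
    simp only [ne_eq, Nat.ceil_eq_zero, not_le]
    positivity)
  have hcast : ((n : ℕ) : ℝ) = (⌈t / 3⌉₊ : ℝ) - 1 := by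
    rw [hn, Nat.cast_sub hceil, Nat.cast_one]
  have hnlt : 3 * (n : ℝ) < t := by
    have h1 : (⌈t / 3⌉₊ : ℝ) < t / 3 + 1 := Nat.ceil_lt_add_one (by positivity)
    rw [hcast] at *
    linarith
  have hnge : t / 3 - 1 ≤ (n : ℝ) := by
    have := Nat.le_ceil (t / 3)
    rw [hcast]
    linarith
  set t0 := t - 3 * n with ht0def
  have ht0 : 0 < t0 := by rw [ht0def]; linarith
  have hteq : t = t0 + 3 * n := by rw [ht0def]; ring
  have hIco : ν (Set.Ico b (b + l)) = wInt ω b l := by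
    rw [hν, withDensity_apply' _ _]
    exact (setLIntegral_congr Ioo_ae_eq_Ico).symm
  have hnum : (2⁻¹ : ℝ≥0∞) ^ n ≤ ENNReal.ofReal (2 * Real.exp (-(Real.log 2 / 3) * t)) := by
    have hhalf : (2⁻¹ : ℝ≥0∞) = ENNReal.ofReal (1 / 2) := by
      rw [one_div, ENNReal.ofReal_inv_of_pos two_pos]
      norm_num
    rw [hhalf, ← ENNReal.ofReal_pow (by norm_num)]
    apply ENNReal.ofReal_le_ofReal
    have e1 : ((1 : ℝ) / 2) ^ n = Real.exp (-(Real.log 2) * n) := by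
      rw [show -(Real.log 2) * (n : ℝ) = (n : ℝ) * (-Real.log 2) by ring,
        Real.exp_nat_mul, Real.exp_neg, Real.exp_log two_pos, one_div]
    have e2 : 2 * Real.exp (-(Real.log 2 / 3) * t)
        = Real.exp (Real.log 2 + -(Real.log 2 / 3) * t) := by
      rw [Real.exp_add, Real.exp_log two_pos]
    rw [e1, e2]
    apply Real.exp_le_exp.2
    nlinarith
  calc ∫⁻ θ in {θ | θ ∈ Set.Ioo b (b + l) ∧
          ENNReal.ofReal t < dyadF a ω β b l θ ^ q}, ENNReal.ofReal (ω θ)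
      = ν {θ | θ ∈ Set.Ioo b (b + l) ∧ ENNReal.ofReal t < dyadF a ω β b l θ ^ q} := hLHS
    _ ≤ ν {θ | θ ∈ Set.Ico b (b + l) ∧
          ENNReal.ofReal (t0 + 3 * n) < wInt ω b l ^ (-(q * β)) * (JNaux.SSi a b l θ) ^ q} := by
        rw [← hteq]
        exact measure_mono (hSsub t)
    _ ≤ 2⁻¹ ^ n * ν {θ | θ ∈ Set.Ico b (b + l) ∧
          ENNReal.ofReal t0 < wInt ω b l ^ (-(q * β)) * (JNaux.SSi a b l θ) ^ q} :=
        JNaux.phi_iter ω a q β hq hq1 hβ hωm hF b l hl hl2 hw n t0 ht0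
    _ ≤ 2⁻¹ ^ n * ν (Set.Ico b (b + l)) :=
        mul_le_mul_right (measure_mono fun θ hθ => hθ.1) _
    _ = 2⁻¹ ^ n * wInt ω b l := by rw [hIco]
    _ ≤ ENNReal.ofReal (2 * Real.exp (-(Real.log 2 / 3) * t)) * wInt ω b l :=
        mul_le_mul_left hnum _

end
end

section
/- Let μ and ν be positive Borel measures on 𝔻 and ∂𝔻 respectively, let ω be an A_1 weight on ∂𝔻 with μ({z : ν(T(z)) = 0}) = 0 = μ({z : ω(T(z)) = 0}), and let 0 < p ≤ q < ∞ with q ≥ 1. If the generalized area operator A_{μ,ν} : H^p(ω) → L^q(ω) is bounded, then there is a constant C such that for every arc I ⊆ ∂𝔻, ∫_I ∫_{Γ(ξ) ∩ Λ(I)} (1/ν(T(z))) dμ(z) ω(ξ)|dξ| ≤ C·(ω(I))^{1 + 1/p − 1/q}, where Λ(I) = {z ∈ 𝔻 : closure of I_z ⊆ I}. -/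
open MeasureTheory Set Filter
open scoped ENNReal Real

noncomputable section

/-- `Λ(I) = {z ∈ 𝔻 : closure of I_z ⊆ I}`, for the arc `I` with initial angle `b` and
angular length `ℓ` (containment of arcs taken modulo `2π`). -/
def lambdaSet (b ℓ : ℝ) : Set ℂ :=
  {z | z ∈ unitDisk ∧ ∃ k : ℤ,
    b < Complex.arg z - (1 - ‖z‖) / 2 + 2 * π * k ∧
    Complex.arg z + (1 - ‖z‖) / 2 + 2 * π * k < b + ℓ}

/-! ### Auxiliary lemmas for the proof -/

namespace AreaNec

/-! #### Geometry of `bpt` -/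

lemma bpt_abs (θ : ℝ) : ‖bpt θ‖ = 1 := by
  simp [bpt, Complex.norm_exp]

lemma bpt_add (x y : ℝ) : bpt (x + y) = bpt x * bpt y := by
  unfold bpt
  rw [← Complex.exp_add]
  congr 1
  push_cast
  ring

lemma bpt_per_int (x : ℝ) (k : ℤ) : bpt (x + 2 * π * k) = bpt x := by
  unfold bpt
  have h : ((x + 2 * π * k : ℝ) : ℂ) * Complex.I
      = (x : ℂ) * Complex.I + (k : ℂ) * (2 * (π : ℂ) * Complex.I) := by
    push_cast; ring
  rw [h, Complex.exp_add, Complex.exp_int_mul_two_pi_mul_I, mul_one]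

lemma bpt_per (x : ℝ) : bpt (x + 2 * π) = bpt x := by
  simpa using bpt_per_int x 1

lemma bpt_sub_abs (x y : ℝ) :
    ‖bpt x - bpt y‖ = 2 * |Real.sin ((x - y) / 2)| := by
  have h1 : bpt x - bpt y
      = bpt ((x + y) / 2) * (bpt ((x - y) / 2) - bpt (-((x - y) / 2))) := by
    rw [mul_sub, ← bpt_add, ← bpt_add]
    congr 2 <;> ring
  rw [h1, norm_mul, bpt_abs, one_mul]
  have h2 : bpt ((x - y) / 2) - bpt (-((x - y) / 2))
      = (2 * Real.sin ((x - y) / 2) : ℝ) * Complex.I := by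
    unfold bpt
    rw [Complex.exp_mul_I, Complex.exp_mul_I]
    push_cast
    rw [Complex.cos_neg, Complex.sin_neg]
    ring
  rw [h2, norm_mul, Complex.norm_I, mul_one, Complex.norm_real, Real.norm_eq_abs, abs_mul]
  norm_num

lemma chord_le (x y : ℝ) : ‖bpt x - bpt y‖ ≤ |x - y| := by
  rw [bpt_sub_abs]
  calc 2 * |Real.sin ((x - y) / 2)| ≤ 2 * |(x - y) / 2| := by
        have := Real.abs_sin_le_abs (x := (x - y) / 2)
        linarith
    _ = |x - y| := by rw [abs_div, abs_two]; ring

lemma chord_ge (x y : ℝ) (h : |x - y| ≤ π) :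
    2 / π * |x - y| ≤ ‖bpt x - bpt y‖ := by
  rw [bpt_sub_abs]
  have h2 : |(x - y) / 2| ≤ π / 2 := by
    rw [abs_div]
    norm_num
    linarith [abs_nonneg (x - y)]
  have := Real.mul_abs_le_abs_sin h2
  have hd : |(x - y) / 2| = |x - y| / 2 := by rw [abs_div]; norm_num
  rw [hd] at this
  nlinarith [Real.pi_pos]

/-! #### Periodic translation of lower integrals -/

lemma lint_shift (g : ℝ → ℝ≥0∞) (T : ℝ) (hg : ∀ x, g (x + T) = g x)
    (S : Set ℝ) (hS : MeasurableSet S) :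
    ∫⁻ x in (fun x => x + T) ⁻¹' S, g x = ∫⁻ x in S, g x := by
  rw [← lintegral_indicator (hS.preimage (measurable_add_const T)),
    ← lintegral_indicator hS,
    ← lintegral_add_right_eq_self (fun x => S.indicator g x) T]
  refine lintegral_congr fun x => ?_
  by_cases h : x + T ∈ S <;> simp [Set.indicator, h, Set.mem_preimage, hg]

lemma lint_Ioc_shift (g : ℝ → ℝ≥0∞) (T u v : ℝ) (hg : ∀ x, g (x + T) = g x) :
    ∫⁻ x in Set.Ioc u v, g x = ∫⁻ x in Set.Ioc (u + T) (v + T), g x := by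
  rw [← lint_shift g T hg (Set.Ioc (u + T) (v + T)) measurableSet_Ioc]
  have hset : (fun x => x + T) ⁻¹' Set.Ioc (u + T) (v + T) = Set.Ioc u v := by
    ext x
    simp only [Set.mem_preimage, Set.mem_Ioc]
    constructor <;> rintro ⟨h1, h2⟩ <;> exact ⟨by linarith, by linarith⟩
  rw [hset]

lemma exists_shift_mem (u : ℝ) : ∃ k : ℤ, 0 ≤ u + 2 * π * k ∧ u + 2 * π * k < 2 * π := by
  have h2π : (0:ℝ) < 2 * π := by positivity
  refine ⟨-⌊u / (2 * π)⌋, ?_, ?_⟩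
  · have h1 : (⌊u / (2 * π)⌋ : ℝ) ≤ u / (2 * π) := Int.floor_le _
    have h3 : (⌊u / (2 * π)⌋ : ℝ) * (2 * π) ≤ u := by
      have := mul_le_mul_of_nonneg_right h1 h2π.le
      rwa [div_mul_cancel₀ u h2π.ne'] at this
    push_cast
    linarith
  · have h1 : u / (2 * π) < ⌊u / (2 * π)⌋ + 1 := Int.lt_floor_add_one _
    have h3 : u < ((⌊u / (2 * π)⌋ : ℝ) + 1) * (2 * π) := by
      have := mul_lt_mul_of_pos_right h1 h2π
      rwa [div_mul_cancel₀ u h2π.ne'] at this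
    push_cast
    linarith

lemma lint_Ioc_full (g : ℝ → ℝ≥0∞) (hg : ∀ x, g (x + 2 * π) = g x) (u : ℝ) :
    ∫⁻ x in Set.Ioc u (u + 2 * π), g x = ∫⁻ x in Set.Ioc 0 (2 * π), g x := by
  have hper : Function.Periodic g (2 * π) := hg
  have hgk : ∀ (k : ℤ) (x : ℝ), g (x + 2 * π * k) = g x := by
    intro k x
    have := (hper.int_mul k) x
    simpa [mul_comm] using this
  obtain ⟨k, hk0, hk1⟩ := exists_shift_mem u
  set u' := u + 2 * π * k with hu'
  have e1 : ∫⁻ x in Set.Ioc u (u + 2 * π), g x = ∫⁻ x in Set.Ioc u' (u' + 2 * π), g x := by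
    have := lint_Ioc_shift g (2 * π * k) u (u + 2 * π) (hgk k)
    rw [this]
    congr 1
    rw [hu']
    ring_nf
  rw [e1]
  have hsplit : Set.Ioc u' (u' + 2 * π) = Set.Ioc u' (2 * π) ∪ Set.Ioc (2 * π) (u' + 2 * π) :=
    (Set.Ioc_union_Ioc_eq_Ioc hk1.le (by linarith)).symm
  rw [hsplit, lintegral_union measurableSet_Ioc (Set.Ioc_disjoint_Ioc_of_le le_rfl)]
  have e2 : ∫⁻ x in Set.Ioc (2 * π) (u' + 2 * π), g x = ∫⁻ x in Set.Ioc 0 u', g x := by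
    have := lint_Ioc_shift g (2 * π) 0 u' hg
    rw [zero_add] at this
    exact this.symm
  rw [e2, add_comm, ← lintegral_union measurableSet_Ioc (Set.Ioc_disjoint_Ioc_of_le le_rfl),
    Set.Ioc_union_Ioc_eq_Ioc hk0 hk1.le]

lemma lint_Ioo_Ioc (g : ℝ → ℝ≥0∞) (u v : ℝ) :
    ∫⁻ x in Set.Ioo u v, g x = ∫⁻ x in Set.Ioc u v, g x :=
  setLIntegral_congr Ioo_ae_eq_Ioc

lemma lint_Ioo_le_period (g : ℝ → ℝ≥0∞) (hg : ∀ x, g (x + 2 * π) = g x)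
    (b ℓ : ℝ) (hl : ℓ ≤ 2 * π) :
    ∫⁻ x in Set.Ioo b (b + ℓ), g x ≤ ∫⁻ x in Set.Ioc 0 (2 * π), g x := by
  have hsub : Set.Ioo b (b + ℓ) ⊆ Set.Ioc b (b + 2 * π) := by
    intro x hx
    exact ⟨hx.1, by linarith [hx.2]⟩
  calc ∫⁻ x in Set.Ioo b (b + ℓ), g x ≤ ∫⁻ x in Set.Ioc b (b + 2 * π), g x :=
        lintegral_mono' (Measure.restrict_mono hsub le_rfl) le_rfl
    _ = ∫⁻ x in Set.Ioc 0 (2 * π), g x := lint_Ioc_full g hg b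

/-! #### essInf facts -/

lemma essInf_ne_top {s : Set ℝ} (hs : volume s ≠ 0) (w : ℝ → ℝ) :
    essInf (fun θ => ENNReal.ofReal (w θ)) (volume.restrict s) ≠ ⊤ := by
  intro h
  have h2 : ∀ᵐ θ ∂(volume.restrict s),
      essInf (fun θ => ENNReal.ofReal (w θ)) (volume.restrict s) ≤ ENNReal.ofReal (w θ) :=
    ae_essInf_le
  rw [h] at h2
  have h3 : ∀ᵐ (θ : ℝ) ∂(volume.restrict s), False := by
    refine h2.mono fun θ hθ => ?_
    rw [top_le_iff] at hθ
    exact ENNReal.ofReal_ne_top hθ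
  rw [ae_iff] at h3
  simp only [not_false_iff, Set.setOf_true] at h3
  rw [Measure.restrict_apply_univ] at h3
  exact hs h3

lemma mul_essInf_le (w : ℝ → ℝ) (u v : ℝ) :
    volume (Set.Ioo u v) * essInf (fun θ => ENNReal.ofReal (w θ)) (volume.restrict (Set.Ioo u v)) ≤
      ∫⁻ θ in Set.Ioo u v, ENNReal.ofReal (w θ) := by
  have h2 : ∀ᵐ θ ∂(volume.restrict (Set.Ioo u v)),
      essInf (fun θ => ENNReal.ofReal (w θ)) (volume.restrict (Set.Ioo u v)) ≤
        ENNReal.ofReal (w θ) :=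
    ae_essInf_le
  calc volume (Set.Ioo u v) *
      essInf (fun θ => ENNReal.ofReal (w θ)) (volume.restrict (Set.Ioo u v))
      = ∫⁻ _ in Set.Ioo u v,
          essInf (fun θ => ENNReal.ofReal (w θ)) (volume.restrict (Set.Ioo u v)) := by
        rw [setLIntegral_const, mul_comm]
    _ ≤ ∫⁻ θ in Set.Ioo u v, ENNReal.ofReal (w θ) := lintegral_mono_ae h2

/-! #### A Hölder inequality not requiring measurability of one factor -/

lemma holder_w {μ : Measure ℝ} (w G : ℝ → ℝ≥0∞) (hw : Measurable w)
    (hwt : ∀ x, w x ≠ ⊤) {q : ℝ} (hq : 1 ≤ q) :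
    ∫⁻ x, G x * w x ∂μ ≤
      (∫⁻ x, G x ^ q * w x ∂μ) ^ (1 / q) * (∫⁻ x, w x ∂μ) ^ (1 - 1 / q) := by
  rcases eq_or_lt_of_le hq with h1 | h1
  · rw [← h1]
    simp only [one_div, inv_one, sub_self, ENNReal.rpow_one, ENNReal.rpow_zero, mul_one]
    exact le_rfl
  · have hqpos : (0:ℝ) < q := by linarith
    have hq0 : q ≠ 0 := hqpos.ne'
    have hpq : Real.HolderConjugate q q.conjExponent := Real.HolderConjugate.conjExponent h1
    have hconj : 1 - 1 / q = 1 / q.conjExponent := by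
      have := hpq.inv_add_inv_eq_one
      rw [← one_div, ← one_div] at this
      linarith
    rw [lintegral_def]
    refine iSup_le fun φ => iSup_le fun hφ => ?_
    rw [← MeasureTheory.SimpleFunc.lintegral_eq_lintegral]
    set u : ℝ → ℝ≥0∞ := fun x => φ x / w x with hu
    have hu_meas : Measurable u := φ.measurable.div hw
    have hu_le : ∀ x, u x ≤ G x := fun x => ENNReal.div_le_of_le_mul (by simpa using hφ x)
    have hφ_eq : ∀ x, (φ : ℝ → ℝ≥0∞) x = (u x * w x ^ (1 / q)) * w x ^ (1 - 1 / q) := by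
      intro x
      by_cases hx : w x = 0
      · have hφ0 : (φ : ℝ → ℝ≥0∞) x = 0 := by
          have := hφ x
          simpa [hx] using this
        simp [hφ0, hu, hx, ENNReal.zero_rpow_of_pos (by positivity : (0:ℝ) < 1/q)]
      · have h2 : w x ^ (1 / q) * w x ^ (1 - 1 / q) = w x := by
          rw [← ENNReal.rpow_add _ _ hx (hwt x)]
          norm_num
        calc (φ : ℝ → ℝ≥0∞) x = u x * w x := by
              rw [hu]
              exact (ENNReal.div_mul_cancel hx (hwt x)).symm
          _ = (u x * w x ^ (1 / q)) * w x ^ (1 - 1 / q) := by rw [mul_assoc, h2]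
    calc ∫⁻ x, (φ : ℝ → ℝ≥0∞) x ∂μ
        = ∫⁻ x, ((fun x => u x * w x ^ (1 / q)) * fun x => w x ^ (1 - 1 / q)) x ∂μ :=
          lintegral_congr fun x => by simpa using hφ_eq x
      _ ≤ (∫⁻ x, (u x * w x ^ (1 / q)) ^ q ∂μ) ^ (1 / q) *
            (∫⁻ x, (w x ^ (1 - 1 / q)) ^ q.conjExponent ∂μ) ^ (1 / q.conjExponent) :=
          ENNReal.lintegral_mul_le_Lp_mul_Lq μ hpq
            (hu_meas.mul (hw.pow_const _)).aemeasurable (hw.pow_const _).aemeasurable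
      _ = (∫⁻ x, (u x * w x ^ (1 / q)) ^ q ∂μ) ^ (1 / q) *
            (∫⁻ x, w x ∂μ) ^ (1 - 1 / q) := by
          have e2 : ∀ x : ℝ, (w x ^ (1 / q.conjExponent)) ^ q.conjExponent = w x := fun x => by
            rw [← ENNReal.rpow_mul, one_div_mul_cancel hpq.symm.ne_zero, ENNReal.rpow_one]
          simp only [hconj, e2]
      _ ≤ (∫⁻ x, G x ^ q * w x ∂μ) ^ (1 / q) * (∫⁻ x, w x ∂μ) ^ (1 - 1 / q) := by
          refine mul_le_mul_left (ENNReal.rpow_le_rpow (lintegral_mono fun x => ?_)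
            (one_div_nonneg.mpr hqpos.le)) _
          rw [ENNReal.mul_rpow_of_nonneg _ _ hqpos.le, ← ENNReal.rpow_mul,
            one_div_mul_cancel hq0, ENNReal.rpow_one]
          exact mul_le_mul_left (ENNReal.rpow_le_rpow (hu_le x) hqpos.le) _

/-! #### Measurability of the sets involved -/

lemma stolz_isOpen (ξ : ℂ) : IsOpen (stolz ξ) := by
  have : stolz ξ = unitDisk ∩ {z : ℂ | ‖ξ - z‖ < 2 * (1 - ‖z‖)} := rfl
  rw [this]
  refine (Metric.isOpen_ball).inter (isOpen_lt ?_ ?_)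
  · exact continuous_norm.comp (continuous_const.sub continuous_id)
  · exact continuous_const.mul (continuous_const.sub continuous_norm)

lemma lambdaSet_measurable (b ℓ : ℝ) : MeasurableSet (lambdaSet b ℓ) := by
  have : lambdaSet b ℓ = unitDisk ∩
      ⋃ k : ℤ, ({z : ℂ | b < Complex.arg z - (1 - ‖z‖) / 2 + 2 * π * k} ∩
        {z : ℂ | Complex.arg z + (1 - ‖z‖) / 2 + 2 * π * k < b + ℓ}) := by
    ext z
    simp only [lambdaSet, Set.mem_setOf_eq, Set.mem_inter_iff, Set.mem_iUnion]
  rw [this]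
  refine (Metric.isOpen_ball.measurableSet).inter (MeasurableSet.iUnion fun k => ?_)
  have hf : Measurable fun z : ℂ => Complex.arg z - (1 - ‖z‖) / 2 + 2 * π * k :=
    ((Complex.measurable_arg.sub ((measurable_const.sub
      continuous_norm.measurable).div_const 2)).add_const _)
  have hg : Measurable fun z : ℂ => Complex.arg z + (1 - ‖z‖) / 2 + 2 * π * k :=
    ((Complex.measurable_arg.add ((measurable_const.sub
      continuous_norm.measurable).div_const 2)).add_const _)
  exact (measurableSet_lt measurable_const hf).inter (measurableSet_lt hg measurable_const)

end AreaNec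
namespace AreaNec

/-! #### The test function -/

/-- Denominator of the test function adapted to the arc centered at angle `c`. -/
def tfDen (c l' : ℝ) (z : ℂ) : ℂ :=
  1 - (starRingEnd ℂ) (((1 - l' : ℝ) : ℂ) * bpt c) * z

/-- The test function adapted to the arc centered at angle `c`. -/
def tf (c l' : ℝ) (N : ℕ) (z : ℂ) : ℂ := (((l' : ℝ) : ℂ) / tfDen c l' z) ^ N

lemma tfDen_abs (c l' : ℝ) (z : ℂ) :
    ‖tfDen c l' z‖ = ‖bpt c - ((1 - l' : ℝ) : ℂ) * z‖ := by
  have h1 : bpt c * (starRingEnd ℂ) (bpt c) = 1 := by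
    rw [Complex.mul_conj]
    norm_cast
    rw [← Complex.sq_norm, bpt_abs]
    norm_num
  have h2 : bpt c * tfDen c l' z = bpt c - ((1 - l' : ℝ) : ℂ) * z := by
    unfold tfDen
    rw [map_mul (starRingEnd ℂ), Complex.conj_ofReal]
    calc bpt c * (1 - ((1 - l' : ℝ) : ℂ) * (starRingEnd ℂ) (bpt c) * z)
        = bpt c - ((1 - l' : ℝ) : ℂ) * (bpt c * (starRingEnd ℂ) (bpt c)) * z := by ring
      _ = bpt c - ((1 - l' : ℝ) : ℂ) * z := by rw [h1]; ring
  calc ‖tfDen c l' z‖ = ‖bpt c‖ * ‖tfDen c l' z‖ := by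
        rw [bpt_abs, one_mul]
    _ = ‖bpt c * tfDen c l' z‖ := (norm_mul _ _).symm
    _ = ‖bpt c - ((1 - l' : ℝ) : ℂ) * z‖ := by rw [h2]

lemma tfDen_lb {c l' : ℝ} (hl'0 : 0 < l') (hl'1 : l' < 1) {z : ℂ}
    (hz : ‖z‖ ≤ 1) : l' ≤ ‖tfDen c l' z‖ := by
  unfold tfDen
  have h1 : ‖(starRingEnd ℂ) (((1 - l' : ℝ) : ℂ) * bpt c) * z‖ ≤ 1 - l' := by
    rw [norm_mul, Complex.norm_conj, norm_mul, Complex.norm_real, Real.norm_eq_abs, bpt_abs, mul_one,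
      abs_of_nonneg (by linarith : (0:ℝ) ≤ 1 - l')]
    calc (1 - l') * ‖z‖ ≤ (1 - l') * 1 :=
          mul_le_mul_of_nonneg_left hz (by linarith)
      _ = 1 - l' := by ring
  have h2 : (1:ℝ) - (1 - l') ≤ ‖1 - (starRingEnd ℂ) (((1 - l' : ℝ) : ℂ) * bpt c) * z‖ := by
    have h3 := norm_sub_norm_le (1 : ℂ) ((starRingEnd ℂ) (((1 - l' : ℝ) : ℂ) * bpt c) * z)
    simp only [norm_one] at h3
    linarith
  linarith

lemma tfDen_ne {c l' : ℝ} (hl'0 : 0 < l') (hl'1 : l' < 1) {z : ℂ}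
    (hz : ‖z‖ ≤ 1) : tfDen c l' z ≠ 0 := by
  intro h
  have := tfDen_lb (c := c) hl'0 hl'1 hz
  rw [h] at this
  simp at this
  linarith

lemma tf_abs (c l' : ℝ) (N : ℕ) (z : ℂ) (hl'0 : 0 ≤ l') :
    ‖tf c l' N z‖ = (l' / ‖tfDen c l' z‖) ^ N := by
  unfold tf
  rw [norm_pow, norm_div, Complex.norm_real, Real.norm_eq_abs, abs_of_nonneg hl'0]

lemma tf_abs_le_one {c l' : ℝ} (N : ℕ) (hl'0 : 0 < l') (hl'1 : l' < 1) {z : ℂ}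
    (hz : ‖z‖ ≤ 1) : ‖tf c l' N z‖ ≤ 1 := by
  rw [tf_abs c l' N z hl'0.le]
  have h1 : l' / ‖tfDen c l' z‖ ≤ 1 := by
    rw [div_le_one (lt_of_lt_of_le hl'0 (tfDen_lb hl'0 hl'1 hz))]
    exact tfDen_lb hl'0 hl'1 hz
  exact pow_le_one₀ (by positivity) h1

end AreaNec
namespace AreaNec

lemma two_pi_lt_seven : 2 * π < 7 := by
  have := Real.pi_lt_d2
  linarith

lemma circInt_mono {g₁ g₂ : ℝ → ℝ≥0∞} (h : ∀ θ, g₁ θ ≤ g₂ θ) : circInt g₁ ≤ circInt g₂ :=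
  mul_le_mul_right (lintegral_mono h) _

lemma circInt_const_le (x : ℝ≥0∞) : circInt (fun _ => x) ≤ x := by
  unfold circInt
  rw [setLIntegral_const, Real.volume_Ioc]
  have h2π : (0:ℝ) < 2 * π := by positivity
  rw [show (2 * π - 0 : ℝ) = 2 * π by ring]
  refine le_of_eq ?_
  calc (ENNReal.ofReal (2 * π))⁻¹ * (x * ENNReal.ofReal (2 * π))
      = x * ((ENNReal.ofReal (2 * π))⁻¹ * ENNReal.ofReal (2 * π)) := by ring
    _ = x := by
        rw [ENNReal.inv_mul_cancel ((ENNReal.ofReal_pos.mpr h2π).ne') ENNReal.ofReal_ne_top,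
          mul_one]

/-- The test function has all the properties needed for membership in `H^p(ω)`,
except for the finiteness of the norm which is supplied as a hypothesis. -/
lemma tf_memHp (p : ℝ) (ω : ℝ → ℝ) (c l' : ℝ) (N : ℕ) (hl'0 : 0 < l') (hl'1 : l' < 1)
    (hfin : lpNormP p ω (fun θ => tf c l' N (bpt θ)) < ⊤) :
    MemHp p ω (tf c l' N) (fun θ => tf c l' N (bpt θ)) := by
  have habs_lt : ∀ z ∈ unitDisk, ‖z‖ ≤ 1 := by
    intro z hz
    rw [unitDisk, Metric.mem_ball, dist_zero_right] at hz
    exact hz.le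
  refine ⟨⟨?_, 1, ?_⟩, ⟨?_, ?_⟩, hfin⟩
  · -- differentiability
    have hden : DifferentiableOn ℂ (fun z => tfDen c l' z) unitDisk := by
      unfold tfDen
      exact ((differentiable_const _).sub
        ((differentiable_const _).mul differentiable_id)).differentiableOn
    have hne : ∀ z ∈ unitDisk, tfDen c l' z ≠ 0 := fun z hz =>
      tfDen_ne hl'0 hl'1 (habs_lt z hz)
    unfold tf
    exact (DifferentiableOn.div (differentiableOn_const _) hden hne).pow N
  · -- uniform H¹ bound
    intro r hr0 hr1
    have hpt : ∀ θ : ℝ, ENNReal.ofReal (‖tf c l' N ((r:ℂ) * bpt θ)‖)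
        ≤ ENNReal.ofReal 1 := by
      intro θ
      refine ENNReal.ofReal_le_ofReal ?_
      refine tf_abs_le_one N hl'0 hl'1 ?_
      rw [norm_mul, Complex.norm_real, Real.norm_eq_abs, bpt_abs, mul_one, abs_of_nonneg hr0]
      exact hr1.le
    exact le_trans (circInt_mono hpt) (circInt_const_le _)
  · -- measurability of the boundary function
    have hcont : Continuous fun θ : ℝ => tfDen c l' (bpt θ) := by
      unfold tfDen bpt
      fun_prop
    have hne : ∀ θ : ℝ, tfDen c l' (bpt θ) ≠ 0 := fun θ =>
      tfDen_ne hl'0 hl'1 (le_of_eq (bpt_abs θ))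
    have : Continuous fun θ : ℝ => tf c l' N (bpt θ) := by
      unfold tf
      exact (Continuous.div continuous_const hcont hne).pow N
    exact this.measurable
  · -- radial limits
    refine Filter.Eventually.of_forall fun θ => ?_
    have hca : ContinuousAt (fun r : ℝ => tf c l' N ((r:ℂ) * bpt θ)) 1 := by
      have hconti : Continuous fun r : ℝ => tfDen c l' ((r:ℂ) * bpt θ) := by
        unfold tfDen
        fun_prop
      have hne1 : tfDen c l' (((1:ℝ):ℂ) * bpt θ) ≠ 0 := by
        refine tfDen_ne hl'0 hl'1 ?_
        rw [norm_mul, Complex.norm_real, Real.norm_eq_abs, bpt_abs, mul_one]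
        norm_num
      simp only [tf, div_eq_mul_inv]
      exact (continuousAt_const.mul (hconti.continuousAt.inv₀ hne1)).pow N
    have h2 : Filter.Tendsto (fun r : ℝ => tf c l' N ((r:ℂ) * bpt θ))
        (nhdsWithin 1 (Set.Iio 1)) (nhds (tf c l' N (((1:ℝ):ℂ) * bpt θ))) :=
      hca.tendsto.mono_left nhdsWithin_le_nhds
    simpa using h2

/-- Lower bound of the test function on `Λ(I)`. -/
lemma tf_lower {b ℓ : ℝ} (hℓ : 0 < ℓ) (hℓ2π : ℓ ≤ 2 * π) (N : ℕ) {z : ℂ}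
    (hz : z ∈ lambdaSet b ℓ) :
    ((14:ℝ)⁻¹) ^ N ≤ ‖tf (b + ℓ/2) (ℓ/7) N z‖ := by
  set c := b + ℓ/2 with hc
  set l' := ℓ/7 with hl'
  have hl'0 : 0 < l' := by rw [hl']; linarith
  have hl'1 : l' < 1 := by
    rw [hl']
    have := two_pi_lt_seven
    linarith
  obtain ⟨hzD, k, hk1, hk2⟩ := hz
  have hz1 : ‖z‖ < 1 := by
    rw [unitDisk, Metric.mem_ball, dist_zero_right] at hzD
    exact hzD
  set r := ‖z‖ with hr
  set t := Complex.arg z with ht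
  have hz_eq : z = ((r : ℝ) : ℂ) * bpt t := (Complex.norm_mul_exp_arg_mul_I z).symm
  have h1z : 1 - r < ℓ := by linarith
  have hargc : |t + 2 * π * k - c| ≤ ℓ/2 := by
    rw [abs_le]
    constructor <;> [skip; skip] <;> rw [hc] <;> linarith
  have hbz : ‖bpt c - z‖ ≤ ℓ/2 + (1 - r) := by
    have htri := norm_sub_le_norm_sub_add_norm_sub (bpt c) (bpt (t + 2 * π * k)) z
    have h2 : ‖bpt c - bpt (t + 2 * π * k)‖ ≤ ℓ/2 := by
      refine le_trans (chord_le c (t + 2 * π * k)) ?_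
      rw [abs_sub_comm]
      exact hargc
    have h3 : ‖bpt (t + 2 * π * k) - z‖ = 1 - r := by
      rw [bpt_per_int t k]
      have h4 : bpt t - z = ((1 - r : ℝ) : ℂ) * bpt t := by
        rw [hz_eq]
        push_cast
        ring
      rw [h4, norm_mul, Complex.norm_real, Real.norm_eq_abs, bpt_abs, mul_one, abs_of_nonneg (by linarith)]
    calc ‖bpt c - z‖
        ≤ ‖bpt c - bpt (t + 2 * π * k)‖ + ‖bpt (t + 2 * π * k) - z‖ :=
          htri
      _ ≤ ℓ/2 + (1 - r) := by linarith
  have hden_ub : ‖tfDen c l' z‖ ≤ 2 * ℓ := by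
    rw [tfDen_abs]
    have he : bpt c - ((1 - l' : ℝ) : ℂ) * z = (bpt c - z) + ((l' : ℝ) : ℂ) * z := by
      push_cast
      ring
    rw [he]
    have htri := norm_add_le (bpt c - z) (((l' : ℝ) : ℂ) * z)
    have h5 : ‖((l' : ℝ) : ℂ) * z‖ ≤ l' := by
      rw [norm_mul, Complex.norm_real, Real.norm_eq_abs, abs_of_nonneg hl'0.le]
      calc l' * ‖z‖ ≤ l' * 1 := mul_le_mul_of_nonneg_left hz1.le hl'0.le
        _ = l' := by ring
    have : ℓ/2 + (1 - r) + l' ≤ 2 * ℓ := by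
      rw [hl']
      linarith
    linarith
  rw [tf_abs _ _ _ _ hl'0.le]
  refine pow_le_pow_left₀ (by norm_num) ?_ N
  have hdenpos : 0 < ‖tfDen c l' z‖ :=
    lt_of_lt_of_le hl'0 (tfDen_lb hl'0 hl'1 hz1.le)
  rw [le_div_iff₀ hdenpos]
  calc (14:ℝ)⁻¹ * ‖tfDen c l' z‖ ≤ (14:ℝ)⁻¹ * (2 * ℓ) := by
        refine mul_le_mul_of_nonneg_left hden_ub (by norm_num)
    _ = ℓ / 7 := by ring
    _ = l' := hl'.symm

/-- Upper bound of the test function away from the arc. -/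
lemma tf_far {b ℓ θ : ℝ} (hℓ : 0 < ℓ) (hℓ2π : ℓ ≤ 2 * π)
    (hfar : ℓ ≤ |θ - (b + ℓ/2)|) (hnear : |θ - (b + ℓ/2)| < π) :
    ℓ/7 / ‖tfDen (b + ℓ/2) (ℓ/7) (bpt θ)‖ ≤ ℓ / (2 * |θ - (b + ℓ/2)|) := by
  set c := b + ℓ/2 with hc
  set l' := ℓ/7 with hl'
  set d := |θ - c| with hd
  have hd0 : 0 < d := lt_of_lt_of_le hℓ hfar
  have hl'0 : 0 < l' := by rw [hl']; linarith
  have hl'1 : l' < 1 := by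
    rw [hl']
    have := two_pi_lt_seven
    linarith
  have hchord : 2 / π * d ≤ ‖bpt c - bpt θ‖ := by
    have := chord_ge c θ (by rw [abs_sub_comm]; exact hnear.le)
    rwa [abs_sub_comm c θ] at this
  have htri := norm_sub_le_norm_sub_add_norm_sub (bpt c) (((1 - l' : ℝ) : ℂ) * bpt θ) (bpt θ)
  have h5 : ‖((1 - l' : ℝ) : ℂ) * bpt θ - bpt θ‖ = l' := by
    have he : ((1 - l' : ℝ) : ℂ) * bpt θ - bpt θ = -(((l' : ℝ) : ℂ) * bpt θ) := by
      push_cast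
      ring
    rw [he, norm_neg, norm_mul, Complex.norm_real, Real.norm_eq_abs, bpt_abs, mul_one,
      abs_of_nonneg hl'0.le]
  have hden_lb2 : 2 / π * d - l' ≤ ‖tfDen c l' (bpt θ)‖ := by
    rw [tfDen_abs]
    have := htri
    rw [h5] at this
    linarith
  have hπ4 : π ≤ 4 := Real.pi_le_four
  have hπ0 : 0 < π := Real.pi_pos
  have h2π : (1:ℝ)/2 ≤ 2 / π := by
    rw [le_div_iff₀ hπ0]
    linarith
  have hl'd : l' ≤ d / 7 := by
    rw [hl']
    linarith
  have hden_lb3 : (5:ℝ)/14 * d ≤ ‖tfDen c l' (bpt θ)‖ := by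
    have h6 : 2 / π * d ≥ 1/2 * d := mul_le_mul_of_nonneg_right h2π hd0.le
    have : (5:ℝ)/14 * d ≤ 2 / π * d - l' := by linarith
    linarith
  have hdenpos : (0:ℝ) < ‖tfDen c l' (bpt θ)‖ := by
    have : (0:ℝ) < 5/14 * d := by linarith
    linarith
  rw [div_le_div_iff₀ hdenpos (by linarith : (0:ℝ) < 2 * d)]
  nlinarith [hden_lb3, hd0, hℓ]

end AreaNec
namespace AreaNec

/-- The weighted `L^p` norm estimate for the test function: `‖f_I‖^p_{L^p(ω)} ≲ ω(I)`. -/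
lemma tf_norm_bound (ω : ℝ → ℝ) (hper : Function.Periodic ω (2 * π)) (hmeas : Measurable ω)
    (hnn : ∀ θ, 0 ≤ ω θ) (C₁ : ℝ) (hC₁ : 0 < C₁)
    (hA1 : ∀ a ℓ : ℝ, 0 < ℓ → ℓ ≤ 2 * π → wInt ω a ℓ ≤ ENNReal.ofReal (C₁ * ℓ) *
      essInf (fun θ => ENNReal.ofReal (ω θ)) (volume.restrict (Set.Ioo a (a + ℓ))))
    (p : ℝ) (hp : 0 < p) (b ℓ : ℝ) (hℓ : 0 < ℓ) (hℓ2π : ℓ ≤ 2 * π)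
    (N : ℕ) (hNp : (2:ℝ) ≤ (N:ℝ) * p) :
    lpNormP p ω (fun θ => tf (b + ℓ/2) (ℓ/7) N (bpt θ)) ≤
      ENNReal.ofReal (16 * C₁) * wInt ω b ℓ := by
  set c := b + ℓ/2 with hc
  set l' := ℓ/7 with hl'
  have hl'0 : 0 < l' := by rw [hl']; linarith
  have hl'1 : l' < 1 := by
    rw [hl']
    have := two_pi_lt_seven
    linarith
  set fb : ℝ → ℂ := fun θ => tf c l' N (bpt θ) with hfb
  set h : ℝ → ℝ≥0∞ := fun θ => ENNReal.ofReal (‖fb θ‖ ^ p * ω θ) with hh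
  set E := essInf (fun θ => ENNReal.ofReal (ω θ)) (volume.restrict (Set.Ioo b (b + ℓ)))
    with hE
  set W := wInt ω b ℓ with hW
  have hlE : ENNReal.ofReal ℓ * E ≤ W := by
    have := mul_essInf_le ω b (b + ℓ)
    rwa [Real.volume_Ioo, show b + ℓ - b = ℓ by ring] at this
  set m : ℕ → ℝ := fun k => min ((2:ℝ)^k * ℓ) π with hm
  have hm0 : ∀ k, 0 < m k := fun k => lt_min (by positivity) Real.pi_pos
  have hmπ : ∀ k, m k ≤ π := fun k => min_le_right _ _
  have hm2k : ∀ k, m k ≤ 2^k * ℓ := fun k => min_le_left _ _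
  have hmge : ∀ k, ℓ/2 ≤ m k := by
    intro k
    refine le_min ?_ (by linarith)
    have h1 : (1:ℝ) ≤ 2^k := one_le_pow₀ (by norm_num)
    nlinarith
  set B : ℝ → ℝ≥0∞ := fun θ => ∑' k : ℕ, (4:ℝ≥0∞) * ((4:ℝ≥0∞)⁻¹)^k *
    (Set.Ioo (c - m k) (c + m k)).indicator (fun t => ENNReal.ofReal (ω t)) θ with hB
  have hB_meas : Measurable B :=
    Measurable.ennreal_tsum fun k =>
      ((hmeas.ennreal_ofReal).indicator measurableSet_Ioo).const_mul _
  have hh_per : ∀ θ, h (θ + 2 * π) = h θ := by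
    intro θ
    show ENNReal.ofReal (‖tf c l' N (bpt (θ + 2 * π))‖ ^ p * ω (θ + 2 * π))
      = ENNReal.ofReal (‖tf c l' N (bpt θ)‖ ^ p * ω θ)
    rw [bpt_per, hper θ]
  have hPW : ∀ θ ∈ Set.Ioo (c - π) (c + π), h θ ≤ B θ := by
    intro θ hθ
    set d := |θ - c| with hd
    have hdπ : d < π := by
      rw [hd, abs_lt]
      exact ⟨by linarith [hθ.1], by linarith [hθ.2]⟩
    have hfb_abs : ‖fb θ‖ = (l' / ‖tfDen c l' (bpt θ)‖) ^ N :=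
      tf_abs c l' N (bpt θ) hl'0.le
    have hden_lb := tfDen_lb (c := c) hl'0 hl'1 (le_of_eq (bpt_abs θ))
    have hdenpos : 0 < ‖tfDen c l' (bpt θ)‖ := lt_of_lt_of_le hl'0 hden_lb
    have hratio1 : l' / ‖tfDen c l' (bpt θ)‖ ≤ 1 := by
      rw [div_le_one hdenpos]
      exact hden_lb
    have hratio0 : 0 < l' / ‖tfDen c l' (bpt θ)‖ := by positivity
    by_cases hcase : d < ℓ
    · refine le_trans ?_ (ENNReal.le_tsum 0)
      have hθ0 : θ ∈ Set.Ioo (c - m 0) (c + m 0) := by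
        have habs : |θ - c| < m 0 := by
          rw [hm]
          simp only [pow_zero, one_mul]
          exact lt_min hcase hdπ
        rw [abs_lt] at habs
        exact ⟨by linarith [habs.1], by linarith [habs.2]⟩
      rw [Set.indicator_of_mem hθ0]
      simp only [pow_zero, mul_one]
      have hfb1 : ‖fb θ‖ ^ p ≤ 1 :=
        Real.rpow_le_one (norm_nonneg _)
          (by rw [hfb_abs]; exact pow_le_one₀ (by positivity) hratio1) hp.le
      calc h θ ≤ ENNReal.ofReal (1 * ω θ) :=
            ENNReal.ofReal_le_ofReal (mul_le_mul_of_nonneg_right hfb1 (hnn θ))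
        _ = ENNReal.ofReal (ω θ) := by rw [one_mul]
        _ ≤ 4 * ENNReal.ofReal (ω θ) := le_mul_of_one_le_left zero_le (by norm_num)
    · push_neg at hcase
      have hex : ∃ k : ℕ, d < 2^k * ℓ := by
        obtain ⟨k, hk⟩ := pow_unbounded_of_one_lt (d / ℓ) (one_lt_two)
        exact ⟨k, by rwa [div_lt_iff₀ hℓ] at hk⟩
      have hk₀ : d < 2^(Nat.find hex) * ℓ := Nat.find_spec hex
      set k₀ := Nat.find hex with hk₀def
      have hk₀ne : k₀ ≠ 0 := by
        intro h0
        rw [h0] at hk₀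
        simp only [pow_zero, one_mul] at hk₀
        linarith
      have hk₀' : 2^(k₀-1) * ℓ ≤ d := by
        have := Nat.find_min hex (Nat.pred_lt hk₀ne)
        push_neg at this
        simpa using this
      refine le_trans ?_ (ENNReal.le_tsum k₀)
      have hθk : θ ∈ Set.Ioo (c - m k₀) (c + m k₀) := by
        have habs : |θ - c| < m k₀ := lt_min hk₀ hdπ
        rw [abs_lt] at habs
        exact ⟨by linarith [habs.1], by linarith [habs.2]⟩
      rw [Set.indicator_of_mem hθk]
      have hd0 : 0 < d := lt_of_lt_of_le hℓ hcase
      have hfar := tf_far hℓ hℓ2π hcase hdπ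
      have h2k : (2:ℝ)^k₀ = 2^(k₀-1) * 2 := by
        conv_lhs => rw [show k₀ = (k₀-1)+1 from (Nat.succ_pred_eq_of_pos
          (Nat.pos_of_ne_zero hk₀ne)).symm]
        rw [pow_succ]
      have hpos2 : (0:ℝ) < 2^k₀ := by positivity
      have hratio2 : l' / ‖tfDen c l' (bpt θ)‖ ≤ ((2:ℝ)^k₀)⁻¹ := by
        refine le_trans hfar ?_
        rw [div_le_iff₀ (by linarith : (0:ℝ) < 2*d), inv_mul_eq_div, le_div_iff₀ hpos2]
        nlinarith [hk₀', h2k]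
      have hrpow : ‖fb θ‖ ^ p ≤ ((4:ℝ)^k₀)⁻¹ := by
        have e1 : ‖fb θ‖ ^ p
            = (l' / ‖tfDen c l' (bpt θ)‖) ^ ((N:ℝ) * p) := by
          rw [hfb_abs, ← Real.rpow_natCast (l' / ‖tfDen c l' (bpt θ)‖) N,
            ← Real.rpow_mul hratio0.le]
        have e2 : (l' / ‖tfDen c l' (bpt θ)‖) ^ ((N:ℝ) * p)
            ≤ (l' / ‖tfDen c l' (bpt θ)‖) ^ (2:ℝ) :=
          Real.rpow_le_rpow_of_exponent_ge hratio0 hratio1 hNp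
        have e3 : (l' / ‖tfDen c l' (bpt θ)‖) ^ (2:ℝ)
            = (l' / ‖tfDen c l' (bpt θ)‖) ^ (2:ℕ) := by
          rw [← Real.rpow_natCast (l' / ‖tfDen c l' (bpt θ)‖) 2]
          norm_num
        have e4 : (l' / ‖tfDen c l' (bpt θ)‖) ^ (2:ℕ) ≤ (((2:ℝ)^k₀)⁻¹) ^ (2:ℕ) :=
          pow_le_pow_left₀ hratio0.le hratio2 2
        have e5 : (((2:ℝ)^k₀)⁻¹) ^ (2:ℕ) = ((4:ℝ)^k₀)⁻¹ := by
          rw [inv_pow, ← pow_mul, mul_comm k₀ 2, pow_mul]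
          norm_num
        rw [e1]
        calc (l' / ‖tfDen c l' (bpt θ)‖) ^ ((N:ℝ) * p)
            ≤ (l' / ‖tfDen c l' (bpt θ)‖) ^ (2:ℝ) := e2
          _ = (l' / ‖tfDen c l' (bpt θ)‖) ^ (2:ℕ) := e3
          _ ≤ (((2:ℝ)^k₀)⁻¹) ^ (2:ℕ) := e4
          _ = ((4:ℝ)^k₀)⁻¹ := e5
      calc h θ = ENNReal.ofReal (‖fb θ‖ ^ p) * ENNReal.ofReal (ω θ) := by
            rw [hh]
            exact ENNReal.ofReal_mul (by positivity)
        _ ≤ (4 * ((4:ℝ≥0∞)⁻¹)^k₀) * ENNReal.ofReal (ω θ) := by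
            refine mul_le_mul_left ?_ _
            calc ENNReal.ofReal (‖fb θ‖ ^ p)
                ≤ ENNReal.ofReal (((4:ℝ)^k₀)⁻¹) := ENNReal.ofReal_le_ofReal hrpow
              _ = ((4:ℝ≥0∞)⁻¹)^k₀ := by
                  rw [ENNReal.ofReal_inv_of_pos (by positivity),
                    ENNReal.ofReal_pow (by norm_num : (0:ℝ) ≤ 4), ← ENNReal.inv_pow]
                  norm_num
              _ ≤ 4 * ((4:ℝ≥0∞)⁻¹)^k₀ := le_mul_of_one_le_left zero_le (by norm_num)
  calc lpNormP p ω fb ≤ ∫⁻ θ in Set.Ioc 0 (2 * π), h θ := by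
        have h1 : (ENNReal.ofReal (2 * π))⁻¹ ≤ 1 :=
          ENNReal.inv_le_one.mpr (ENNReal.one_le_ofReal.mpr
            (by nlinarith [Real.pi_gt_three]))
        calc lpNormP p ω fb
            = (ENNReal.ofReal (2 * π))⁻¹ * ∫⁻ θ in Set.Ioc 0 (2 * π), h θ := rfl
          _ ≤ 1 * ∫⁻ θ in Set.Ioc 0 (2 * π), h θ := mul_le_mul_left h1 _
          _ = ∫⁻ θ in Set.Ioc 0 (2 * π), h θ := one_mul _
    _ = ∫⁻ θ in Set.Ioc (c - π) ((c - π) + 2 * π), h θ := (lint_Ioc_full h hh_per (c - π)).symm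
    _ = ∫⁻ θ in Set.Ioo (c - π) (c + π), h θ := by
        rw [show (c - π) + 2 * π = c + π by ring]
        exact (lint_Ioo_Ioc h (c - π) (c + π)).symm
    _ ≤ ∫⁻ θ in Set.Ioo (c - π) (c + π), B θ := setLIntegral_mono hB_meas hPW
    _ ≤ ∫⁻ θ, B θ := lintegral_mono' Measure.restrict_le_self le_rfl
    _ = ∑' k : ℕ, (4:ℝ≥0∞) * ((4:ℝ≥0∞)⁻¹)^k *
          ∫⁻ t in Set.Ioo (c - m k) (c + m k), ENNReal.ofReal (ω t) := by
        rw [hB]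
        rw [lintegral_tsum fun k =>
          (((hmeas.ennreal_ofReal).indicator measurableSet_Ioo).const_mul _).aemeasurable]
        congr 1
        funext k
        rw [lintegral_const_mul' _ _ (ENNReal.mul_ne_top (by norm_num)
          (ENNReal.pow_ne_top (ENNReal.inv_ne_top.mpr (by norm_num)))),
          lintegral_indicator measurableSet_Ioo]
    _ ≤ ∑' k : ℕ, (4:ℝ≥0∞) * ((4:ℝ≥0∞)⁻¹)^k * (ENNReal.ofReal (C₁ * (2 * m k)) * E) := by
        refine ENNReal.tsum_le_tsum fun k => mul_le_mul_right ?_ _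
        have e1 : ∫⁻ t in Set.Ioo (c - m k) (c + m k), ENNReal.ofReal (ω t)
            = wInt ω (c - m k) (2 * m k) := by
          unfold wInt
          rw [show c - m k + 2 * m k = c + m k by ring]
        rw [e1]
        have e2 := hA1 (c - m k) (2 * m k) (by linarith [hm0 k]) (by linarith [hmπ k])
        refine le_trans e2 (mul_le_mul_right ?_ _)
        have hsub : Set.Ioo b (b + ℓ) ⊆ Set.Ioo (c - m k) ((c - m k) + 2 * m k) := by
          intro x hx
          have h1 := hmge k
          constructor
          · have : c - m k ≤ b := by rw [hc]; linarith
            linarith [hx.1]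
          · have : b + ℓ ≤ (c - m k) + 2 * m k := by rw [hc]; linarith
            linarith [hx.2]
        exact essInf_antitone_measure
          (Measure.absolutelyContinuous_of_le (Measure.restrict_mono hsub le_rfl))
    _ ≤ ∑' k : ℕ, (8 * ((2:ℝ≥0∞)⁻¹)^k) * (ENNReal.ofReal C₁ * W) := by
        refine ENNReal.tsum_le_tsum fun k => ?_
        have e3 : ENNReal.ofReal (C₁ * (2 * m k))
            ≤ (2:ℝ≥0∞)^(k+1) * (ENNReal.ofReal C₁ * ENNReal.ofReal ℓ) := by
          calc ENNReal.ofReal (C₁ * (2 * m k))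
              ≤ ENNReal.ofReal ((2 * 2^k) * (C₁ * ℓ)) :=
                ENNReal.ofReal_le_ofReal (by nlinarith [hm2k k])
            _ = ENNReal.ofReal (2 * 2^k) * ENNReal.ofReal (C₁ * ℓ) :=
                ENNReal.ofReal_mul (by positivity)
            _ = (2:ℝ≥0∞)^(k+1) * (ENNReal.ofReal C₁ * ENNReal.ofReal ℓ) := by
                rw [ENNReal.ofReal_mul (by norm_num : (0:ℝ) ≤ 2),
                  ENNReal.ofReal_pow (by norm_num : (0:ℝ) ≤ 2),
                  ENNReal.ofReal_mul hC₁.le, ENNReal.ofReal_ofNat, pow_succ]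
                ring
        calc (4:ℝ≥0∞) * ((4:ℝ≥0∞)⁻¹)^k * (ENNReal.ofReal (C₁ * (2 * m k)) * E)
            ≤ (4:ℝ≥0∞) * ((4:ℝ≥0∞)⁻¹)^k *
                (((2:ℝ≥0∞)^(k+1) * (ENNReal.ofReal C₁ * ENNReal.ofReal ℓ)) * E) :=
              mul_le_mul_right (mul_le_mul_left e3 _) _
          _ = ((4:ℝ≥0∞) * ((4:ℝ≥0∞)⁻¹)^k * (2:ℝ≥0∞)^(k+1)) *
                (ENNReal.ofReal C₁ * (ENNReal.ofReal ℓ * E)) := by ring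
          _ ≤ ((4:ℝ≥0∞) * ((4:ℝ≥0∞)⁻¹)^k * (2:ℝ≥0∞)^(k+1)) * (ENNReal.ofReal C₁ * W) :=
              mul_le_mul_right (mul_le_mul_right hlE _) _
          _ = (8 * ((2:ℝ≥0∞)⁻¹)^k) * (ENNReal.ofReal C₁ * W) := by
              congr 1
              have h4 : ((4:ℝ≥0∞)⁻¹)^k * (2:ℝ≥0∞)^k = ((2:ℝ≥0∞)⁻¹)^k := by
                rw [← mul_pow]
                congr 1
                rw [show (4:ℝ≥0∞) = 2 * 2 by norm_num,
                  ENNReal.mul_inv (Or.inl (by norm_num)) (Or.inl (by norm_num)), mul_assoc,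
                  ENNReal.inv_mul_cancel (by norm_num) (by norm_num), mul_one]
              rw [pow_succ]
              calc (4:ℝ≥0∞) * ((4:ℝ≥0∞)⁻¹)^k * ((2:ℝ≥0∞)^k * 2)
                  = ((4:ℝ≥0∞) * 2) * (((4:ℝ≥0∞)⁻¹)^k * (2:ℝ≥0∞)^k) := by ring
                _ = (8 : ℝ≥0∞) * ((2:ℝ≥0∞)⁻¹)^k := by rw [h4]; norm_num
    _ = ENNReal.ofReal (16 * C₁) * W := by
        rw [ENNReal.tsum_mul_right, ENNReal.tsum_mul_left, ENNReal.tsum_geometric,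
          ENNReal.one_sub_inv_two, inv_inv, ENNReal.ofReal_mul (by norm_num : (0:ℝ) ≤ 16),
          ENNReal.ofReal_ofNat]
        ring

end AreaNec

open AreaNec in
/-- The necessity estimate in the proof of Theorem 1.4 (case `q ≥ 1`): if
`A_{μ,ν} : H^p(ω) → L^q(ω)` is bounded, then
`∫_I ∫_{Γ(ξ)∩Λ(I)} (1/ν(T(z))) dμ(z) ω(ξ)|dξ| ≤ C·ω(I)^{1+1/p-1/q}` for every arc `I`. -/
theorem area_operator_necessity_estimate
    (μ ν : Measure ℂ) (ω : ℝ → ℝ) (p q : ℝ)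
    (hν0 : μ {z | z ∈ unitDisk ∧ Tmeas ν z = 0} = 0)
    (hω0 : μ {z | z ∈ unitDisk ∧ TmeasW ω z = 0} = 0)
    (hω : IsA1 ω) (hp : 0 < p) (hpq : p ≤ q) (hq : 1 ≤ q)
    (hbdd : ∃ C : ℝ, 0 < C ∧ ∀ (f : ℂ → ℂ) (fb : ℝ → ℂ), MemHp p ω f fb →
      (circInt fun θ => areaOp μ ν f θ ^ q * ENNReal.ofReal (ω θ)) ^ (1 / q) ≤
        ENNReal.ofReal C * wLpNorm p ω fb) :
    ∃ C : ℝ, 0 < C ∧ ∀ b ℓ : ℝ, 0 < ℓ → ℓ ≤ 2 * π →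
      ∫⁻ θ in Set.Ioo b (b + ℓ),
          (∫⁻ z in stolz (bpt θ) ∩ lambdaSet b ℓ, (Tmeas ν z)⁻¹ ∂μ) *
            ENNReal.ofReal (ω θ) ≤
        ENNReal.ofReal C * wInt ω b ℓ ^ (1 + 1 / p - 1 / q) := by
  obtain ⟨hper, hmeas, hnn, C₁, hC₁, hA1⟩ := hω
  obtain ⟨C₂, hC₂, hBdd⟩ := hbdd
  have hq0 : (0:ℝ) < q := lt_of_lt_of_le one_pos hq
  set N : ℕ := 2 * ⌈1/p⌉₊ with hN
  have hNp : (2:ℝ) ≤ (N:ℝ) * p := by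
    have h1 : 1/p ≤ (⌈1/p⌉₊ : ℝ) := Nat.le_ceil _
    have h2 : (N:ℝ) = 2 * (⌈1/p⌉₊ : ℝ) := by rw [hN]; push_cast; ring
    have h3 : (1/p) * p = 1 := by field_simp
    nlinarith
  refine ⟨(14:ℝ)^N * (2*π) * C₂ * (16*C₁)^(1/p), by positivity, ?_⟩
  intro b ℓ hℓ hℓ2π
  set W := wInt ω b ℓ with hWdef
  set E := essInf (fun θ => ENNReal.ofReal (ω θ)) (volume.restrict (Set.Ioo b (b + ℓ)))
    with hEdef
  have hvol : volume (Set.Ioo b (b + ℓ)) ≠ 0 := by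
    rw [Real.volume_Ioo, show b + ℓ - b = ℓ by ring]
    simp only [ne_eq, ENNReal.ofReal_eq_zero, not_le]
    exact hℓ
  have hEtop : E ≠ ⊤ := essInf_ne_top hvol ω
  have hWtop : W ≠ ⊤ :=
    ne_top_of_le_ne_top (ENNReal.mul_ne_top ENNReal.ofReal_ne_top hEtop) (hA1 b ℓ hℓ hℓ2π)
  by_cases hW0 : W = 0
  · have hle : (∫⁻ θ in Set.Ioo b (b + ℓ),
        (∫⁻ z in stolz (bpt θ) ∩ lambdaSet b ℓ, (Tmeas ν z)⁻¹ ∂μ) * ENNReal.ofReal (ω θ))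
        ≤ ⊤ * W := by
      calc (∫⁻ θ in Set.Ioo b (b + ℓ),
          (∫⁻ z in stolz (bpt θ) ∩ lambdaSet b ℓ, (Tmeas ν z)⁻¹ ∂μ) * ENNReal.ofReal (ω θ))
          ≤ ∫⁻ θ in Set.Ioo b (b + ℓ), ⊤ * ENNReal.ofReal (ω θ) :=
            lintegral_mono fun θ => mul_le_mul_left le_top _
        _ = ⊤ * ∫⁻ θ in Set.Ioo b (b + ℓ), ENNReal.ofReal (ω θ) :=
            lintegral_const_mul ⊤ hmeas.ennreal_ofReal
        _ = ⊤ * W := rfl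
    rw [hW0, mul_zero] at hle
    exact hle.trans zero_le
  -- main case
  set c := b + ℓ/2 with hc
  set l' := ℓ/7 with hl'
  have hl'0 : 0 < l' := by rw [hl']; linarith
  have hl'1 : l' < 1 := by
    rw [hl']
    have := two_pi_lt_seven
    linarith
  have hNorm : lpNormP p ω (fun θ => tf c l' N (bpt θ)) ≤ ENNReal.ofReal (16 * C₁) * W :=
    tf_norm_bound ω hper hmeas hnn C₁ hC₁ hA1 p hp b ℓ hℓ hℓ2π N hNp
  have hfin : lpNormP p ω (fun θ => tf c l' N (bpt θ)) < ⊤ :=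
    lt_of_le_of_lt hNorm (ENNReal.mul_lt_top ENNReal.ofReal_lt_top
      (lt_top_iff_ne_top.mpr hWtop))
  have hmem : MemHp p ω (tf c l' N) (fun θ => tf c l' N (bpt θ)) :=
    tf_memHp p ω c l' N hl'0 hl'1 hfin
  have hAq := hBdd (tf c l' N) (fun θ => tf c l' N (bpt θ)) hmem
  have hwLp : wLpNorm p ω (fun θ => tf c l' N (bpt θ))
      ≤ (ENNReal.ofReal (16 * C₁) * W) ^ (1/p) :=
    ENNReal.rpow_le_rpow hNorm (by positivity)
  have hGle : ∀ θ : ℝ, (∫⁻ z in stolz (bpt θ) ∩ lambdaSet b ℓ, (Tmeas ν z)⁻¹ ∂μ)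
      ≤ ENNReal.ofReal ((14:ℝ)^N) * areaOp μ ν (tf c l' N) θ := by
    intro θ
    have hS : MeasurableSet (stolz (bpt θ) ∩ lambdaSet b ℓ) :=
      ((stolz_isOpen _).measurableSet).inter (lambdaSet_measurable b ℓ)
    have hpt : ∀ z ∈ stolz (bpt θ) ∩ lambdaSet b ℓ,
        (Tmeas ν z)⁻¹ ≤ ENNReal.ofReal ((14:ℝ)^N) *
          (ENNReal.ofReal (‖tf c l' N z‖) / Tmeas ν z) := by
      intro z hz
      have hlow := tf_lower hℓ hℓ2π N hz.2
      have he : ENNReal.ofReal ((14:ℝ)^N) * (ENNReal.ofReal (((14:ℝ)⁻¹)^N) / Tmeas ν z)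
          = (Tmeas ν z)⁻¹ := by
        rw [← mul_div_assoc, ← ENNReal.ofReal_mul (by positivity), ← mul_pow]
        norm_num
      calc (Tmeas ν z)⁻¹
          = ENNReal.ofReal ((14:ℝ)^N) * (ENNReal.ofReal (((14:ℝ)⁻¹)^N) / Tmeas ν z) :=
            he.symm
        _ ≤ ENNReal.ofReal ((14:ℝ)^N) *
              (ENNReal.ofReal (‖tf c l' N z‖) / Tmeas ν z) :=
            mul_le_mul_right (ENNReal.div_le_div_right
              (ENNReal.ofReal_le_ofReal hlow) _) _
    calc (∫⁻ z in stolz (bpt θ) ∩ lambdaSet b ℓ, (Tmeas ν z)⁻¹ ∂μ)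
        ≤ ∫⁻ z in stolz (bpt θ) ∩ lambdaSet b ℓ,
            ENNReal.ofReal ((14:ℝ)^N) *
              (ENNReal.ofReal (‖tf c l' N z‖) / Tmeas ν z) ∂μ := by
          refine lintegral_mono_ae ?_
          filter_upwards [ae_restrict_mem hS] with z hz using hpt z hz
      _ = ENNReal.ofReal ((14:ℝ)^N) * ∫⁻ z in stolz (bpt θ) ∩ lambdaSet b ℓ,
            ENNReal.ofReal (‖tf c l' N z‖) / Tmeas ν z ∂μ :=
          lintegral_const_mul' _ _ ENNReal.ofReal_ne_top
      _ ≤ ENNReal.ofReal ((14:ℝ)^N) * areaOp μ ν (tf c l' N) θ :=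
          mul_le_mul_right
            (lintegral_mono' (Measure.restrict_mono Set.inter_subset_left le_rfl) le_rfl) _
  have hGq : (∫⁻ θ in Set.Ioo b (b + ℓ),
      (∫⁻ z in stolz (bpt θ) ∩ lambdaSet b ℓ, (Tmeas ν z)⁻¹ ∂μ) ^ q * ENNReal.ofReal (ω θ))
      ≤ ENNReal.ofReal ((14:ℝ)^N) ^ q * (ENNReal.ofReal (2*π) *
        ((ENNReal.ofReal C₂ * (ENNReal.ofReal (16*C₁) * W) ^ (1/p)) ^ q)) := by
    have hKq_top : ENNReal.ofReal ((14:ℝ)^N) ^ q ≠ ⊤ :=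
      ENNReal.rpow_ne_top_of_nonneg hq0.le ENNReal.ofReal_ne_top
    calc (∫⁻ θ in Set.Ioo b (b + ℓ),
        (∫⁻ z in stolz (bpt θ) ∩ lambdaSet b ℓ, (Tmeas ν z)⁻¹ ∂μ) ^ q * ENNReal.ofReal (ω θ))
        ≤ ∫⁻ θ in Set.Ioo b (b + ℓ),
            ENNReal.ofReal ((14:ℝ)^N) ^ q * (areaOp μ ν (tf c l' N) θ ^ q *
              ENNReal.ofReal (ω θ)) := by
          refine lintegral_mono fun θ => ?_
          rw [← mul_assoc, ← ENNReal.mul_rpow_of_nonneg _ _ hq0.le]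
          exact mul_le_mul_left (ENNReal.rpow_le_rpow (hGle θ) hq0.le) _
      _ = ENNReal.ofReal ((14:ℝ)^N) ^ q * ∫⁻ θ in Set.Ioo b (b + ℓ),
            areaOp μ ν (tf c l' N) θ ^ q * ENNReal.ofReal (ω θ) :=
          lintegral_const_mul' _ _ hKq_top
      _ ≤ ENNReal.ofReal ((14:ℝ)^N) ^ q * ∫⁻ θ in Set.Ioc 0 (2*π),
            areaOp μ ν (tf c l' N) θ ^ q * ENNReal.ofReal (ω θ) := by
          refine mul_le_mul_right ?_ _
          refine lint_Ioo_le_period _ (fun θ => ?_) b ℓ hℓ2π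
          have hA : areaOp μ ν (tf c l' N) (θ + 2*π) = areaOp μ ν (tf c l' N) θ := by
            unfold areaOp
            rw [bpt_per]
          rw [hA, hper θ]
      _ ≤ ENNReal.ofReal ((14:ℝ)^N) ^ q * (ENNReal.ofReal (2*π) *
            ((ENNReal.ofReal C₂ * (ENNReal.ofReal (16*C₁) * W) ^ (1/p)) ^ q)) := by
          refine mul_le_mul_right ?_ _
          have he : (∫⁻ θ in Set.Ioc 0 (2*π),
              areaOp μ ν (tf c l' N) θ ^ q * ENNReal.ofReal (ω θ))
              = ENNReal.ofReal (2*π) *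
                circInt (fun θ => areaOp μ ν (tf c l' N) θ ^ q * ENNReal.ofReal (ω θ)) := by
            unfold circInt
            rw [← mul_assoc, ENNReal.mul_inv_cancel
              ((ENNReal.ofReal_pos.mpr (by positivity)).ne') ENNReal.ofReal_ne_top, one_mul]
          rw [he]
          refine mul_le_mul_right ?_ _
          have h2 : circInt (fun θ => areaOp μ ν (tf c l' N) θ ^ q * ENNReal.ofReal (ω θ))
              = ((circInt (fun θ => areaOp μ ν (tf c l' N) θ ^ q *
                  ENNReal.ofReal (ω θ))) ^ (1/q)) ^ q := by
            rw [← ENNReal.rpow_mul, one_div_mul_cancel hq0.ne', ENNReal.rpow_one]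
          rw [h2]
          exact ENNReal.rpow_le_rpow (hAq.trans (mul_le_mul_right hwLp _)) hq0.le
  -- final assembly
  calc (∫⁻ θ in Set.Ioo b (b + ℓ),
      (∫⁻ z in stolz (bpt θ) ∩ lambdaSet b ℓ, (Tmeas ν z)⁻¹ ∂μ) * ENNReal.ofReal (ω θ))
      ≤ (∫⁻ θ in Set.Ioo b (b + ℓ),
          (∫⁻ z in stolz (bpt θ) ∩ lambdaSet b ℓ, (Tmeas ν z)⁻¹ ∂μ) ^ q *
            ENNReal.ofReal (ω θ)) ^ (1/q) *
        (∫⁻ θ in Set.Ioo b (b + ℓ), ENNReal.ofReal (ω θ)) ^ (1 - 1/q) :=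
        holder_w (fun θ => ENNReal.ofReal (ω θ))
          (fun θ => ∫⁻ z in stolz (bpt θ) ∩ lambdaSet b ℓ, (Tmeas ν z)⁻¹ ∂μ)
          hmeas.ennreal_ofReal (fun x => ENNReal.ofReal_ne_top) hq
    _ ≤ (ENNReal.ofReal ((14:ℝ)^N) ^ q * (ENNReal.ofReal (2*π) *
          ((ENNReal.ofReal C₂ * (ENNReal.ofReal (16*C₁) * W) ^ (1/p)) ^ q))) ^ (1/q) *
        W ^ (1 - 1/q) := by
        have hWeq : (∫⁻ θ in Set.Ioo b (b + ℓ), ENNReal.ofReal (ω θ)) = W := rfl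
        rw [hWeq]
        exact mul_le_mul_left (ENNReal.rpow_le_rpow hGq (by positivity)) _
    _ ≤ ENNReal.ofReal ((14:ℝ)^N * (2*π) * C₂ * (16*C₁)^(1/p)) * W ^ (1 + 1/p - 1/q) := by
        have hx1 : (ENNReal.ofReal ((14:ℝ)^N) ^ q * (ENNReal.ofReal (2*π) *
            ((ENNReal.ofReal C₂ * (ENNReal.ofReal (16*C₁) * W) ^ (1/p)) ^ q))) ^ (1/q)
            = ENNReal.ofReal ((14:ℝ)^N) * (ENNReal.ofReal (2*π)) ^ (1/q) *
              (ENNReal.ofReal C₂ * (ENNReal.ofReal (16*C₁) * W) ^ (1/p)) := by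
          rw [ENNReal.mul_rpow_of_nonneg _ _ (by positivity),
            ENNReal.mul_rpow_of_nonneg _ _ (by positivity),
            ← ENNReal.rpow_mul (ENNReal.ofReal ((14:ℝ)^N)),
            mul_one_div_cancel hq0.ne', ENNReal.rpow_one,
            ← ENNReal.rpow_mul (ENNReal.ofReal C₂ * (ENNReal.ofReal (16*C₁) * W) ^ (1/p)),
            mul_one_div_cancel hq0.ne', ENNReal.rpow_one]
          ring
        rw [hx1]
        have hx2 : (ENNReal.ofReal (2*π)) ^ (1/q) ≤ ENNReal.ofReal (2*π) := by
          calc (ENNReal.ofReal (2*π)) ^ (1/q) ≤ (ENNReal.ofReal (2*π)) ^ (1:ℝ) :=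
                ENNReal.rpow_le_rpow_of_exponent_le
                  (ENNReal.one_le_ofReal.mpr (by nlinarith [Real.pi_gt_three]))
                  (by rw [div_le_one hq0]; exact hq)
            _ = ENNReal.ofReal (2*π) := ENNReal.rpow_one _
        have hx3 : (ENNReal.ofReal (16*C₁) * W) ^ (1/p)
            = ENNReal.ofReal ((16*C₁)^(1/p)) * W ^ (1/p) := by
          rw [ENNReal.mul_rpow_of_nonneg _ _ (by positivity),
            ENNReal.ofReal_rpow_of_pos (by positivity)]
        have hx4 : W ^ (1/p) * W ^ (1 - 1/q) = W ^ (1 + 1/p - 1/q) := by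
          rw [← ENNReal.rpow_add _ _ hW0 hWtop]
          congr 1
          ring
        calc ENNReal.ofReal ((14:ℝ)^N) * (ENNReal.ofReal (2*π)) ^ (1/q) *
              (ENNReal.ofReal C₂ * (ENNReal.ofReal (16*C₁) * W) ^ (1/p)) * W ^ (1 - 1/q)
            ≤ ENNReal.ofReal ((14:ℝ)^N) * ENNReal.ofReal (2*π) *
              (ENNReal.ofReal C₂ * (ENNReal.ofReal (16*C₁) * W) ^ (1/p)) * W ^ (1 - 1/q) := by
              exact mul_le_mul_left (mul_le_mul_left (mul_le_mul_right hx2 _) _) _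
          _ = (ENNReal.ofReal ((14:ℝ)^N) * ENNReal.ofReal (2*π) * ENNReal.ofReal C₂ *
                ENNReal.ofReal ((16*C₁)^(1/p))) * (W ^ (1/p) * W ^ (1 - 1/q)) := by
              rw [hx3]
              ring
          _ = ENNReal.ofReal ((14:ℝ)^N * (2*π) * C₂ * (16*C₁)^(1/p)) * W ^ (1 + 1/p - 1/q) := by
              rw [hx4, ← ENNReal.ofReal_mul (by positivity),
                ← ENNReal.ofReal_mul (by positivity),
                ← ENNReal.ofReal_mul (by positivity)]

end
end
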